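/- arXiv:1504.05272 — 8 statements merged into one kernel-verified Lean document; each statement's English description precedes it below -/
import Mathlib

section
/- Let L be a positive divisor of M with radical L* > 2, and let ℓ be the number of distinct prime divisors of L. Then I₁(L,M) = φ(L*)·(M²/L* − (−1)^ℓ·ε)/8, where ε = 1 if M is odd, ε = 2 if M ≡ 2 (mod 4) and L* is even, and ε = 0 otherwise. -/
open Finset

/-- `Ik k L M = Σ t^k` over integers `0 < t < M/2` with `gcd(t, L) = 1`. -/
def Ik (k L M : ℕ) : ℕ :=
  ∑ t ∈ (Finset.range M).filter (fun t => 0 < t ∧ 2 * t < M ∧ Nat.gcd t L = 1), t ^ k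

/-- `Jk k L M = Σ u^k` over integers `0 < u < M/2` with `gcd(u, L) = 1` and `u ≡ -M (mod 3)`. -/
def Jk (k L M : ℕ) : ℕ :=
  ∑ t ∈ (Finset.range M).filter
    (fun t => 0 < t ∧ 2 * t < M ∧ Nat.gcd t L = 1 ∧ (t + M) % 3 = 0), t ^ k

/-- The radical of `n`: the product of the distinct prime divisors of `n`. -/
def rad (n : ℕ) : ℕ := ∏ p ∈ n.primeFactors, p


section AuxLemmas
open ArithmeticFunction
open scoped ArithmeticFunction.Moebius

lemma rad_squarefree (L : ℕ) : Squarefree (rad L) := by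
  have h0 : rad L ≠ 0 := by
    apply Finset.prod_ne_zero_iff.mpr
    exact fun p hp => (Nat.prime_of_mem_primeFactors hp).ne_zero
  rw [Nat.squarefree_iff_factorization_le_one h0]
  intro q
  have hf : (rad L).factorization = ∑ p ∈ L.primeFactors, Finsupp.single p 1 := by
    rw [rad, Nat.factorization_prod (fun p hp => (Nat.prime_of_mem_primeFactors hp).ne_zero)]
    exact Finset.sum_congr rfl fun p hp => (Nat.prime_of_mem_primeFactors hp).factorization
  rw [hf]
  rw [Finsupp.finset_sum_apply]
  have : ∀ p ∈ L.primeFactors, Finsupp.single p 1 q = if p = q then 1 else 0 := by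
    intro p _; rw [Finsupp.single_apply]
  rw [Finset.sum_congr rfl this, Finset.sum_ite_eq' L.primeFactors q (fun _ => 1)]
  split <;> omega

lemma rad_primeFactors (L : ℕ) : (rad L).primeFactors = L.primeFactors :=
  Nat.primeFactors_prod (fun _p hp => Nat.prime_of_mem_primeFactors hp)

lemma rad_dvd (L : ℕ) : rad L ∣ L := Nat.prod_primeFactors_dvd L

lemma coprime_rad_iff (t L : ℕ) (hL : 0 < L) : Nat.gcd t L = 1 ↔ Nat.gcd t (rad L) = 1 := by
  constructor
  · intro h
    rw [← Nat.coprime_iff_gcd_eq_one] at *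
    rw [rad, Nat.coprime_prod_right_iff]
    exact fun p hp => Nat.Coprime.coprime_dvd_right (Nat.dvd_of_mem_primeFactors hp) h
  · intro h
    rw [← Nat.coprime_iff_gcd_eq_one] at *
    by_contra hc
    obtain ⟨p, hp, hpt, hpL⟩ := Nat.Prime.not_coprime_iff_dvd.mp hc
    have hmem : p ∈ L.primeFactors := Nat.mem_primeFactors.mpr ⟨hp, hpL, hL.ne'⟩
    have : p ∣ rad L := Finset.dvd_prod_of_mem _ hmem
    exact hp.one_lt.ne' (Nat.eq_one_of_dvd_coprimes h hpt this ▸ rfl)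


lemma sum_range_cast (n : ℕ) : ∑ s ∈ range n, (s:ℚ) = (n:ℚ) * ((n:ℚ) - 1) / 2 := by
  induction n with
  | zero => simp
  | succ m ih => rw [Finset.sum_range_succ, ih]; push_cast; ring

lemma gauss_half (q : ℕ) :
    ∑ s ∈ (range q).filter (fun s => 0 < s ∧ 2 * s < q), (s:ℚ)
      = (q:ℚ)^2/8 - (if 2 ∣ q then (q:ℚ)/4 else 1/8) := by
  have hsub : (range q).filter (fun s => 0 < s ∧ 2 * s < q) ⊆ range ((q+1)/2) := by
    intro s hs; simp only [mem_filter, mem_range] at hs ⊢; omega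
  have hsum : ∑ s ∈ (range q).filter (fun s => 0 < s ∧ 2 * s < q), (s:ℚ)
      = ∑ s ∈ range ((q+1)/2), (s:ℚ) := by
    refine Finset.sum_subset hsub (fun x hx hnx => ?_)
    simp only [mem_filter, mem_range] at hx hnx
    have : x = 0 := by omega
    simp [this]
  rw [hsum, sum_range_cast]
  rcases Nat.even_or_odd q with ⟨m, hm⟩ | ⟨m, hm⟩
  · subst hm
    have h1 : (m + m + 1)/2 = m := by omega
    have h2 : 2 ∣ m + m := ⟨m, by ring⟩
    rw [h1, if_pos h2]; push_cast; ring
  · subst hm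
    have h1 : (2*m + 1 + 1)/2 = m + 1 := by omega
    have h2 : ¬ (2 ∣ 2*m+1) := by omega
    rw [h1, if_neg h2]; push_cast; ring

lemma sum_multiples (d M : ℕ) (hd : 0 < d) (hdM : d ∣ M) :
    ∑ t ∈ (range M).filter (fun t => (0 < t ∧ 2 * t < M) ∧ d ∣ t), (t:ℚ)
      = (d:ℚ) * ∑ s ∈ (range (M/d)).filter (fun s => 0 < s ∧ 2 * s < M/d), (s:ℚ) := by
  obtain ⟨m, rfl⟩ := hdM
  have hq : d * m / d = m := Nat.mul_div_cancel_left m hd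
  rw [hq]
  have himg : (range (d*m)).filter (fun t => (0 < t ∧ 2 * t < d*m) ∧ d ∣ t)
      = image (fun s => d * s) ((range m).filter (fun s => 0 < s ∧ 2 * s < m)) := by
    ext t
    simp only [mem_filter, mem_range, mem_image]
    constructor
    · rintro ⟨ht, ⟨hpos, h2t⟩, k, rfl⟩
      refine ⟨k, ⟨Nat.lt_of_mul_lt_mul_left ht, Nat.pos_of_mul_pos_left (by rwa [mul_comm] at hpos), ?_⟩, rfl⟩
      · have : d * (2 * k) < d * m := by linarith
        exact Nat.lt_of_mul_lt_mul_left this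
    · rintro ⟨k, ⟨hk, hpos, h2k⟩, rfl⟩
      have h1 : d * k < d * m := Nat.mul_lt_mul_left hd |>.mpr hk
      have h2 : d * (2 * k) < d * m := Nat.mul_lt_mul_left hd |>.mpr h2k
      exact ⟨h1, ⟨Nat.mul_pos hd hpos, by linarith⟩, ⟨k, rfl⟩⟩
  rw [himg, Finset.sum_image (fun a _ b _ h => Nat.eq_of_mul_eq_mul_left hd h),
    Finset.mul_sum]
  push_cast
  rfl



lemma moebius_sum_eq (n : ℕ) : ∑ d ∈ n.divisors, (μ d : ℚ) = if n = 1 then 1 else 0 := by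
  have h := congrArg (fun f : ArithmeticFunction ℚ => f n)
    (coe_moebius_mul_coe_zeta (R := ℚ))
  simp only [coe_mul_zeta_apply, one_apply, intCoe_apply] at h
  exact h

noncomputable def invAF : ArithmeticFunction ℚ := ⟨fun n => (n:ℚ)⁻¹, by simp⟩

lemma invAF_mult : invAF.IsMultiplicative := by
  constructor
  · simp [invAF]
  · intro m n _
    show ((m*n : ℕ):ℚ)⁻¹ = (m:ℚ)⁻¹ * (n:ℚ)⁻¹
    push_cast
    rw [mul_inv]

lemma sumA (N : ℕ) (hsq : Squarefree N) :
    ∑ d ∈ N.divisors, (μ d : ℚ) * (d:ℚ)⁻¹ = (N.totient : ℚ) / N := by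
  have h := ArithmeticFunction.IsMultiplicative.prodPrimeFactors_one_sub_of_squarefree
    invAF invAF_mult hsq
  have hNne : (N:ℚ) ≠ 0 := Nat.cast_ne_zero.mpr hsq.ne_zero
  have hinv : ∀ d : ℕ, invAF d = (d:ℚ)⁻¹ := fun d => rfl
  simp only [← hinv]
  rw [← h, eq_div_iff hNne, Nat.totient_eq_mul_prod_factors, mul_comm]
  rfl

lemma sumB (N : ℕ) (hsq : Squarefree N) :
    ∑ d ∈ N.divisors, (μ d : ℚ) * (d:ℚ)
      = (-1:ℚ)^(N.primeFactors.card) * (N.totient : ℚ) := by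
  have hmult : ((↑(ArithmeticFunction.id) : ArithmeticFunction ℚ)).IsMultiplicative :=
    isMultiplicative_id.natCast
  have h := ArithmeticFunction.IsMultiplicative.prodPrimeFactors_one_sub_of_squarefree
    _ hmult hsq
  have hid : ∀ d : ℕ, ((ArithmeticFunction.id : ArithmeticFunction ℕ) : ArithmeticFunction ℚ) d = (d:ℚ) := fun d => by
    simp [ArithmeticFunction.natCoe_apply]
  simp only [hid] at h
  rw [← h]
  have h1 : ∏ p ∈ N.primeFactors, (1 - (p:ℚ))
      = (-1:ℚ)^(N.primeFactors.card) * ∏ p ∈ N.primeFactors, ((p:ℚ) - 1) := by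
    rw [← Finset.prod_const (-1:ℚ), ← Finset.prod_mul_distrib]
    exact Finset.prod_congr rfl fun p _ => by ring
  have h2 : (N.totient : ℚ) = ∏ p ∈ N.primeFactors, ((p:ℚ) - 1) := by
    rw [Nat.totient_eq_mul_prod_factors]
    have hNprod : (N:ℚ) = ∏ p ∈ N.primeFactors, (p:ℚ) := by
      rw [← Nat.cast_prod, Nat.prod_primeFactors_of_squarefree hsq]
    rw [hNprod, ← Finset.prod_mul_distrib]
    refine Finset.prod_congr rfl fun p hp => ?_
    have hp0 : (p:ℚ) ≠ 0 := Nat.cast_ne_zero.mpr (Nat.prime_of_mem_primeFactors hp).ne_zero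
    field_simp
  rw [h1, h2]


lemma odd_of_sq (N' : ℕ) (hsq : Squarefree (2 * N')) : ¬ 2 ∣ N' := by
  rintro ⟨k, rfl⟩
  have : (2:ℕ) * 2 ∣ 2 * (2 * k) := ⟨k, by ring⟩
  exact Nat.prime_two.not_isUnit (hsq 2 this)

lemma odd_div_filter (N' : ℕ) (h0 : 0 < N') (hodd : ¬ 2 ∣ N') :
    (2 * N').divisors.filter (fun d => ¬ 2 ∣ d) = N'.divisors := by
  ext d
  simp only [mem_filter, Nat.mem_divisors]
  constructor
  · rintro ⟨⟨hd, -⟩, h2d⟩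
    have hcop : d.Coprime 2 := Nat.coprime_two_right.mpr (Nat.odd_iff.mpr (by omega))
    exact ⟨hcop.dvd_of_dvd_mul_left hd, h0.ne'⟩
  · rintro ⟨hd, -⟩
    exact ⟨⟨hd.mul_left 2, by positivity⟩, fun h2d => hodd (h2d.trans hd)⟩

lemma even_div_filter (N' : ℕ) (h0 : 0 < N') :
    (2 * N').divisors.filter (fun d => 2 ∣ d) = image (fun e => 2 * e) N'.divisors := by
  ext d
  simp only [mem_filter, Nat.mem_divisors, mem_image]
  constructor
  · rintro ⟨⟨hd, -⟩, e, rfl⟩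
    exact ⟨e, ⟨(Nat.mul_dvd_mul_iff_left (by norm_num : (0:ℕ) < 2)).mp hd, h0.ne'⟩, rfl⟩
  · rintro ⟨e, ⟨he, -⟩, rfl⟩
    exact ⟨⟨Nat.mul_dvd_mul_left 2 he, by positivity⟩, ⟨e, rfl⟩⟩

lemma sum_odd_div (N : ℕ) (hsq : Squarefree N) (h2 : 2 ∣ N) (hN : 2 < N) :
    ∑ d ∈ N.divisors.filter (fun d => ¬ 2 ∣ d), (μ d : ℚ) = 0 := by
  obtain ⟨N', rfl⟩ := h2
  have hodd := odd_of_sq N' hsq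
  have h0 : 0 < N' := by
    rcases Nat.eq_zero_or_pos N' with h | h
    · omega
    · exact h
  rw [odd_div_filter N' h0 hodd, moebius_sum_eq, if_neg (by omega)]

lemma sum_even_div (N : ℕ) (hsq : Squarefree N) (h2 : 2 ∣ N) :
    ∑ d ∈ N.divisors.filter (fun d => 2 ∣ d), (μ d : ℚ) * d
      = (-1:ℚ)^(N.primeFactors.card) * 2 * N.totient := by
  obtain ⟨N', rfl⟩ := h2
  have hodd := odd_of_sq N' hsq
  have h0 : 0 < N' := Nat.pos_of_ne_zero (fun h => by simp [h] at hsq)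
  have hsq' : Squarefree N' := hsq.squarefree_of_dvd ⟨2, by ring⟩
  rw [even_div_filter N' h0,
    Finset.sum_image (fun a _ b _ h => by omega)]
  have hterm : ∀ e ∈ N'.divisors, (μ (2 * e) : ℚ) * (2 * e : ℕ)
      = (-2 : ℚ) * ((μ e : ℚ) * e) := by
    intro e he
    have hecop : Nat.Coprime 2 e := by
      rw [Nat.coprime_comm]
      exact Nat.coprime_two_right.mpr (Nat.odd_iff.mpr (by
        have := (Nat.mem_divisors.mp he).1
        have : ¬ 2 ∣ e := fun h => hodd (h.trans (Nat.mem_divisors.mp he).1)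
        omega))
    have hmu : μ (2 * e) = μ 2 * μ e := isMultiplicative_moebius.map_mul_of_coprime hecop
    rw [hmu, moebius_apply_prime Nat.prime_two]
    push_cast
    ring
  rw [Finset.sum_congr rfl hterm, ← Finset.mul_sum, sumB N' hsq']
  have hcard : (2 * N').primeFactors.card = N'.primeFactors.card + 1 := by
    rw [Nat.primeFactors_mul (by norm_num) h0.ne', Nat.Prime.primeFactors Nat.prime_two]
    rw [Finset.card_union_of_disjoint (by
      simp only [Finset.disjoint_singleton_left, Nat.mem_primeFactors]
      exact fun h => hodd h.2.1)]
    simp [Nat.add_comm]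
  have htot : (2 * N').totient = N'.totient := by
    rw [Nat.totient_mul (Nat.coprime_two_left.mpr (Nat.odd_iff.mpr (by omega))), Nat.totient_two, one_mul]
  rw [hcard, htot]
  ring

lemma hpar_aux (d M : ℕ) (hd0 : 0 < d) (hdM : d ∣ M) : 2 ∣ M / d ↔ 2 * d ∣ M := by
  obtain ⟨m, rfl⟩ := hdM
  rw [Nat.mul_div_cancel_left m hd0]
  constructor
  · rintro ⟨k, rfl⟩; exact ⟨k, by ring⟩
  · intro h
    have h' : d * 2 ∣ d * m := by rwa [mul_comm 2 d] at h
    exact (Nat.mul_dvd_mul_iff_left hd0).mp h'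

end AuxLemmas

open ArithmeticFunction ArithmeticFunction.Moebius in
theorem stmt_2 (L M : ℕ) (hL : 0 < L) (hLM : L ∣ M) (hrad : 2 < rad L) :
    (Ik 1 L M : ℚ) =
      (Nat.totient (rad L) : ℚ) *
        ((M : ℚ) ^ 2 / (rad L : ℚ) -
          (-1 : ℚ) ^ (L.primeFactors.card) *
            (if Odd M then 1 else if M % 4 = 2 ∧ 2 ∣ rad L then 2 else 0)) / 8 := by
  set N := rad L with hNdef
  have hsq : Squarefree N := rad_squarefree L
  have hN0 : 0 < N := by omega
  have hNM : N ∣ M := (rad_dvd L).trans hLM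
  have hcard : N.primeFactors.card = L.primeFactors.card := by rw [hNdef, rad_primeFactors]
  -- Step 1: rewrite via radical
  have h1 : (Ik 1 L M : ℚ) =
      ∑ t ∈ (range M).filter (fun t => (0 < t ∧ 2 * t < M) ∧ Nat.gcd t N = 1), (t:ℚ) := by
    rw [Ik]
    push_cast
    simp only [pow_one]
    congr 1
    apply Finset.filter_congr
    intro x _
    simp only [and_assoc, coprime_rad_iff x L hL, ← hNdef]
  -- Step 2: Mobius indicator
  have h2 : ∀ t ∈ range M, (if (0 < t ∧ 2*t < M) ∧ Nat.gcd t N = 1 then (t:ℚ) else 0)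
      = ∑ d ∈ N.divisors, (if (0 < t ∧ 2*t < M) ∧ d ∣ t then (μ d:ℚ) * t else 0) := by
    intro t _
    by_cases hP : 0 < t ∧ 2*t < M
    · have hfil : N.divisors.filter (fun d => d ∣ t) = (Nat.gcd t N).divisors := by
        ext d
        simp only [mem_filter, Nat.mem_divisors, Nat.dvd_gcd_iff]
        constructor
        · rintro ⟨⟨hh1, _⟩, hh3⟩
          exact ⟨⟨hh3, hh1⟩, Nat.gcd_ne_zero_right hN0.ne'⟩
        · rintro ⟨⟨hh1, hh2⟩, _⟩
          exact ⟨⟨hh2, hN0.ne'⟩, hh1⟩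
      have hsum : ∑ d ∈ N.divisors, (if d ∣ t then (μ d:ℚ) else 0)
          = if Nat.gcd t N = 1 then 1 else 0 := by
        rw [← Finset.sum_filter, hfil, moebius_sum_eq]
      have hR : ∀ d ∈ N.divisors, (if (0 < t ∧ 2*t < M) ∧ d ∣ t then (μ d:ℚ)*t else 0)
          = (if d ∣ t then (μ d:ℚ) else 0) * t := by
        intro d _
        rw [if_congr (and_iff_right hP) rfl rfl, ite_mul, zero_mul]
      rw [if_congr (and_iff_right hP) rfl rfl, Finset.sum_congr rfl hR, ← Finset.sum_mul, hsum]
      split_ifs <;> simp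
    · rw [if_neg (by tauto)]
      exact (Finset.sum_eq_zero (fun d _ => if_neg (by tauto))).symm
  -- Step 3: swap
  have h3 : (Ik 1 L M : ℚ) = ∑ d ∈ N.divisors, ∑ t ∈ range M,
      (if (0 < t ∧ 2*t < M) ∧ d ∣ t then (μ d:ℚ) * t else 0) := by
    rw [h1, Finset.sum_filter, Finset.sum_congr rfl h2, Finset.sum_comm]
  -- Step 4: evaluate inner sums
  have h4 : ∀ d ∈ N.divisors, (∑ t ∈ range M,
        (if (0 < t ∧ 2*t < M) ∧ d ∣ t then (μ d:ℚ) * t else 0))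
      = (M:ℚ)^2/8 * ((μ d:ℚ) * (d:ℚ)⁻¹)
        - (μ d:ℚ) * (if 2 ∣ M/d then (M:ℚ)/4 else (d:ℚ)/8) := by
    intro d hd
    obtain ⟨hdN, _⟩ := Nat.mem_divisors.mp hd
    have hd0 : 0 < d := Nat.pos_of_dvd_of_pos hdN hN0
    have hdM : d ∣ M := hdN.trans hNM
    have hstep : ∑ t ∈ range M, (if (0 < t ∧ 2*t < M) ∧ d ∣ t then (μ d:ℚ) * t else 0)
        = (μ d:ℚ) * ∑ t ∈ (range M).filter (fun t => (0 < t ∧ 2*t < M) ∧ d ∣ t), (t:ℚ) := by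
      rw [← Finset.sum_filter, ← Finset.mul_sum]
    rw [hstep, sum_multiples d M hd0 hdM, gauss_half]
    have hd0' : (d:ℚ) ≠ 0 := Nat.cast_ne_zero.mpr hd0.ne'
    have hcast : ((M/d : ℕ):ℚ) = (M:ℚ)/(d:ℚ) := by
      rw [Nat.cast_div hdM hd0']
    rw [hcast]
    split_ifs with h
    · field_simp
    · field_simp
  have hmain : (Ik 1 L M : ℚ) = (M:ℚ)^2/8 * ((N.totient:ℚ)/N)
      - ∑ d ∈ N.divisors, (μ d:ℚ) * (if 2 ∣ M/d then (M:ℚ)/4 else (d:ℚ)/8) := by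
    rw [h3, Finset.sum_congr rfl h4, Finset.sum_sub_distrib, ← Finset.mul_sum, sumA N hsq]
  rw [hmain, ← hcard]
  have hpar : ∀ d, 0 < d → d ∣ M → (2 ∣ M / d ↔ 2 * d ∣ M) := fun d hd0 hdM => hpar_aux d M hd0 hdM
  by_cases hM2 : 2 ∣ M
  · by_cases hM4 : 4 ∣ M
    · -- case 4 | M : all quotients even
      have heq : ∀ d ∈ N.divisors,
          (μ d:ℚ) * (if 2 ∣ M/d then (M:ℚ)/4 else (d:ℚ)/8) = (μ d:ℚ) * ((M:ℚ)/4) := by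
        intro d hd
        obtain ⟨hdN, _⟩ := Nat.mem_divisors.mp hd
        have hd0 : 0 < d := Nat.pos_of_dvd_of_pos hdN hN0
        have hdM : d ∣ M := hdN.trans hNM
        have h2d : 2 * d ∣ M := by
          by_cases hdd : 2 ∣ d
          · obtain ⟨e, rfl⟩ := hdd
            have he : ¬ 2 ∣ e := by
              intro h2e
              obtain ⟨f, rfl⟩ := h2e
              have : (2:ℕ) * 2 ∣ 2 * (2 * f) := ⟨f, by ring⟩
              exact Nat.prime_two.not_isUnit (hsq.squarefree_of_dvd hdN 2 this)
            have hcop : Nat.Coprime 4 e := by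
              have : Nat.Coprime 2 e := Nat.coprime_two_left.mpr (Nat.odd_iff.mpr (by omega))
              simpa using Nat.Coprime.pow_left 2 this
            have heM : e ∣ M := (Dvd.dvd.mul_left dvd_rfl 2).trans hdM
            have : 4 * e ∣ M := hcop.mul_dvd_of_dvd_of_dvd hM4 heM
            have h24 : 2 * (2 * e) = 4 * e := by ring
            rwa [h24]
          · have hcop : Nat.Coprime 2 d := Nat.coprime_two_left.mpr (Nat.odd_iff.mpr (by omega))
            exact hcop.mul_dvd_of_dvd_of_dvd hM2 hdM
        rw [if_pos ((hpar d hd0 hdM).mpr h2d)]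
      rw [Finset.sum_congr rfl heq, ← Finset.sum_mul, moebius_sum_eq, if_neg (by omega)]
      rw [if_neg (by rw [Nat.odd_iff]; omega), if_neg (by push_neg; intro h; omega)]
      ring
    · -- case M % 4 = 2
      have hM42 : M % 4 = 2 := by omega
      have hoddq : ∀ d ∈ N.divisors, ¬ 2 ∣ d →
          (μ d:ℚ) * (if 2 ∣ M/d then (M:ℚ)/4 else (d:ℚ)/8) = (μ d:ℚ) * ((M:ℚ)/4) := by
        intro d hd hdd
        obtain ⟨hdN, _⟩ := Nat.mem_divisors.mp hd
        have hd0 : 0 < d := Nat.pos_of_dvd_of_pos hdN hN0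
        have hdM : d ∣ M := hdN.trans hNM
        have hcop : Nat.Coprime 2 d := Nat.coprime_two_left.mpr (Nat.odd_iff.mpr (by omega))
        rw [if_pos ((hpar d hd0 hdM).mpr (hcop.mul_dvd_of_dvd_of_dvd hM2 hdM))]
      by_cases hN2 : 2 ∣ N
      · -- split even/odd divisors
        have hevq : ∀ d ∈ N.divisors, 2 ∣ d →
            (μ d:ℚ) * (if 2 ∣ M/d then (M:ℚ)/4 else (d:ℚ)/8) = (μ d:ℚ) * ((d:ℚ)/8) := by
          intro d hd hdd
          obtain ⟨hdN, _⟩ := Nat.mem_divisors.mp hd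
          have hd0 : 0 < d := Nat.pos_of_dvd_of_pos hdN hN0
          have hdM : d ∣ M := hdN.trans hNM
          rw [if_neg]
          intro h2q
          have h2d : 2 * d ∣ M := (hpar d hd0 hdM).mp h2q
          obtain ⟨e, rfl⟩ := hdd
          have : (4:ℕ) ∣ M := dvd_trans ⟨e, by ring⟩ h2d
          exact hM4 this
        rw [← Finset.sum_filter_add_sum_filter_not N.divisors (fun d => 2 ∣ d)]
        have he1 : ∑ d ∈ N.divisors.filter (fun d => 2 ∣ d),
            (μ d:ℚ) * (if 2 ∣ M/d then (M:ℚ)/4 else (d:ℚ)/8)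
            = (1/8) * ((-1:ℚ)^(N.primeFactors.card) * 2 * N.totient) := by
          rw [Finset.sum_congr rfl (fun d hd => hevq d (Finset.mem_of_mem_filter d hd)
            (Finset.mem_filter.mp hd).2)]
          rw [← sum_even_div N hsq hN2, Finset.mul_sum]
          exact Finset.sum_congr rfl (fun d _ => by ring)
        have he2 : ∑ d ∈ N.divisors.filter (fun d => ¬ 2 ∣ d),
            (μ d:ℚ) * (if 2 ∣ M/d then (M:ℚ)/4 else (d:ℚ)/8) = 0 := by
          rw [Finset.sum_congr rfl (fun d hd => hoddq d (Finset.mem_of_mem_filter d hd)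
            (Finset.mem_filter.mp hd).2), ← Finset.sum_mul,
            sum_odd_div N hsq hN2 hrad, zero_mul]
        rw [he1, he2, add_zero]
        rw [if_neg (by rw [Nat.odd_iff]; omega), if_pos ⟨hM42, hN2⟩]
        ring
      · -- N odd: all quotients even
        have heq : ∀ d ∈ N.divisors,
            (μ d:ℚ) * (if 2 ∣ M/d then (M:ℚ)/4 else (d:ℚ)/8) = (μ d:ℚ) * ((M:ℚ)/4) := by
          intro d hd
          refine hoddq d hd (fun h2d => hN2 (h2d.trans (Nat.mem_divisors.mp hd).1))
        rw [Finset.sum_congr rfl heq, ← Finset.sum_mul, moebius_sum_eq, if_neg (by omega)]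
        rw [if_neg (by rw [Nat.odd_iff]; omega), if_neg (by push_neg; intro _; exact hN2)]
        ring
  · -- M odd
    have heq : ∀ d ∈ N.divisors,
        (μ d:ℚ) * (if 2 ∣ M/d then (M:ℚ)/4 else (d:ℚ)/8) = (1/8) * ((μ d:ℚ) * (d:ℚ)) := by
      intro d hd
      obtain ⟨hdN, _⟩ := Nat.mem_divisors.mp hd
      have hdM : d ∣ M := hdN.trans hNM
      rw [if_neg]
      · ring
      · intro h2q
        exact hM2 (h2q.trans (Nat.div_dvd_of_dvd hdM))
    rw [Finset.sum_congr rfl heq, ← Finset.mul_sum, sumB N hsq]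
    rw [if_pos (Nat.odd_iff.mpr (by omega))]
    ring
end

section
/- Let L be a positive divisor of M with radical L* > 2 and k a nonnegative integer. Then I_k(L,M) = Σ_{d | L*} μ(d)·d^k·S_k(⌊M/(2d)⌋₀), where μ is the Möbius function, S_k(n) = Σ_{i=1}^n i^k, and ⌊x⌋₀ denotes the greatest integer strictly less than x. -/
open Finset

/-- Power sum: sum of i^k for i from 1 to n. -/
def Sk (k n : ℕ) : ℕ := ∑ i ∈ Finset.Icc 1 n, i ^ k

/-- The greatest integer strictly less than M / (2 * d). -/
def fl0 (M d : ℕ) : ℕ := if 2 * d ∣ M then M / (2 * d) - 1 else M / (2 * d)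

lemma coprime_rad {t L : ℕ} (hL : L ≠ 0) :
    Nat.Coprime t (rad L) ↔ Nat.Coprime t L := by
  constructor
  · intro h
    by_contra hc
    obtain ⟨p, hp, hpt, hpL⟩ := Nat.Prime.not_coprime_iff_dvd.mp hc
    exact Nat.Prime.not_coprime_iff_dvd.mpr
      ⟨p, hp, hpt, Finset.dvd_prod_of_mem _ (Nat.mem_primeFactors.mpr ⟨hp, hpL, hL⟩)⟩ h
  · intro h
    exact Nat.Coprime.prod_right fun p hp =>
      h.coprime_dvd_right (Nat.dvd_of_mem_primeFactors hp)

lemma gcd_divisors (t n : ℕ) (hn : n ≠ 0) :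
    (Nat.gcd t n).divisors = n.divisors.filter (· ∣ t) := by
  ext d
  simp only [Nat.mem_divisors, Finset.mem_filter]
  constructor
  · rintro ⟨h1, _⟩
    exact ⟨⟨(Nat.dvd_gcd_iff.mp h1).2, hn⟩, (Nat.dvd_gcd_iff.mp h1).1⟩
  · rintro ⟨⟨h1, _⟩, h2⟩
    exact ⟨Nat.dvd_gcd h2 h1, fun hc => hn (Nat.gcd_eq_zero_iff.mp hc).2⟩

lemma le_fl0_iff {M d s : ℕ} (hd : 0 < d) (hs : 0 < s) :
    s ≤ fl0 M d ↔ 2 * (d * s) < M := by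
  unfold fl0
  have h2d : 0 < 2 * d := by positivity
  rw [← mul_assoc]
  split_ifs with h
  · rw [← Nat.lt_div_iff_mul_lt' h s]
    omega
  · rw [Nat.le_div_iff_mul_le h2d, mul_comm s (2 * d)]
    constructor
    · intro h1
      rcases Nat.lt_or_eq_of_le h1 with h2 | h2
      · exact h2
      · exact absurd ⟨s, h2.symm⟩ h
    · exact Nat.le_of_lt

theorem stmt_3 (k L M : ℕ) (hL : 0 < L) (hLM : L ∣ M) (hrad : 2 < rad L) :
    (Ik k L M : ℤ) =
      ∑ d ∈ (rad L).divisors,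
        (ArithmeticFunction.moebius d) * (d : ℤ) ^ k * (Sk k (fl0 M d) : ℤ) := by
  classical
  have hL0 : L ≠ 0 := hL.ne'
  set n := rad L with hn
  have hn0 : 0 < n := by
    rw [hn, rad]
    exact Finset.prod_pos fun p hp => (Nat.prime_of_mem_primeFactors hp).pos
  set T0 : Finset ℕ := (Finset.range M).filter (fun t => 0 < t ∧ 2 * t < M) with hT0
  have step1 : (Ik k L M : ℤ) = ∑ t ∈ T0, ∑ d ∈ n.divisors,
      if d ∣ t then (ArithmeticFunction.moebius d : ℤ) * (t : ℤ) ^ k else 0 := by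
    have hfe : (Finset.range M).filter (fun t => 0 < t ∧ 2 * t < M ∧ Nat.gcd t L = 1)
        = T0.filter (fun t => Nat.Coprime t n) := by
      rw [hT0, Finset.filter_filter]
      apply Finset.filter_congr
      intro t _
      have : Nat.Coprime t n ↔ Nat.Coprime t L := coprime_rad hL0
      unfold Nat.Coprime at this
      simp only [this]
      tauto
    rw [Ik, hfe]
    push_cast
    rw [Finset.sum_filter]
    refine Finset.sum_congr rfl fun t ht => ?_
    have ht0 : 0 < t := ((Finset.mem_filter.mp ht).2).1
    have hmu : ∑ d ∈ (Nat.gcd t n).divisors, (ArithmeticFunction.moebius d : ℤ)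
        = if Nat.gcd t n = 1 then 1 else 0 := by
      have h2 := ArithmeticFunction.coe_mul_zeta_apply
        (f := ArithmeticFunction.moebius) (x := Nat.gcd t n)
      rw [ArithmeticFunction.moebius_mul_coe_zeta, ArithmeticFunction.one_apply] at h2
      exact h2.symm
    calc (if Nat.Coprime t n then (t : ℤ) ^ k else 0)
        = (if Nat.gcd t n = 1 then (1 : ℤ) else 0) * (t : ℤ) ^ k := by
          unfold Nat.Coprime
          split_ifs <;> ring
      _ = (∑ d ∈ (Nat.gcd t n).divisors, (ArithmeticFunction.moebius d : ℤ)) * (t : ℤ) ^ k := by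
          rw [hmu]
      _ = ∑ d ∈ n.divisors.filter (· ∣ t), (ArithmeticFunction.moebius d : ℤ) * (t : ℤ) ^ k := by
          rw [gcd_divisors t n hn0.ne', Finset.sum_mul]
      _ = ∑ d ∈ n.divisors,
            if d ∣ t then (ArithmeticFunction.moebius d : ℤ) * (t : ℤ) ^ k else 0 := by
          rw [Finset.sum_filter]
  rw [step1, Finset.sum_comm]
  refine Finset.sum_congr rfl fun d hd => ?_
  have hd0 : 0 < d := Nat.pos_of_mem_divisors hd
  rw [← Finset.sum_filter, ← Finset.mul_sum]
  have hinner : ∑ t ∈ T0.filter (fun t => d ∣ t), (t : ℤ) ^ k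
      = (d : ℤ) ^ k * (Sk k (fl0 M d) : ℤ) := by
    rw [Sk]
    push_cast
    rw [Finset.mul_sum]
    refine Finset.sum_nbij' (fun t => t / d) (fun s => d * s) ?_ ?_ ?_ ?_ ?_
    · intro t ht
      simp only [Finset.mem_filter, hT0, Finset.mem_range] at ht
      obtain ⟨⟨htM, ht0, ht2⟩, hdt⟩ := ht
      obtain ⟨s, rfl⟩ := hdt
      rw [Nat.mul_div_cancel_left s hd0]
      have hs0 : 0 < s := Nat.pos_of_ne_zero fun h => by simp [h] at ht0
      exact Finset.mem_Icc.mpr ⟨hs0, (le_fl0_iff hd0 hs0).mpr ht2⟩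
    · intro s hs
      simp only [Finset.mem_Icc] at hs
      have hs0 : 0 < s := hs.1
      have h2 : 2 * (d * s) < M := (le_fl0_iff hd0 hs0).mp hs.2
      simp only [Finset.mem_filter, hT0, Finset.mem_range]
      exact ⟨⟨by omega, Nat.mul_pos hd0 hs0, h2⟩, Dvd.intro s rfl⟩
    · intro t ht
      simp only [Finset.mem_filter] at ht
      exact Nat.mul_div_cancel' ht.2
    · intro s _
      exact Nat.mul_div_cancel_left s hd0
    · intro t ht
      simp only [Finset.mem_filter] at ht
      obtain ⟨s, rfl⟩ := ht.2
      rw [Nat.mul_div_cancel_left s hd0]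
      push_cast
      ring
  rw [hinner]
  ring
end

section
/- Let M ≢ 0 (mod 3) and let L be a positive divisor of M with radical L* > 2 and ℓ distinct prime factors. Then J₁(L,M) = φ(L*)·(M²/L* + (−1)^ℓ·(8 − 9ε))/24, where ε = 1 if M is odd, ε = 2 if M ≡ 2 (mod 4) and L* is even, and ε = 0 otherwise. -/
open Finset

open Nat ArithmeticFunction

section Aux

lemma gauss (n : ℕ) : ∑ j ∈ Finset.range n, (j:ℚ) = n*(n-1)/2 := by
  induction n with
  | zero => simp
  | succ n ih => rw [Finset.sum_range_succ, ih]; push_cast; ring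

lemma case_sum (n r : ℕ) : ((∑ j ∈ Finset.range n, (3*j+r) : ℕ) : ℚ) = 3*(n*(n-1)/2) + r*n := by
  push_cast
  rw [Finset.sum_add_distrib, ← Finset.mul_sum, gauss]
  rw [Finset.sum_const, card_range]
  ring

lemma Jk_image (m r n : ℕ)
    (hset : ∀ t, (t < m ∧ (0 < t ∧ 2 * t < m ∧ (t + m) % 3 = 0)) ↔ (∃ j < n, 3*j+r = t)) :
    (Jk 1 1 m : ℚ) = 3*(n*(n-1)/2) + r*n := by
  rw [← case_sum]
  unfold Jk
  congr 1
  rw [show (Finset.range m).filter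
      (fun t => 0 < t ∧ 2 * t < m ∧ Nat.gcd t 1 = 1 ∧ (t + m) % 3 = 0)
      = Finset.image (fun j => 3*j+r) (Finset.range n) by
    ext t
    simp only [Finset.mem_filter, Finset.mem_range, Finset.mem_image, Nat.gcd_one_right,
      true_and]
    exact hset t]
  rw [Finset.sum_image (by intro a _ b _ h; simp only at h; omega)]
  simp [pow_one]

lemma T_odd (m : ℕ) (h3 : ¬ 3 ∣ m) (h2 : m % 2 = 1) :
    (Jk 1 1 m : ℚ) = (m^2-1)/24 := by
  have h6 : m % 6 = 1 ∨ m % 6 = 5 := by omega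
  rcases h6 with h | h
  · obtain ⟨k, rfl⟩ : ∃ k, m = 6*k+1 := ⟨m/6, by omega⟩
    rw [Jk_image _ 2 k (fun t => ⟨fun ht => ⟨(t-2)/3, by omega, by omega⟩,
      fun ht => by obtain ⟨j, hj, rfl⟩ := ht; omega⟩)]
    push_cast; field_simp; ring
  · obtain ⟨k, rfl⟩ : ∃ k, m = 6*k+5 := ⟨m/6, by omega⟩
    rw [Jk_image _ 1 (k+1) (fun t => ⟨fun ht => ⟨(t-1)/3, by omega, by omega⟩,
      fun ht => by obtain ⟨j, hj, rfl⟩ := ht; omega⟩)]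
    push_cast; field_simp; ring

lemma T_even (m : ℕ) (h3 : ¬ 3 ∣ m) (h2 : m % 2 = 0) :
    (Jk 1 1 m : ℚ) = (m^2-6*m+8)/24 := by
  have h6 : m % 6 = 2 ∨ m % 6 = 4 := by omega
  rcases h6 with h | h
  · obtain ⟨k, rfl⟩ : ∃ k, m = 6*k+2 := ⟨m/6, by omega⟩
    rw [Jk_image _ 1 k (fun t => ⟨fun ht => ⟨(t-1)/3, by omega, by omega⟩,
      fun ht => by obtain ⟨j, hj, rfl⟩ := ht; omega⟩)]
    push_cast; field_simp; ring
  · obtain ⟨k, rfl⟩ : ∃ k, m = 6*k+4 := ⟨m/6, by omega⟩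
    rw [Jk_image _ 2 k (fun t => ⟨fun ht => ⟨(t-2)/3, by omega, by omega⟩,
      fun ht => by obtain ⟨j, hj, rfl⟩ := ht; omega⟩)]
    push_cast; field_simp; ring

lemma indicator (t N : ℕ) (hN : 0 < N) :
    (if Nat.gcd t N = 1 then (1:ℚ) else 0)
      = ∑ d ∈ N.divisors, (if d ∣ t then ((moebius d : ℤ) : ℚ) else 0) := by
  rw [← Finset.sum_filter]
  have hfil : N.divisors.filter (fun d => d ∣ t) = (Nat.gcd t N).divisors := by
    ext d
    simp only [Finset.mem_filter, Nat.mem_divisors, Nat.dvd_gcd_iff]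
    constructor
    · rintro ⟨⟨h1, h2⟩, h3⟩; exact ⟨⟨h3, h1⟩, Nat.gcd_ne_zero_right hN.ne'⟩
    · rintro ⟨⟨h1, h2⟩, h3⟩; exact ⟨⟨h2, hN.ne'⟩, h1⟩
  rw [hfil]
  have := @ArithmeticFunction.coe_mul_zeta_apply ℤ _ (moebius) (Nat.gcd t N)
  rw [moebius_mul_coe_zeta, ArithmeticFunction.one_apply] at this
  rw [← Int.cast_sum, ← this]
  split <;> simp

lemma reindex (d M : ℕ) (hd : 0 < d) (hdM : d ∣ M) (h3 : ¬ 3 ∣ d) :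
    ∑ t ∈ ((Finset.range M).filter (fun t => 0 < t ∧ 2*t < M ∧ (t+M)%3=0)).filter
        (fun t => d ∣ t), (t:ℚ)
      = d * (Jk 1 1 (M/d)) := by
  obtain ⟨m, rfl⟩ := hdM
  rw [Nat.mul_div_cancel_left m hd]
  have h3' : ∀ c, (3 ∣ d * c) ↔ 3 ∣ c := by
    intro c
    constructor
    · intro h
      rcases (Nat.Prime.dvd_mul Nat.prime_three).mp h with h | h
      · exact absurd h h3
      · exact h
    · exact fun h => Dvd.dvd.mul_left h d
  have hset : ((Finset.range (d*m)).filter (fun t => 0 < t ∧ 2*t < d*m ∧ (t+d*m)%3=0)).filter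
        (fun t => d ∣ t)
      = Finset.image (fun v => d*v)
        ((Finset.range m).filter (fun v => 0 < v ∧ 2 * v < m ∧ Nat.gcd v 1 = 1 ∧ (v + m) % 3 = 0)) := by
    ext t
    simp only [Finset.mem_filter, Finset.mem_range, Finset.mem_image, Nat.gcd_one_right]
    constructor
    · rintro ⟨⟨htm, ht0, ht2, ht3⟩, c, rfl⟩
      have hc0 : 0 < c := by
        rcases Nat.eq_zero_or_pos c with h | h
        · subst h; simp at ht0
        · exact h
      have hc2 : 2 * c < m := by
        have : d * (2 * c) < d * m := by linarith [ht2]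
        exact Nat.lt_of_mul_lt_mul_left this
      have hdd : (3:ℕ) ∣ d*c + d*m := by omega
      have hcm : (3:ℕ) ∣ c + m := (h3' _).mp (by rwa [← Nat.mul_add] at hdd)
      exact ⟨c, ⟨by omega, hc0, hc2, trivial, by omega⟩, rfl⟩
    · rintro ⟨v, ⟨hvm, hv0, hv2, _, hv3⟩, rfl⟩
      have h2 : 2 * (d * v) < d * m := by nlinarith
      have hvm3 : (3:ℕ) ∣ v + m := by omega
      have : (3:ℕ) ∣ d * v + d * m := by rw [← Nat.mul_add]; exact (h3' _).mpr hvm3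
      exact ⟨⟨by omega, Nat.mul_pos hd hv0, h2, by omega⟩, v, rfl⟩
  rw [hset, Finset.sum_image (fun a _ b _ h => Nat.eq_of_mul_eq_mul_left hd h)]
  unfold Jk
  push_cast
  rw [Finset.mul_sum]
  exact Finset.sum_congr rfl (fun v _ => by push_cast; ring)

lemma moeb (N M : ℕ) (hN : 0 < N) (hNM : N ∣ M) (hM3 : ¬ 3 ∣ M) :
    (Jk 1 N M : ℚ) = ∑ d ∈ N.divisors, ((moebius d : ℤ) : ℚ) * d * (Jk 1 1 (M/d)) := by
  have hB : (Finset.range M).filter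
        (fun t => 0 < t ∧ 2 * t < M ∧ Nat.gcd t N = 1 ∧ (t + M) % 3 = 0)
      = ((Finset.range M).filter (fun t => 0 < t ∧ 2*t < M ∧ (t+M)%3=0)).filter
        (fun t => Nat.gcd t N = 1) := by
    ext t
    simp only [Finset.mem_filter, Finset.mem_range]
    tauto
  have step1 : (Jk 1 N M : ℚ)
      = ∑ t ∈ (Finset.range M).filter (fun t => 0 < t ∧ 2*t < M ∧ (t+M)%3=0),
          (if Nat.gcd t N = 1 then (1:ℚ) else 0) * t := by
    unfold Jk
    rw [hB]
    push_cast
    rw [Finset.sum_filter]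
    exact Finset.sum_congr rfl (fun t _ => by split <;> simp)
  rw [step1]
  have step2 : ∀ t ∈ (Finset.range M).filter (fun t => 0 < t ∧ 2*t < M ∧ (t+M)%3=0),
      (if Nat.gcd t N = 1 then (1:ℚ) else 0) * t
        = ∑ d ∈ N.divisors, (if d ∣ t then ((moebius d : ℤ) : ℚ) * t else 0) := by
    intro t _
    rw [indicator t N hN, Finset.sum_mul]
    exact Finset.sum_congr rfl (fun d _ => by rw [ite_mul, zero_mul])
  rw [Finset.sum_congr rfl step2, Finset.sum_comm]
  refine Finset.sum_congr rfl (fun d hd => ?_)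
  obtain ⟨hdN, hN0⟩ := Nat.mem_divisors.mp hd
  have hd0 : 0 < d := Nat.pos_of_mem_divisors hd
  have hdM : d ∣ M := hdN.trans hNM
  have h3d : ¬ 3 ∣ d := fun h => hM3 (h.trans hdM)
  rw [← Finset.sum_filter, ← Finset.mul_sum, reindex d M hd0 hdM h3d, mul_assoc]

def finv : ArithmeticFunction ℚ := ⟨fun d => (d:ℚ)⁻¹, by simp⟩

lemma finv_apply (d : ℕ) : finv d = (d:ℚ)⁻¹ := rfl

lemma finv_mult : finv.IsMultiplicative := by
  refine ⟨by simp [finv_apply], fun {m n} _ => ?_⟩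
  simp [finv_apply]
  ring

lemma sum_mu_id (N : ℕ) (hsq : Squarefree N) :
    ∑ d ∈ N.divisors, ((moebius d : ℤ) : ℚ) * d = ∏ p ∈ N.primeFactors, (1 - (p:ℚ)) := by
  have := ArithmeticFunction.IsMultiplicative.prodPrimeFactors_one_sub_of_squarefree
    ((ArithmeticFunction.id : ArithmeticFunction ℕ) : ArithmeticFunction ℚ)
    isMultiplicative_id.natCast hsq
  simp only [natCoe_apply, id_apply] at this
  rw [← this]

lemma sum_mu_one (N : ℕ) (hsq : Squarefree N) (h1 : N ≠ 1) :
    ∑ d ∈ N.divisors, ((moebius d : ℤ) : ℚ) = 0 := by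
  have := ArithmeticFunction.IsMultiplicative.prodPrimeFactors_one_sub_of_squarefree
    ((ArithmeticFunction.zeta : ArithmeticFunction ℕ) : ArithmeticFunction ℚ)
    isMultiplicative_zeta.natCast hsq
  have hz : ∀ d ∈ N.divisors, ((moebius d : ℤ) : ℚ) * ((ArithmeticFunction.zeta : ArithmeticFunction ℕ) : ArithmeticFunction ℚ) d
      = ((moebius d : ℤ) : ℚ) := by
    intro d hd
    have hd0 : d ≠ 0 := (Nat.pos_of_mem_divisors hd).ne'
    simp [natCoe_apply, zeta_apply, hd0]
  rw [Finset.sum_congr rfl hz] at this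
  rw [← this]
  have hne : N.primeFactors.Nonempty := Nat.nonempty_primeFactors.mpr
    (lt_of_le_of_ne (Nat.one_le_iff_ne_zero.mpr hsq.ne_zero) (Ne.symm h1))
  obtain ⟨p, hp⟩ := hne
  refine Finset.prod_eq_zero hp ?_
  have : ((ArithmeticFunction.zeta : ArithmeticFunction ℕ) : ArithmeticFunction ℚ) p = 1 := by
    have := (Nat.prime_of_mem_primeFactors hp).pos
    simp [natCoe_apply, zeta_apply]
    omega
  rw [this]; ring

lemma sum_mu_inv (N : ℕ) (hsq : Squarefree N) :
    ∑ d ∈ N.divisors, ((moebius d : ℤ) : ℚ) * (d:ℚ)⁻¹ = ∏ p ∈ N.primeFactors, (1 - (p:ℚ)⁻¹) := by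
  have := ArithmeticFunction.IsMultiplicative.prodPrimeFactors_one_sub_of_squarefree
    finv finv_mult hsq
  simp only [finv_apply] at this
  rw [← this]

lemma tot_sq (N : ℕ) (hsq : Squarefree N) :
    (Nat.totient N : ℚ) = ∏ p ∈ N.primeFactors, ((p:ℚ) - 1) := by
  rw [Nat.totient_eq_div_primeFactors_mul, Nat.prod_primeFactors_of_squarefree hsq,
    Nat.div_self (Nat.pos_of_ne_zero hsq.ne_zero), one_mul]
  push_cast [Nat.cast_prod]
  exact Finset.prod_congr rfl (fun p hp => by
    rw [Nat.cast_pred (Nat.prime_of_mem_primeFactors hp).pos])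

lemma squarefree_prod_primes {s : Finset ℕ} (hs : ∀ p ∈ s, p.Prime) :
    Squarefree (∏ p ∈ s, p) := by
  induction s using Finset.cons_induction with
  | empty => simp
  | cons p s hps ih =>
    rw [Finset.prod_cons, Nat.squarefree_mul_iff]
    refine ⟨Nat.Coprime.prod_right fun q hq => ?_,
      (hs p (Finset.mem_cons_self p s)).squarefree,
      ih (fun q hq => hs q (Finset.mem_cons_of_mem hq))⟩
    exact (Nat.coprime_primes (hs p (Finset.mem_cons_self p s))
      (hs q (Finset.mem_cons_of_mem hq))).mpr (fun h => hps (h ▸ hq))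

lemma prod_one_sub_inv (N : ℕ) (hN : N ≠ 0) :
    ∏ p ∈ N.primeFactors, (1 - (p:ℚ)⁻¹) = (Nat.totient N : ℚ) / N := by
  rw [eq_div_iff (by exact_mod_cast hN), mul_comm]
  exact (Nat.totient_eq_mul_prod_factors N).symm

lemma prod_one_sub (N : ℕ) (hsq : Squarefree N) :
    ∏ p ∈ N.primeFactors, (1 - (p:ℚ))
      = (-1)^(N.primeFactors.card) * (Nat.totient N : ℚ) := by
  calc ∏ p ∈ N.primeFactors, (1 - (p:ℚ))
      = ∏ p ∈ N.primeFactors, ((-1) * ((p:ℚ) - 1)) :=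
        Finset.prod_congr rfl (fun p _ => by ring)
    _ = (∏ _p ∈ N.primeFactors, (-1:ℚ)) * ∏ p ∈ N.primeFactors, ((p:ℚ) - 1) :=
        Finset.prod_mul_distrib
    _ = (-1)^(N.primeFactors.card) * (Nat.totient N : ℚ) := by
        rw [Finset.prod_const, ← tot_sq N hsq]

end Aux

theorem stmt_6 (L M : ℕ) (hL : 0 < L) (hLM : L ∣ M) (hM3 : ¬ (3 ∣ M))
    (hrad : 2 < rad L) :
    (Jk 1 L M : ℚ) =
      (Nat.totient (rad L) : ℚ) *
        ((M : ℚ) ^ 2 / (rad L : ℚ) +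
          (-1 : ℚ) ^ (L.primeFactors.card) *
            (8 - 9 * (if Odd M then 1 else if M % 4 = 2 ∧ 2 ∣ rad L then 2 else 0))) / 24 := by
  classical
  set N := rad L with hNdef
  have hprimes : ∀ p ∈ L.primeFactors, p.Prime := fun p hp => Nat.prime_of_mem_primeFactors hp
  have hNsq : Squarefree N := squarefree_prod_primes hprimes
  have hN0 : 0 < N := Nat.pos_of_ne_zero hNsq.ne_zero
  have hNQ : (N:ℚ) ≠ 0 := by exact_mod_cast hN0.ne'
  have hpf : N.primeFactors = L.primeFactors := Nat.primeFactors_prod hprimes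
  have hNL : N ∣ L := Nat.prod_primeFactors_dvd L
  have hNM : N ∣ M := hNL.trans hLM
  have hM0 : 0 < M := by
    rcases Nat.eq_zero_or_pos M with h | h
    · subst h; simp at hM3
    · exact h
  -- replace L by N in the gcd condition
  have hcop : ∀ t, (Nat.gcd t L = 1) ↔ (Nat.gcd t N = 1) := by
    intro t
    constructor
    · intro h
      exact Nat.Coprime.prod_right fun p hp =>
        Nat.Coprime.coprime_dvd_right (Nat.dvd_of_mem_primeFactors hp) h
    · intro h
      by_contra hne
      obtain ⟨p, hp, hpd⟩ := Nat.exists_prime_and_dvd hne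
      have hpt : p ∣ t := hpd.trans (Nat.gcd_dvd_left t L)
      have hpL : p ∣ L := hpd.trans (Nat.gcd_dvd_right t L)
      have hpN : p ∣ N := Finset.dvd_prod_of_mem _ (Nat.mem_primeFactors.mpr ⟨hp, hpL, hL.ne'⟩)
      have h1 : p ∣ 1 := h ▸ Nat.dvd_gcd hpt hpN
      have := Nat.le_of_dvd one_pos h1
      have := hp.two_le
      omega
  have hJ : Jk 1 L M = Jk 1 N M := by
    unfold Jk
    congr 1
    refine Finset.filter_congr fun t _ => ?_
    rw [hcop t]
  rw [hJ, moeb N M hN0 hNM hM3, ← hpf]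
  -- common facts about divisors
  have hfacts : ∀ d ∈ N.divisors,
      d ∣ M ∧ (d:ℚ) ≠ 0 ∧ ((M/d : ℕ):ℚ) = (M:ℚ) * (d:ℚ)⁻¹ ∧ ¬ 3 ∣ (M/d) := by
    intro d hd
    have hd0 : 0 < d := Nat.pos_of_mem_divisors hd
    have hdM : d ∣ M := (Nat.mem_divisors.mp hd).1.trans hNM
    refine ⟨hdM, by exact_mod_cast hd0.ne', ?_, ?_⟩
    · rw [Nat.cast_div hdM (by exact_mod_cast hd0.ne'), div_eq_mul_inv]
    · intro h
      exact hM3 (h.trans (Nat.div_dvd_of_dvd hdM))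
  by_cases hodd : Odd M
  · -- M odd
    rw [if_pos hodd]
    have hterm : ∀ d ∈ N.divisors, ((moebius d : ℤ) : ℚ) * d * (Jk 1 1 (M/d))
        = (M:ℚ)^2/24 * (((moebius d : ℤ) : ℚ) * (d:ℚ)⁻¹)
          - (1/24) * (((moebius d : ℤ) : ℚ) * d) := by
      intro d hd
      obtain ⟨hdM, hdQ, hcast, h3md⟩ := hfacts d hd
      have hodd' : (M/d) % 2 = 1 := by
        have hMo : M % 2 = 1 := Nat.odd_iff.mp hodd
        have h2 : ¬ 2 ∣ (M/d) := fun h => by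
          have := h.trans (Nat.div_dvd_of_dvd hdM)
          omega
        omega
      rw [T_odd _ h3md hodd', hcast]
      field_simp
    rw [Finset.sum_congr rfl hterm, Finset.sum_sub_distrib, ← Finset.mul_sum, ← Finset.mul_sum,
      sum_mu_inv N hNsq, sum_mu_id N hNsq, prod_one_sub_inv N hN0.ne', prod_one_sub N hNsq]
    field_simp
    ring
  · rw [if_neg hodd]
    have hM2 : 2 ∣ M := (Nat.not_odd_iff_even.mp hodd).two_dvd
    by_cases hcond : M % 4 = 2 ∧ 2 ∣ N
    · -- M ≡ 2 mod 4 and N even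
      rw [if_pos hcond]
      obtain ⟨hM4, h2N⟩ := hcond
      obtain ⟨N', hN'⟩ := h2N
      have hN'0 : N' ≠ 0 := by rintro rfl; omega
      have hN'1 : N' ≠ 1 := by rintro rfl; omega
      have hN'sq : Squarefree N' := hNsq.squarefree_of_dvd (Dvd.intro_left 2 hN'.symm)
      have hN'odd : ¬ 2 ∣ N' := by
        intro h
        have : (2*2) ∣ N := by rw [hN']; exact Nat.mul_dvd_mul_left 2 h
        exact Nat.Prime.one_lt Nat.prime_two |>.ne' (Nat.isUnit_iff.mp (hNsq 2 this))
      have hfilter : N.divisors.filter (fun d => ¬ 2 ∣ d) = N'.divisors := by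
        ext d
        simp only [Finset.mem_filter, Nat.mem_divisors]
        constructor
        · rintro ⟨⟨hdN, _⟩, h2d⟩
          refine ⟨?_, hN'0⟩
          have hco : Nat.Coprime d 2 := (Nat.coprime_comm.mp
            ((Nat.prime_two.coprime_iff_not_dvd).mpr h2d))
          exact hco.dvd_of_dvd_mul_right (by rw [Nat.mul_comm N' 2, ← hN']; exact hdN)
        · rintro ⟨hdN', _⟩
          refine ⟨⟨hdN'.trans (Dvd.intro_left 2 hN'.symm), hN0.ne'⟩, fun h => hN'odd (h.trans hdN')⟩
      have hφ : (Nat.totient N : ℚ) = Nat.totient N' := by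
        rw [hN', Nat.totient_mul ((Nat.prime_two.coprime_iff_not_dvd).mpr hN'odd),
          Nat.totient_two, one_mul]
      have hcard : N.primeFactors.card = N'.primeFactors.card + 1 := by
        rw [hN', Nat.primeFactors_mul (by norm_num) hN'0, Nat.Prime.primeFactors Nat.prime_two,
          Finset.card_union_of_disjoint (Finset.disjoint_singleton_left.mpr
            (fun h => hN'odd (Nat.dvd_of_mem_primeFactors h))), Finset.card_singleton]
        omega
      have hpar : ∀ d ∈ N.divisors, (2 ∣ d → (M/d) % 2 = 1) ∧ (¬ 2 ∣ d → (M/d) % 2 = 0) := by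
        intro d hd
        have hd0 : 0 < d := Nat.pos_of_mem_divisors hd
        obtain ⟨hdM, _, _, _⟩ := hfacts d hd
        obtain ⟨c, hc⟩ := hdM
        have hMd : M / d = c := by rw [hc]; exact Nat.mul_div_cancel_left c hd0
        constructor
        · intro h2d
          obtain ⟨e, rfl⟩ := h2d
          rw [hMd]
          by_contra hcon
          have h2c : 2 ∣ c := by omega
          obtain ⟨f, rfl⟩ := h2c
          have : M = 4 * (e * f) := by rw [hc]; ring
          omega
        · intro h2d
          rw [hMd]
          have h2dc : 2 ∣ d * c := hc ▸ hM2
          rcases (Nat.Prime.dvd_mul Nat.prime_two).mp h2dc with h | h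
          · exact absurd h h2d
          · omega
      have hterm : ∀ d ∈ N.divisors, ((moebius d : ℤ) : ℚ) * d * (Jk 1 1 (M/d))
          = (M:ℚ)^2/24 * (((moebius d : ℤ) : ℚ) * (d:ℚ)⁻¹)
            + (if 2 ∣ d then -(1/24) * (((moebius d : ℤ) : ℚ) * d)
              else -((M:ℚ)/4) * ((moebius d : ℤ) : ℚ)
                + (1/3) * (((moebius d : ℤ) : ℚ) * d)) := by
        intro d hd
        obtain ⟨hdM, hdQ, hcast, h3md⟩ := hfacts d hd
        by_cases h2d : 2 ∣ d
        · rw [if_pos h2d, T_odd _ h3md ((hpar d hd).1 h2d), hcast]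
          field_simp
          ring
        · rw [if_neg h2d, T_even _ h3md ((hpar d hd).2 h2d), hcast]
          field_simp
          ring
      rw [Finset.sum_congr rfl hterm, Finset.sum_add_distrib, ← Finset.mul_sum,
        sum_mu_inv N hNsq, Finset.sum_ite]
      have hsplit : ∑ d ∈ N.divisors.filter (fun d => 2 ∣ d),
            (-(1/24) * (((moebius d : ℤ) : ℚ) * d))
          = -(1/24) * ((∑ d ∈ N.divisors, ((moebius d : ℤ) : ℚ) * d)
              - ∑ d ∈ N'.divisors, ((moebius d : ℤ) : ℚ) * d) := by
        rw [← hfilter, ← Finset.sum_filter_add_sum_filter_not N.divisors (fun d => 2 ∣ d)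
          (fun d => ((moebius d : ℤ) : ℚ) * d), ← Finset.mul_sum]
        ring
      rw [hsplit, hfilter]
      have hodd_sum : ∑ d ∈ N'.divisors,
            (-((M:ℚ)/4) * ((moebius d : ℤ) : ℚ) + (1/3) * (((moebius d : ℤ) : ℚ) * d))
          = -((M:ℚ)/4) * (∑ d ∈ N'.divisors, ((moebius d : ℤ) : ℚ))
            + (1/3) * (∑ d ∈ N'.divisors, ((moebius d : ℤ) : ℚ) * d) := by
        rw [Finset.sum_add_distrib, ← Finset.mul_sum, ← Finset.mul_sum]
      rw [hodd_sum, sum_mu_one N' hN'sq hN'1, sum_mu_id N hNsq, sum_mu_id N' hN'sq,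
        prod_one_sub_inv N hN0.ne', prod_one_sub N hNsq, prod_one_sub N' hN'sq,
        hφ, hcard]
      have hNQ' : (N:ℚ) = 2 * N' := by exact_mod_cast hN'
      rw [hNQ']
      have hN'Q : (N':ℚ) ≠ 0 := by exact_mod_cast hN'0
      field_simp
      ring
    · -- all M/d even
      rw [if_neg hcond]
      have hall : ∀ d ∈ N.divisors, (M/d) % 2 = 0 := by
        intro d hd
        have hd0 : 0 < d := Nat.pos_of_mem_divisors hd
        have hdN : d ∣ N := (Nat.mem_divisors.mp hd).1
        obtain ⟨hdM, _, _, _⟩ := hfacts d hd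
        obtain ⟨c, hc⟩ := hdM
        have hMd : M / d = c := by rw [hc]; exact Nat.mul_div_cancel_left c hd0
        rw [hMd]
        by_cases h2d : 2 ∣ d
        · have h2N : 2 ∣ N := h2d.trans hdN
          have hM4 : 4 ∣ M := by
            have : M % 4 ≠ 2 := fun h => hcond ⟨h, h2N⟩
            omega
          obtain ⟨e, rfl⟩ := h2d
          have hesq : ¬ 2 ∣ e := by
            intro h
            have : (2*2) ∣ N := (Nat.mul_dvd_mul_left 2 h).trans hdN
            exact Nat.Prime.one_lt Nat.prime_two |>.ne' (Nat.isUnit_iff.mp (hNsq 2 this))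
          have hec2 : 2 ∣ e * c := by
            have hM' : M = 2 * (e * c) := by rw [hc]; ring
            omega
          rcases (Nat.Prime.dvd_mul Nat.prime_two).mp hec2 with h | h
          · exact absurd h hesq
          · omega
        · have h2dc : 2 ∣ d * c := hc ▸ hM2
          rcases (Nat.Prime.dvd_mul Nat.prime_two).mp h2dc with h | h
          · exact absurd h h2d
          · omega
      have hterm : ∀ d ∈ N.divisors, ((moebius d : ℤ) : ℚ) * d * (Jk 1 1 (M/d))
          = (M:ℚ)^2/24 * (((moebius d : ℤ) : ℚ) * (d:ℚ)⁻¹)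
            + (-((M:ℚ)/4) * ((moebius d : ℤ) : ℚ)
              + (1/3) * (((moebius d : ℤ) : ℚ) * d)) := by
        intro d hd
        obtain ⟨hdM, hdQ, hcast, h3md⟩ := hfacts d hd
        rw [T_even _ h3md (hall d hd), hcast]
        field_simp
        ring
      rw [Finset.sum_congr rfl hterm, Finset.sum_add_distrib, Finset.sum_add_distrib,
        ← Finset.mul_sum, ← Finset.mul_sum, ← Finset.mul_sum,
        sum_mu_inv N hNsq, sum_mu_one N hNsq (by omega), sum_mu_id N hNsq,
        prod_one_sub_inv N hN0.ne', prod_one_sub N hNsq]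
      field_simp
      ring
end

section
/- Let M ≢ 0 (mod 3) and let L be a positive divisor of M with radical L* = 2. Then J₁(L,M) = (M² − 12M + 20)/48 if M ≡ 2 (mod 4) [note: stated for M with L even] and (M² − 16)/48 if M ≡ 0 (mod 4). -/
open Finset

lemma sum_helper (n r : ℕ) :
    ((∑ j ∈ Finset.range n, (r + 6 * j) : ℕ) : ℚ) = n * r + 3 * n * ((n : ℚ) - 1) := by
  induction n with
  | zero => simp
  | succ m ih =>
      rw [Finset.sum_range_succ, Nat.cast_add, ih]
      push_cast
      ring

lemma Jk_eq (L M r n : ℕ)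
    (hodd : ∀ t, Nat.gcd t L = 1 ↔ t % 2 = 1)
    (hiff : ∀ t, (t < M ∧ 0 < t ∧ 2 * t < M ∧ t % 2 = 1 ∧ (t + M) % 3 = 0) ↔
      ∃ j < n, t = r + 6 * j) :
    (Jk 1 L M : ℚ) = n * r + 3 * n * ((n : ℚ) - 1) := by
  have hset : (Finset.range M).filter
      (fun t => 0 < t ∧ 2 * t < M ∧ Nat.gcd t L = 1 ∧ (t + M) % 3 = 0)
      = (Finset.range n).image (fun j => r + 6 * j) := by
    ext t
    simp only [Finset.mem_filter, Finset.mem_range, Finset.mem_image, hodd]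
    rw [show (t < M ∧ 0 < t ∧ 2 * t < M ∧ t % 2 = 1 ∧ (t + M) % 3 = 0) ↔
        ∃ j < n, t = r + 6 * j from hiff t]
    constructor
    · rintro ⟨j, hj, rfl⟩; exact ⟨j, hj, rfl⟩
    · rintro ⟨j, hj, rfl⟩; exact ⟨j, hj, rfl⟩
  rw [Jk, hset, Finset.sum_image (by intro x _ y _ h; simp only at h; omega)]
  simp only [pow_one]
  exact sum_helper n r

theorem stmt_7 (L M : ℕ) (hL : 0 < L) (hLM : L ∣ M) (hM3 : ¬ (3 ∣ M))
    (hrad : rad L = 2) :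
    (Jk 1 L M : ℚ) =
      if M % 4 = 2 then ((M : ℚ) ^ 2 - 12 * (M : ℚ) + 20) / 48
      else ((M : ℚ) ^ 2 - 16) / 48 := by
  -- L's only prime factor is 2
  have hLne : L ≠ 0 := hL.ne'
  have hpf : L.primeFactors = {2} := by
    have hsub : L.primeFactors ⊆ {2} := by
      intro p hp
      have hpp : p.Prime := Nat.prime_of_mem_primeFactors hp
      have hdvd : p ∣ 2 := by
        rw [← hrad]; exact Finset.dvd_prod_of_mem _ hp
      have := (Nat.prime_two.eq_one_or_self_of_dvd p hdvd).resolve_left hpp.one_lt.ne'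
      simp [this]
    have hne : L.primeFactors ≠ ∅ := by
      intro h
      rw [rad, h] at hrad
      simp at hrad
    rcases Finset.subset_singleton_iff.mp hsub with h | h
    · exact absurd h hne
    · exact h
  have h2L : 2 ∣ L := by
    have : 2 ∈ L.primeFactors := by rw [hpf]; exact Finset.mem_singleton_self 2
    exact Nat.dvd_of_mem_primeFactors this
  have hodd : ∀ t, Nat.gcd t L = 1 ↔ t % 2 = 1 := by
    intro t
    constructor
    · intro h
      by_contra hte
      have h2t : 2 ∣ t := by omega
      have : 2 ∣ Nat.gcd t L := Nat.dvd_gcd h2t h2L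
      omega
    · intro h
      by_contra hg
      set g := Nat.gcd t L with hgdef
      have hgpos : 0 < g := Nat.gcd_pos_of_pos_right t hL
      have hp : g.minFac.Prime := Nat.minFac_prime hg
      have hpt : g.minFac ∣ t := (Nat.minFac_dvd g).trans (Nat.gcd_dvd_left t L)
      have hpL : g.minFac ∣ L := (Nat.minFac_dvd g).trans (Nat.gcd_dvd_right t L)
      have : g.minFac ∈ L.primeFactors := Nat.mem_primeFactors.mpr ⟨hp, hpL, hLne⟩
      rw [hpf, Finset.mem_singleton] at this
      rw [this] at hpt
      omega
  have hM2 : 2 ∣ M := h2L.trans hLM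
  have hM3' : M % 3 ≠ 0 := by omega
  have h12 : M % 12 = 2 ∨ M % 12 = 4 ∨ M % 12 = 8 ∨ M % 12 = 10 := by omega
  rcases h12 with hc | hc | hc | hc
  · obtain ⟨k, rfl⟩ : ∃ k, M = 12 * k + 2 := ⟨M / 12, by omega⟩
    rw [Jk_eq L _ 1 k hodd (by
      intro t
      constructor
      · rintro ⟨h1, h2, h3, h4, h5⟩; exact ⟨(t - 1) / 6, by omega, by omega⟩
      · rintro ⟨j, hj, rfl⟩; omega)]
    rw [if_pos (by omega)]
    push_cast
    ring
  · obtain ⟨k, rfl⟩ : ∃ k, M = 12 * k + 4 := ⟨M / 12, by omega⟩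
    rw [Jk_eq L _ 5 k hodd (by
      intro t
      constructor
      · rintro ⟨h1, h2, h3, h4, h5⟩; exact ⟨(t - 5) / 6, by omega, by omega⟩
      · rintro ⟨j, hj, rfl⟩; omega)]
    rw [if_neg (by omega)]
    push_cast
    ring
  · obtain ⟨k, rfl⟩ : ∃ k, M = 12 * k + 8 := ⟨M / 12, by omega⟩
    rw [Jk_eq L _ 1 (k + 1) hodd (by
      intro t
      constructor
      · rintro ⟨h1, h2, h3, h4, h5⟩; exact ⟨(t - 1) / 6, by omega, by omega⟩
      · rintro ⟨j, hj, rfl⟩; omega)]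
    rw [if_neg (by omega)]
    push_cast
    ring
  · obtain ⟨k, rfl⟩ : ∃ k, M = 12 * k + 10 := ⟨M / 12, by omega⟩
    rw [Jk_eq L _ 5 k hodd (by
      intro t
      constructor
      · rintro ⟨h1, h2, h3, h4, h5⟩; exact ⟨(t - 5) / 6, by omega, by omega⟩
      · rintro ⟨j, hj, rfl⟩; omega)]
    rw [if_pos (by omega)]
    push_cast
    ring
end

section
/- Let N = 2^m with m ≥ 2. Then t_N = (3·2^{2m−3} − 2^{m−1} − (−1)^m)/3 and ℓ_N = (2^{3m−4} − (−1)^m)/3, where t_N = I₀(N,N) + 2·Σ_{0<a<N/3} I₀(gcd(a,N), N−3a) + δ₀(N) and ℓ_N = I₁(N,N) + 2·Σ_{0<a<N/3} I₁(gcd(a,N), N−3a) + δ₁(N), with δ_k(N) = J_k(N,N) since N ≢ 0 (mod 3). -/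
open Finset

/-- The quantity t_N for N not divisible by 3. -/
def tNum (N : ℕ) : ℕ :=
  Ik 0 N N + 2 * ∑ a ∈ (Finset.range N).filter (fun a => 0 < a ∧ 3 * a < N),
    Ik 0 (Nat.gcd a N) (N - 3 * a) + Jk 0 N N

/-- The quantity ℓ_N for N not divisible by 3. -/
def lNum (N : ℕ) : ℕ :=
  Ik 1 N N + 2 * ∑ a ∈ (Finset.range N).filter (fun a => 0 < a ∧ 3 * a < N),
    Ik 1 (Nat.gcd a N) (N - 3 * a) + Jk 1 N N

lemma Ik_eq (k L M : ℕ) :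
    Ik k L M = ∑ t ∈ Finset.range ((M+1)/2), if 0 < t ∧ Nat.gcd t L = 1 then t ^ k else 0 := by
  unfold Ik
  rw [Finset.sum_filter]
  rw [← Finset.sum_subset (Finset.range_subset_range.mpr (by omega : (M+1)/2 ≤ M))
      (fun x hx hnx => by
        rw [Finset.mem_range] at hx hnx
        rw [if_neg]; push_neg; intro _ h2; omega)]
  refine Finset.sum_congr rfl fun t ht => ?_
  rw [Finset.mem_range] at ht
  by_cases h : 0 < t ∧ Nat.gcd t L = 1
  · rw [if_pos ⟨h.1, by omega, h.2⟩, if_pos h]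
  · rw [if_neg (by tauto), if_neg h]

lemma sum_pos_count (n : ℕ) : (∑ t ∈ Finset.range n, if 0 < t then 1 else 0) = n - 1 := by
  induction n with
  | zero => simp
  | succ n ih => rw [Finset.sum_range_succ, ih]; split <;> omega

lemma sum_pos_id (n : ℕ) : (∑ t ∈ Finset.range n, if 0 < t then t else 0) = n * (n-1) / 2 := by
  have h : (∑ t ∈ Finset.range n, if 0 < t then t else 0) = ∑ t ∈ Finset.range n, t :=
    Finset.sum_congr rfl fun t _ => by split <;> omega
  rw [h, Finset.sum_range_id]

lemma sum_odd_count (n : ℕ) :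
    (∑ t ∈ Finset.range n, if 0 < t ∧ t % 2 = 1 then 1 else 0) = n / 2 := by
  induction n with
  | zero => simp
  | succ n ih => rw [Finset.sum_range_succ, ih]; split <;> omega

lemma sum_odd_id (n : ℕ) :
    (∑ t ∈ Finset.range n, if 0 < t ∧ t % 2 = 1 then t else 0) = (n / 2)^2 := by
  induction n with
  | zero => simp
  | succ n ih =>
    rw [Finset.sum_range_succ, ih]
    by_cases h : 0 < n ∧ n % 2 = 1
    · rw [if_pos h]
      obtain ⟨q, rfl⟩ : ∃ q, n = 2*q+1 := ⟨n/2, by omega⟩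
      have h1 : (2*q+1)/2 = q := by omega
      have h2 : (2*q+1+1)/2 = q+1 := by omega
      rw [h1, h2]; ring
    · rw [if_neg h]
      have h1 : (n+1)/2 = n/2 := by omega
      rw [h1, add_zero]

lemma Ik_zero_one (M : ℕ) : Ik 0 1 M = (M+1)/2 - 1 := by
  rw [Ik_eq]
  rw [← sum_pos_count ((M+1)/2)]
  refine Finset.sum_congr rfl fun t _ => ?_
  simp [Nat.gcd_one_right]

lemma Ik_one_one (M : ℕ) : Ik 1 1 M = ((M+1)/2) * ((M+1)/2 - 1) / 2 := by
  rw [Ik_eq]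
  rw [← sum_pos_id ((M+1)/2)]
  refine Finset.sum_congr rfl fun t _ => ?_
  simp [Nat.gcd_one_right]

lemma gcd_two_iff (t : ℕ) : Nat.gcd t 2 = 1 ↔ t % 2 = 1 := by
  have h : Nat.Coprime t 2 ↔ Odd t := Nat.coprime_two_right
  rw [Nat.odd_iff] at h
  exact h

lemma Ik_zero_two (M : ℕ) : Ik 0 2 M = ((M+1)/2) / 2 := by
  rw [Ik_eq]
  rw [← sum_odd_count ((M+1)/2)]
  refine Finset.sum_congr rfl fun t _ => ?_
  simp only [gcd_two_iff, pow_zero, pow_one]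

lemma Ik_one_two (M : ℕ) : Ik 1 2 M = (((M+1)/2) / 2)^2 := by
  rw [Ik_eq]
  rw [← sum_odd_id ((M+1)/2)]
  refine Finset.sum_congr rfl fun t _ => ?_
  simp only [gcd_two_iff, pow_zero, pow_one]

-- mod 6 helpers for J
lemma sum_odd3_count2 (n : ℕ) :
    (∑ t ∈ Finset.range n, if 0 < t ∧ t % 2 = 1 ∧ t % 3 = 2 then 1 else 0) = n / 6 := by
  induction n with
  | zero => simp
  | succ n ih => rw [Finset.sum_range_succ, ih]; split <;> omega

lemma sum_odd3_count1 (n : ℕ) :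
    (∑ t ∈ Finset.range n, if 0 < t ∧ t % 2 = 1 ∧ t % 3 = 1 then 1 else 0) = (n+4) / 6 := by
  induction n with
  | zero => simp
  | succ n ih => rw [Finset.sum_range_succ, ih]; split <;> omega

lemma sum_odd3_id2 (n : ℕ) :
    (∑ t ∈ Finset.range n, if 0 < t ∧ t % 2 = 1 ∧ t % 3 = 2 then t else 0)
      = (n/6) * (3 * (n/6) + 2) := by
  induction n with
  | zero => simp
  | succ n ih =>
    rw [Finset.sum_range_succ, ih]
    by_cases h : 0 < n ∧ n % 2 = 1 ∧ n % 3 = 2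
    · rw [if_pos h]
      obtain ⟨q, rfl⟩ : ∃ q, n = 6*q+5 := ⟨n/6, by omega⟩
      have h1 : (6*q+5)/6 = q := by omega
      have h2 : (6*q+5+1)/6 = q+1 := by omega
      rw [h1, h2]; ring
    · rw [if_neg h]
      have h1 : (n+1)/6 = n/6 := by omega
      rw [h1, add_zero]

lemma sum_odd3_id1 (n : ℕ) :
    (∑ t ∈ Finset.range n, if 0 < t ∧ t % 2 = 1 ∧ t % 3 = 1 then t else 0) + 2 * ((n+4)/6)
      = 3 * ((n+4)/6)^2 := by
  induction n with
  | zero => simp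
  | succ n ih =>
    rw [Finset.sum_range_succ]
    by_cases h : 0 < n ∧ n % 2 = 1 ∧ n % 3 = 1
    · rw [if_pos h]
      obtain ⟨q, rfl⟩ : ∃ q, n = 6*q+1 := ⟨n/6, by omega⟩
      have h1 : (6*q+1+4)/6 = q := by omega
      have h2 : (6*q+1+1+4)/6 = q+1 := by omega
      rw [h1] at ih
      rw [h2]
      have h3 : 3*(q+1)^2 = 3*q^2 + 6*q + 3 := by ring
      omega
    · rw [if_neg h]
      have h1 : (n+1+4)/6 = (n+4)/6 := by omega
      rw [h1, add_zero]
      exact ih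


def Wk (k r n : ℕ) : ℕ :=
  ∑ M ∈ Finset.range n,
    if 0 < M ∧ M % 3 = r then (if M % 2 = 1 then Ik k 1 M else Ik k 2 M) else 0

lemma Wk_succ (k r n : ℕ) : Wk k r (n+1) = Wk k r n +
    (if 0 < n ∧ n % 3 = r then (if n % 2 = 1 then Ik k 1 n else Ik k 2 n) else 0) := by
  simp [Wk, Finset.sum_range_succ]

lemma W01 (j : ℕ) : Wk 0 1 (12*j+4) = 9*j^2 + 3*j := by
  induction j with
  | zero => decide
  | succ j ih =>
    rw [show 12*(j+1)+4 = 12*j+4+1+1+1+1+1+1+1+1+1+1+1+1 by ring]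
    rw [Wk_succ, Wk_succ, Wk_succ, Wk_succ, Wk_succ, Wk_succ, Wk_succ, Wk_succ, Wk_succ, Wk_succ, Wk_succ, Wk_succ]
    rw [ih]
    simp only [show (0 < 12*j+4 ∧ (12*j+4) % 3 = 1) = True from eq_true (by omega),
      show ((12*j+4) % 2 = 1) = False from eq_false (by omega),
      show (12*j+4+1)/2 = 6*j+2 from by omega,
      show (6*j+2)/2 = 3*j+1 from by omega,
      show (0 < 12*j+4+1 ∧ (12*j+4+1) % 3 = 1) = False from eq_false (by omega),
      show (0 < 12*j+4+1+1 ∧ (12*j+4+1+1) % 3 = 1) = False from eq_false (by omega),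
      show (0 < 12*j+4+1+1+1 ∧ (12*j+4+1+1+1) % 3 = 1) = True from eq_true (by omega),
      show ((12*j+4+1+1+1) % 2 = 1) = True from eq_true (by omega),
      show (12*j+4+1+1+1+1)/2 = 6*j+4 from by omega,
      show 6*j+4 - 1 = 6*j+3 from by omega,
      show (0 < 12*j+4+1+1+1+1 ∧ (12*j+4+1+1+1+1) % 3 = 1) = False from eq_false (by omega),
      show (0 < 12*j+4+1+1+1+1+1 ∧ (12*j+4+1+1+1+1+1) % 3 = 1) = False from eq_false (by omega),
      show (0 < 12*j+4+1+1+1+1+1+1 ∧ (12*j+4+1+1+1+1+1+1) % 3 = 1) = True from eq_true (by omega),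
      show ((12*j+4+1+1+1+1+1+1) % 2 = 1) = False from eq_false (by omega),
      show (12*j+4+1+1+1+1+1+1+1)/2 = 6*j+5 from by omega,
      show (6*j+5)/2 = 3*j+2 from by omega,
      show (0 < 12*j+4+1+1+1+1+1+1+1 ∧ (12*j+4+1+1+1+1+1+1+1) % 3 = 1) = False from eq_false (by omega),
      show (0 < 12*j+4+1+1+1+1+1+1+1+1 ∧ (12*j+4+1+1+1+1+1+1+1+1) % 3 = 1) = False from eq_false (by omega),
      show (0 < 12*j+4+1+1+1+1+1+1+1+1+1 ∧ (12*j+4+1+1+1+1+1+1+1+1+1) % 3 = 1) = True from eq_true (by omega),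
      show ((12*j+4+1+1+1+1+1+1+1+1+1) % 2 = 1) = True from eq_true (by omega),
      show (12*j+4+1+1+1+1+1+1+1+1+1+1)/2 = 6*j+7 from by omega,
      show 6*j+7 - 1 = 6*j+6 from by omega,
      show (0 < 12*j+4+1+1+1+1+1+1+1+1+1+1 ∧ (12*j+4+1+1+1+1+1+1+1+1+1+1) % 3 = 1) = False from eq_false (by omega),
      show (0 < 12*j+4+1+1+1+1+1+1+1+1+1+1+1 ∧ (12*j+4+1+1+1+1+1+1+1+1+1+1+1) % 3 = 1) = False from eq_false (by omega),
      if_true, if_false, add_zero, Ik_zero_one, Ik_zero_two]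
    ring

lemma W11 (j : ℕ) : Wk 1 1 (12*j+4) = 18*j^3 + 12*j^2 + 2*j := by
  induction j with
  | zero => decide
  | succ j ih =>
    rw [show 12*(j+1)+4 = 12*j+4+1+1+1+1+1+1+1+1+1+1+1+1 by ring]
    rw [Wk_succ, Wk_succ, Wk_succ, Wk_succ, Wk_succ, Wk_succ, Wk_succ, Wk_succ, Wk_succ, Wk_succ, Wk_succ, Wk_succ]
    rw [ih]
    simp only [show (0 < 12*j+4 ∧ (12*j+4) % 3 = 1) = True from eq_true (by omega),
      show ((12*j+4) % 2 = 1) = False from eq_false (by omega),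
      show (12*j+4+1)/2 = 6*j+2 from by omega,
      show (6*j+2)/2 = 3*j+1 from by omega,
      show (0 < 12*j+4+1 ∧ (12*j+4+1) % 3 = 1) = False from eq_false (by omega),
      show (0 < 12*j+4+1+1 ∧ (12*j+4+1+1) % 3 = 1) = False from eq_false (by omega),
      show (0 < 12*j+4+1+1+1 ∧ (12*j+4+1+1+1) % 3 = 1) = True from eq_true (by omega),
      show ((12*j+4+1+1+1) % 2 = 1) = True from eq_true (by omega),
      show (12*j+4+1+1+1+1)/2 = 6*j+4 from by omega,
      show 6*j+4 - 1 = 6*j+3 from by omega,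
      show (6*j+4) * (6*j+3) / 2 = 18*j^2 + 21*j + 6 from Nat.div_eq_of_eq_mul_left (by norm_num) (by ring),
      show (0 < 12*j+4+1+1+1+1 ∧ (12*j+4+1+1+1+1) % 3 = 1) = False from eq_false (by omega),
      show (0 < 12*j+4+1+1+1+1+1 ∧ (12*j+4+1+1+1+1+1) % 3 = 1) = False from eq_false (by omega),
      show (0 < 12*j+4+1+1+1+1+1+1 ∧ (12*j+4+1+1+1+1+1+1) % 3 = 1) = True from eq_true (by omega),
      show ((12*j+4+1+1+1+1+1+1) % 2 = 1) = False from eq_false (by omega),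
      show (12*j+4+1+1+1+1+1+1+1)/2 = 6*j+5 from by omega,
      show (6*j+5)/2 = 3*j+2 from by omega,
      show (0 < 12*j+4+1+1+1+1+1+1+1 ∧ (12*j+4+1+1+1+1+1+1+1) % 3 = 1) = False from eq_false (by omega),
      show (0 < 12*j+4+1+1+1+1+1+1+1+1 ∧ (12*j+4+1+1+1+1+1+1+1+1) % 3 = 1) = False from eq_false (by omega),
      show (0 < 12*j+4+1+1+1+1+1+1+1+1+1 ∧ (12*j+4+1+1+1+1+1+1+1+1+1) % 3 = 1) = True from eq_true (by omega),
      show ((12*j+4+1+1+1+1+1+1+1+1+1) % 2 = 1) = True from eq_true (by omega),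
      show (12*j+4+1+1+1+1+1+1+1+1+1+1)/2 = 6*j+7 from by omega,
      show 6*j+7 - 1 = 6*j+6 from by omega,
      show (6*j+7) * (6*j+6) / 2 = 18*j^2 + 39*j + 21 from Nat.div_eq_of_eq_mul_left (by norm_num) (by ring),
      show (0 < 12*j+4+1+1+1+1+1+1+1+1+1+1 ∧ (12*j+4+1+1+1+1+1+1+1+1+1+1) % 3 = 1) = False from eq_false (by omega),
      show (0 < 12*j+4+1+1+1+1+1+1+1+1+1+1+1 ∧ (12*j+4+1+1+1+1+1+1+1+1+1+1+1) % 3 = 1) = False from eq_false (by omega),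
      if_true, if_false, add_zero, Ik_one_one, Ik_one_two]
    ring

lemma W02 (j : ℕ) : Wk 0 2 (12*j+8) = 9*j^2 + 9*j + 2 := by
  induction j with
  | zero => decide
  | succ j ih =>
    rw [show 12*(j+1)+8 = 12*j+8+1+1+1+1+1+1+1+1+1+1+1+1 by ring]
    rw [Wk_succ, Wk_succ, Wk_succ, Wk_succ, Wk_succ, Wk_succ, Wk_succ, Wk_succ, Wk_succ, Wk_succ, Wk_succ, Wk_succ]
    rw [ih]
    simp only [show (0 < 12*j+8 ∧ (12*j+8) % 3 = 2) = True from eq_true (by omega),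
      show ((12*j+8) % 2 = 1) = False from eq_false (by omega),
      show (12*j+8+1)/2 = 6*j+4 from by omega,
      show (6*j+4)/2 = 3*j+2 from by omega,
      show (0 < 12*j+8+1 ∧ (12*j+8+1) % 3 = 2) = False from eq_false (by omega),
      show (0 < 12*j+8+1+1 ∧ (12*j+8+1+1) % 3 = 2) = False from eq_false (by omega),
      show (0 < 12*j+8+1+1+1 ∧ (12*j+8+1+1+1) % 3 = 2) = True from eq_true (by omega),
      show ((12*j+8+1+1+1) % 2 = 1) = True from eq_true (by omega),
      show (12*j+8+1+1+1+1)/2 = 6*j+6 from by omega,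
      show 6*j+6 - 1 = 6*j+5 from by omega,
      show (0 < 12*j+8+1+1+1+1 ∧ (12*j+8+1+1+1+1) % 3 = 2) = False from eq_false (by omega),
      show (0 < 12*j+8+1+1+1+1+1 ∧ (12*j+8+1+1+1+1+1) % 3 = 2) = False from eq_false (by omega),
      show (0 < 12*j+8+1+1+1+1+1+1 ∧ (12*j+8+1+1+1+1+1+1) % 3 = 2) = True from eq_true (by omega),
      show ((12*j+8+1+1+1+1+1+1) % 2 = 1) = False from eq_false (by omega),
      show (12*j+8+1+1+1+1+1+1+1)/2 = 6*j+7 from by omega,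
      show (6*j+7)/2 = 3*j+3 from by omega,
      show (0 < 12*j+8+1+1+1+1+1+1+1 ∧ (12*j+8+1+1+1+1+1+1+1) % 3 = 2) = False from eq_false (by omega),
      show (0 < 12*j+8+1+1+1+1+1+1+1+1 ∧ (12*j+8+1+1+1+1+1+1+1+1) % 3 = 2) = False from eq_false (by omega),
      show (0 < 12*j+8+1+1+1+1+1+1+1+1+1 ∧ (12*j+8+1+1+1+1+1+1+1+1+1) % 3 = 2) = True from eq_true (by omega),
      show ((12*j+8+1+1+1+1+1+1+1+1+1) % 2 = 1) = True from eq_true (by omega),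
      show (12*j+8+1+1+1+1+1+1+1+1+1+1)/2 = 6*j+9 from by omega,
      show 6*j+9 - 1 = 6*j+8 from by omega,
      show (0 < 12*j+8+1+1+1+1+1+1+1+1+1+1 ∧ (12*j+8+1+1+1+1+1+1+1+1+1+1) % 3 = 2) = False from eq_false (by omega),
      show (0 < 12*j+8+1+1+1+1+1+1+1+1+1+1+1 ∧ (12*j+8+1+1+1+1+1+1+1+1+1+1+1) % 3 = 2) = False from eq_false (by omega),
      if_true, if_false, add_zero, Ik_zero_one, Ik_zero_two]
    ring

lemma W12 (j : ℕ) : Wk 1 2 (12*j+8) = 18*j^3 + 30*j^2 + 16*j + 3 := by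
  induction j with
  | zero => decide
  | succ j ih =>
    rw [show 12*(j+1)+8 = 12*j+8+1+1+1+1+1+1+1+1+1+1+1+1 by ring]
    rw [Wk_succ, Wk_succ, Wk_succ, Wk_succ, Wk_succ, Wk_succ, Wk_succ, Wk_succ, Wk_succ, Wk_succ, Wk_succ, Wk_succ]
    rw [ih]
    simp only [show (0 < 12*j+8 ∧ (12*j+8) % 3 = 2) = True from eq_true (by omega),
      show ((12*j+8) % 2 = 1) = False from eq_false (by omega),
      show (12*j+8+1)/2 = 6*j+4 from by omega,
      show (6*j+4)/2 = 3*j+2 from by omega,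
      show (0 < 12*j+8+1 ∧ (12*j+8+1) % 3 = 2) = False from eq_false (by omega),
      show (0 < 12*j+8+1+1 ∧ (12*j+8+1+1) % 3 = 2) = False from eq_false (by omega),
      show (0 < 12*j+8+1+1+1 ∧ (12*j+8+1+1+1) % 3 = 2) = True from eq_true (by omega),
      show ((12*j+8+1+1+1) % 2 = 1) = True from eq_true (by omega),
      show (12*j+8+1+1+1+1)/2 = 6*j+6 from by omega,
      show 6*j+6 - 1 = 6*j+5 from by omega,
      show (6*j+6) * (6*j+5) / 2 = 18*j^2 + 33*j + 15 from Nat.div_eq_of_eq_mul_left (by norm_num) (by ring),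
      show (0 < 12*j+8+1+1+1+1 ∧ (12*j+8+1+1+1+1) % 3 = 2) = False from eq_false (by omega),
      show (0 < 12*j+8+1+1+1+1+1 ∧ (12*j+8+1+1+1+1+1) % 3 = 2) = False from eq_false (by omega),
      show (0 < 12*j+8+1+1+1+1+1+1 ∧ (12*j+8+1+1+1+1+1+1) % 3 = 2) = True from eq_true (by omega),
      show ((12*j+8+1+1+1+1+1+1) % 2 = 1) = False from eq_false (by omega),
      show (12*j+8+1+1+1+1+1+1+1)/2 = 6*j+7 from by omega,
      show (6*j+7)/2 = 3*j+3 from by omega,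
      show (0 < 12*j+8+1+1+1+1+1+1+1 ∧ (12*j+8+1+1+1+1+1+1+1) % 3 = 2) = False from eq_false (by omega),
      show (0 < 12*j+8+1+1+1+1+1+1+1+1 ∧ (12*j+8+1+1+1+1+1+1+1+1) % 3 = 2) = False from eq_false (by omega),
      show (0 < 12*j+8+1+1+1+1+1+1+1+1+1 ∧ (12*j+8+1+1+1+1+1+1+1+1+1) % 3 = 2) = True from eq_true (by omega),
      show ((12*j+8+1+1+1+1+1+1+1+1+1) % 2 = 1) = True from eq_true (by omega),
      show (12*j+8+1+1+1+1+1+1+1+1+1+1)/2 = 6*j+9 from by omega,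
      show 6*j+9 - 1 = 6*j+8 from by omega,
      show (6*j+9) * (6*j+8) / 2 = 18*j^2 + 51*j + 36 from Nat.div_eq_of_eq_mul_left (by norm_num) (by ring),
      show (0 < 12*j+8+1+1+1+1+1+1+1+1+1+1 ∧ (12*j+8+1+1+1+1+1+1+1+1+1+1) % 3 = 2) = False from eq_false (by omega),
      show (0 < 12*j+8+1+1+1+1+1+1+1+1+1+1+1 ∧ (12*j+8+1+1+1+1+1+1+1+1+1+1+1) % 3 = 2) = False from eq_false (by omega),
      if_true, if_false, add_zero, Ik_one_one, Ik_one_two]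
    ring



lemma gcd_pow_iff (t m : ℕ) (hm : 1 ≤ m) : Nat.gcd t (2^m) = 1 ↔ t % 2 = 1 := by
  have h : Nat.Coprime t (2^m) ↔ Nat.Coprime t 2 := Nat.coprime_pow_right_iff (by omega) t 2
  rw [Nat.coprime_two_right, Nat.odd_iff] at h
  exact h

lemma gcd_dvd_pow_two (t d m : ℕ) (hd : d ∣ 2^m) (h2 : 2 ∣ d) : (Nat.gcd t d = 1 ↔ t % 2 = 1) := by
  constructor
  · intro h
    by_contra hodd
    have h2t : 2 ∣ t := by omega
    have : 2 ∣ Nat.gcd t d := Nat.dvd_gcd h2t h2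
    omega
  · intro h
    have hc : Nat.Coprime t 2 := (gcd_two_iff t).mpr h
    exact Nat.Coprime.coprime_dvd_right hd (hc.pow_right m)

lemma gcd_odd_pow_two (a m : ℕ) (h : a % 2 = 1) : Nat.gcd a (2^m) = 1 :=
  Nat.Coprime.pow_right m ((gcd_two_iff a).mpr h)

lemma Ik_congr (k L L' M : ℕ) (h : ∀ t, Nat.gcd t L = 1 ↔ Nat.gcd t L' = 1) :
    Ik k L M = Ik k L' M := by
  unfold Ik
  refine Finset.sum_congr (Finset.filter_congr fun t _ => ?_) (fun _ _ => rfl)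
  simp only [h t]

lemma Jk_eq_s10 (k L M : ℕ) :
    Jk k L M = ∑ t ∈ Finset.range ((M+1)/2),
      if 0 < t ∧ Nat.gcd t L = 1 ∧ (t + M) % 3 = 0 then t ^ k else 0 := by
  unfold Jk
  rw [Finset.sum_filter]
  rw [← Finset.sum_subset (Finset.range_subset_range.mpr (by omega : (M+1)/2 ≤ M))
      (fun x hx hnx => by
        rw [Finset.mem_range] at hx hnx
        rw [if_neg]; push_neg; intro _ h2; omega)]
  refine Finset.sum_congr rfl fun t ht => ?_
  rw [Finset.mem_range] at ht
  by_cases h : 0 < t ∧ Nat.gcd t L = 1 ∧ (t + M) % 3 = 0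
  · rw [if_pos ⟨h.1, by omega, h.2.1, h.2.2⟩, if_pos h]
  · rw [if_neg (by tauto), if_neg h]

lemma middle_eq (k m : ℕ) (hm : 1 ≤ m) :
    (∑ a ∈ (Finset.range (2^m)).filter (fun a => 0 < a ∧ 3 * a < 2^m),
      Ik k (Nat.gcd a (2^m)) (2^m - 3 * a)) = Wk k (2^m % 3) (2^m) := by
  have heven : (2:ℕ)^m % 2 = 0 := by
    obtain ⟨m', rfl⟩ : ∃ m', m = m'+1 := ⟨m-1, by omega⟩
    rw [pow_succ]; omega
  unfold Wk
  rw [← Finset.sum_filter]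
  refine Finset.sum_nbij' (fun a => 2^m - 3*a) (fun M => (2^m - M)/3) ?_ ?_ ?_ ?_ ?_
  · intro a ha
    simp only [Finset.mem_filter, Finset.mem_range] at *
    try dsimp only
    omega
  · intro M hM
    simp only [Finset.mem_filter, Finset.mem_range] at *
    try dsimp only
    omega
  · intro a ha
    simp only [Finset.mem_filter, Finset.mem_range] at ha
    try dsimp only
    omega
  · intro M hM
    simp only [Finset.mem_filter, Finset.mem_range] at hM
    try dsimp only
    omega
  · intro a ha
    simp only [Finset.mem_filter, Finset.mem_range] at ha
    by_cases hpar : a % 2 = 1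
    · rw [gcd_odd_pow_two a m hpar, if_pos (by omega : (2^m - 3*a) % 2 = 1)]
    · rw [if_neg (by omega : ¬((2^m - 3*a) % 2 = 1))]
      refine Ik_congr k _ 2 _ fun t => ?_
      rw [gcd_dvd_pow_two t _ m (Nat.gcd_dvd_right a (2^m))
        (Nat.dvd_gcd (by omega) (by omega)), gcd_two_iff]

lemma four_pow_mod3 (i : ℕ) : ∃ j, (4:ℕ)^i = 3*j+1 := by
  induction i with
  | zero => exact ⟨0, by norm_num⟩
  | succ i ih =>
    obtain ⟨j, hj⟩ := ih
    exact ⟨4*j+1, by rw [pow_succ, hj]; ring⟩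


theorem stmt_10 (m : ℕ) (hm : 2 ≤ m) :
    (tNum (2 ^ m) : ℚ) = (3 * 2 ^ (2 * m - 3) - 2 ^ (m - 1) - (-1 : ℚ) ^ m) / 3 ∧
    (lNum (2 ^ m) : ℚ) = (2 ^ (3 * m - 4) - (-1 : ℚ) ^ m) / 3 := by
  rcases Nat.even_or_odd m with he | ho
  · -- m even
    obtain ⟨i, rfl⟩ : ∃ i, m = 2*i+2 := ⟨m/2 - 1, by rw [Nat.even_iff] at he; omega⟩
    obtain ⟨j, h4⟩ := four_pow_mod3 i
    have hN : (2:ℕ)^(2*i+2) = 12*j+4 := by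
      have h : (2:ℕ)^(2*i+2) = (2^2)^i * 2^2 := by rw [← pow_mul, ← pow_add]
      rw [h, show (2:ℕ)^2 = 4 by norm_num, h4]; ring
    have hI0 : Ik 0 (2^(2*i+2)) (2^(2*i+2)) = 3*j+1 := by
      rw [Ik_congr 0 (2^(2*i+2)) 2 _
        (fun t => (gcd_pow_iff t _ (by omega)).trans (gcd_two_iff t).symm)]
      rw [Ik_zero_two]
      omega
    have hI1 : Ik 1 (2^(2*i+2)) (2^(2*i+2)) = (3*j+1)^2 := by
      rw [Ik_congr 1 (2^(2*i+2)) 2 _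
        (fun t => (gcd_pow_iff t _ (by omega)).trans (gcd_two_iff t).symm)]
      rw [Ik_one_two]
      congr 1
      omega
    have hW0 : (∑ a ∈ (Finset.range (2^(2*i+2))).filter (fun a => 0 < a ∧ 3 * a < 2^(2*i+2)),
        Ik 0 (Nat.gcd a (2^(2*i+2))) (2^(2*i+2) - 3 * a)) = 9*j^2 + 3*j := by
      rw [middle_eq 0 (2*i+2) (by omega), show (2:ℕ)^(2*i+2) % 3 = 1 by omega, hN, W01]
    have hW1 : (∑ a ∈ (Finset.range (2^(2*i+2))).filter (fun a => 0 < a ∧ 3 * a < 2^(2*i+2)),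
        Ik 1 (Nat.gcd a (2^(2*i+2))) (2^(2*i+2) - 3 * a)) = 18*j^3 + 12*j^2 + 2*j := by
      rw [middle_eq 1 (2*i+2) (by omega), show (2:ℕ)^(2*i+2) % 3 = 1 by omega, hN, W11]
    have hJ0 : Jk 0 (2^(2*i+2)) (2^(2*i+2)) = j := by
      have key := sum_odd3_count2 (6*j+2)
      rw [show (6*j+2)/6 = j from by omega] at key
      rw [Jk_eq_s10, show ((2:ℕ)^(2*i+2)+1)/2 = 6*j+2 from by omega]
      refine Eq.trans (Finset.sum_congr rfl fun t _ => ?_) key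
      simp only [gcd_pow_iff t (2*i+2) (by omega), pow_zero,
        show ((t + 2^(2*i+2)) % 3 = 0) ↔ t % 3 = 2 from by omega]
    have hJ1 : Jk 1 (2^(2*i+2)) (2^(2*i+2)) = j*(3*j+2) := by
      rw [Jk_eq_s10, show ((2:ℕ)^(2*i+2)+1)/2 = 6*j+2 from by omega]
      have := sum_odd3_id2 (6*j+2)
      rw [show (6*j+2)/6 = j from by omega] at this
      refine Eq.trans (Finset.sum_congr rfl fun t _ => ?_) this
      simp only [gcd_pow_iff t (2*i+2) (by omega), pow_one,
        show ((t + 2^(2*i+2)) % 3 = 0) ↔ t % 3 = 2 from by omega]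
    have ht : tNum (2^(2*i+2)) = 18*j^2 + 10*j + 1 := by
      unfold tNum
      rw [hI0, hW0, hJ0]; ring
    have hl : lNum (2^(2*i+2)) = 36*j^3 + 36*j^2 + 12*j + 1 := by
      unfold lNum
      rw [hI1, hW1, hJ1]; ring
    have hY : (2:ℚ)^(2*i+2) = 12*j+4 := by exact_mod_cast congrArg (Nat.cast (R := ℚ)) hN
    have h8 : (2:ℚ)^(2*(2*i+2)-3) * 8 = ((2:ℚ)^(2*i+2))^2 := by
      rw [show (8:ℚ) = 2^3 by norm_num, ← pow_add, ← pow_mul]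
      congr 1; omega
    have h2 : (2:ℚ)^(2*i+2-1) * 2 = (2:ℚ)^(2*i+2) := by
      rw [← pow_succ, show 2*i+2-1+1 = 2*i+2 from by omega]
    have h16 : (2:ℚ)^(3*(2*i+2)-4) * 16 = ((2:ℚ)^(2*i+2))^3 := by
      rw [show (16:ℚ) = 2^4 by norm_num, ← pow_add, ← pow_mul]
      congr 1; omega
    have hXe : (2:ℚ)^(2*(2*i+2)-3) = 2*(3*j+1)^2 := by
      linear_combination (1/8)*h8 + (((2:ℚ)^(2*i+2) + 12*j+4)/8)*hY
    have hZe : (2:ℚ)^(2*i+2-1) = 6*j+2 := by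
      linear_combination (1/2)*h2 + (1/2)*hY
    have hCe : (2:ℚ)^(3*(2*i+2)-4) = 4*(3*j+1)^3 := by
      linear_combination (1/16)*h16
        + ((((2:ℚ)^(2*i+2))^2 + (2:ℚ)^(2*i+2)*(12*j+4) + (12*j+4)^2)/16)*hY
    have hneg : (-1:ℚ)^(2*i+2) = 1 := by
      rw [show 2*i+2 = 2*(i+1) by ring, pow_mul]; norm_num
    constructor
    · rw [ht, hXe, hZe, hneg, eq_div_iff (by norm_num : (3:ℚ) ≠ 0)]
      push_cast; ring
    · rw [hl, hCe, hneg, eq_div_iff (by norm_num : (3:ℚ) ≠ 0)]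
      push_cast; ring
  · -- m odd
    obtain ⟨i, rfl⟩ : ∃ i, m = 2*i+3 := ⟨(m-3)/2, by rw [Nat.odd_iff] at ho; omega⟩
    obtain ⟨j, h4⟩ := four_pow_mod3 i
    have hN : (2:ℕ)^(2*i+3) = 24*j+8 := by
      have h : (2:ℕ)^(2*i+3) = (2^2)^i * 2^3 := by rw [← pow_mul, ← pow_add]
      rw [h, show (2:ℕ)^2 = 4 by norm_num, show (2:ℕ)^3 = 8 by norm_num, h4]; ring
    have hI0 : Ik 0 (2^(2*i+3)) (2^(2*i+3)) = 6*j+2 := by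
      rw [Ik_congr 0 (2^(2*i+3)) 2 _
        (fun t => (gcd_pow_iff t _ (by omega)).trans (gcd_two_iff t).symm)]
      rw [Ik_zero_two]
      omega
    have hI1 : Ik 1 (2^(2*i+3)) (2^(2*i+3)) = (6*j+2)^2 := by
      rw [Ik_congr 1 (2^(2*i+3)) 2 _
        (fun t => (gcd_pow_iff t _ (by omega)).trans (gcd_two_iff t).symm)]
      rw [Ik_one_two]
      congr 1
      omega
    have hW0 : (∑ a ∈ (Finset.range (2^(2*i+3))).filter (fun a => 0 < a ∧ 3 * a < 2^(2*i+3)),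
        Ik 0 (Nat.gcd a (2^(2*i+3))) (2^(2*i+3) - 3 * a)) = 36*j^2 + 18*j + 2 := by
      rw [middle_eq 0 (2*i+3) (by omega), show (2:ℕ)^(2*i+3) % 3 = 2 by omega,
        show (2:ℕ)^(2*i+3) = 12*(2*j)+8 by omega, W02]
      ring
    have hW1 : (∑ a ∈ (Finset.range (2^(2*i+3))).filter (fun a => 0 < a ∧ 3 * a < 2^(2*i+3)),
        Ik 1 (Nat.gcd a (2^(2*i+3))) (2^(2*i+3) - 3 * a)) = 144*j^3 + 120*j^2 + 32*j + 3 := by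
      rw [middle_eq 1 (2*i+3) (by omega), show (2:ℕ)^(2*i+3) % 3 = 2 by omega,
        show (2:ℕ)^(2*i+3) = 12*(2*j)+8 by omega, W12]
      ring
    have hJ0 : Jk 0 (2^(2*i+3)) (2^(2*i+3)) = 2*j+1 := by
      rw [Jk_eq_s10, show ((2:ℕ)^(2*i+3)+1)/2 = 12*j+4 from by omega]
      have := sum_odd3_count1 (12*j+4)
      rw [show (12*j+4+4)/6 = 2*j+1 from by omega] at this
      refine Eq.trans (Finset.sum_congr rfl fun t _ => ?_) this
      simp only [gcd_pow_iff t (2*i+3) (by omega), pow_zero,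
        show ((t + 2^(2*i+3)) % 3 = 0) ↔ t % 3 = 1 from by omega]
    have hJ1 : Jk 1 (2^(2*i+3)) (2^(2*i+3)) = 12*j^2 + 8*j + 1 := by
      have key := sum_odd3_id1 (12*j+4)
      rw [show (12*j+4+4)/6 = 2*j+1 from by omega] at key
      have hconv : Jk 1 (2^(2*i+3)) (2^(2*i+3))
          = ∑ t ∈ Finset.range (12*j+4), if 0 < t ∧ t % 2 = 1 ∧ t % 3 = 1 then t else 0 := by
        rw [Jk_eq_s10, show ((2:ℕ)^(2*i+3)+1)/2 = 12*j+4 from by omega]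
        refine Finset.sum_congr rfl fun t _ => ?_
        simp only [gcd_pow_iff t (2*i+3) (by omega), pow_one,
          show ((t + 2^(2*i+3)) % 3 = 0) ↔ t % 3 = 1 from by omega]
      rw [hconv]
      have h3 : 3*(2*j+1)^2 = 12*j^2+12*j+3 := by ring
      linarith [key, h3]
    have ht : tNum (2^(2*i+3)) = 72*j^2 + 44*j + 7 := by
      unfold tNum
      rw [hI0, hW0, hJ0]; ring
    have hl : lNum (2^(2*i+3)) = 288*j^3 + 288*j^2 + 96*j + 11 := by
      unfold lNum
      rw [hI1, hW1, hJ1]; ring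
    have hY : (2:ℚ)^(2*i+3) = 24*j+8 := by exact_mod_cast congrArg (Nat.cast (R := ℚ)) hN
    have h8 : (2:ℚ)^(2*(2*i+3)-3) * 8 = ((2:ℚ)^(2*i+3))^2 := by
      rw [show (8:ℚ) = 2^3 by norm_num, ← pow_add, ← pow_mul]
      congr 1; omega
    have h2 : (2:ℚ)^(2*i+3-1) * 2 = (2:ℚ)^(2*i+3) := by
      rw [← pow_succ, show 2*i+3-1+1 = 2*i+3 from by omega]
    have h16 : (2:ℚ)^(3*(2*i+3)-4) * 16 = ((2:ℚ)^(2*i+3))^3 := by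
      rw [show (16:ℚ) = 2^4 by norm_num, ← pow_add, ← pow_mul]
      congr 1; omega
    have hXe : (2:ℚ)^(2*(2*i+3)-3) = 8*(3*j+1)^2 := by
      linear_combination (1/8)*h8 + (((2:ℚ)^(2*i+3) + 24*j+8)/8)*hY
    have hZe : (2:ℚ)^(2*i+3-1) = 12*j+4 := by
      linear_combination (1/2)*h2 + (1/2)*hY
    have hCe : (2:ℚ)^(3*(2*i+3)-4) = 32*(3*j+1)^3 := by
      linear_combination (1/16)*h16
        + ((((2:ℚ)^(2*i+3))^2 + (2:ℚ)^(2*i+3)*(24*j+8) + (24*j+8)^2)/16)*hY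
    have hneg : (-1:ℚ)^(2*i+3) = -1 := by
      rw [show 2*i+3 = 2*(i+1)+1 by ring, pow_succ, pow_mul]; norm_num
    constructor
    · rw [ht, hXe, hZe, hneg, eq_div_iff (by norm_num : (3:ℚ) ≠ 0)]
      push_cast; ring
    · rw [hl, hCe, hneg, eq_div_iff (by norm_num : (3:ℚ) ≠ 0)]
      push_cast; ring
end

section
/- Let N = 3^m with m ≥ 2. Then t_N = 4·3^{2m−3} − 2·3^{m−2} and ℓ_N = 2·3^{3m−4}, where t_N = I₀(N,N) + 2·Σ_{0<a<N/3} I₀(gcd(a,N), N−3a) + δ₀(N), ℓ_N = I₁(N,N) + 2·Σ_{0<a<N/3} I₁(gcd(a,N), N−3a) + δ₁(N), and δ_k(N) = 3^k·(I_k(N/3, N/3) − J_k(N/3, N/3)). -/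
open Finset

/-- The quantity t_N for N divisible by 3. -/
def tNum3 (N : ℕ) : ℤ :=
  (Ik 0 N N : ℤ) + 2 * ∑ a ∈ (Finset.range N).filter (fun a => 0 < a ∧ 3 * a < N),
    (Ik 0 (Nat.gcd a N) (N - 3 * a) : ℤ) + ((Ik 0 (N / 3) (N / 3) : ℤ) - (Jk 0 (N / 3) (N / 3) : ℤ))

/-- The quantity ℓ_N for N divisible by 3. -/
def lNum3 (N : ℕ) : ℤ :=
  (Ik 1 N N : ℤ) + 2 * ∑ a ∈ (Finset.range N).filter (fun a => 0 < a ∧ 3 * a < N),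
    (Ik 1 (Nat.gcd a N) (N - 3 * a) : ℤ) +
      3 * ((Ik 1 (N / 3) (N / 3) : ℤ) - (Jk 1 (N / 3) (N / 3) : ℤ))

section Aux

lemma gcd_iff_of (L n : ℕ) (h3 : 3 ∣ L) (hL : L ∣ 3 ^ n) (t : ℕ) :
    Nat.gcd t L = 1 ↔ ¬ 3 ∣ t := by
  constructor
  · intro h ht
    have h1 : (3:ℕ) ∣ Nat.gcd t L := Nat.dvd_gcd ht h3
    rw [h] at h1; norm_num at h1
  · intro ht
    have h1 : Nat.Coprime t 3 := (Nat.prime_three.coprime_iff_not_dvd.mpr ht).symm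
    exact Nat.Coprime.coprime_dvd_right hL (h1.pow_right n)

lemma Jk_zero (k L M : ℕ) (h3L : 3 ∣ L) (h3M : 3 ∣ M) : Jk k L M = 0 := by
  apply Finset.sum_eq_zero
  intro t ht
  simp only [mem_filter, mem_range] at ht
  obtain ⟨-, -, -, hg, hm3⟩ := ht
  exfalso
  have h3t : (3:ℕ) ∣ t := by omega
  have : (3:ℕ) ∣ Nat.gcd t L := Nat.dvd_gcd h3t h3L
  rw [hg] at this; norm_num at this

lemma Ik_set1 (k M : ℕ) :
    Ik k 1 M = ∑ t ∈ Ioc 0 ((M-1)/2), t ^ k := by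
  unfold Ik
  apply Finset.sum_congr _ (fun _ _ => rfl)
  ext t
  simp only [mem_filter, mem_range, Finset.mem_Ioc, Nat.gcd_one_right, and_true]
  omega

lemma Ik_set3 (k L M : ℕ) (h : ∀ t, Nat.gcd t L = 1 ↔ ¬ 3 ∣ t) :
    Ik k L M = ∑ t ∈ (Ioc 0 ((M-1)/2)).filter (fun t => ¬ 3 ∣ t), t ^ k := by
  unfold Ik
  apply Finset.sum_congr _ (fun _ _ => rfl)
  ext t
  simp only [mem_filter, mem_range, Finset.mem_Ioc, h t]
  omega

lemma sum_Ioc_id (K : ℕ) : 2 * ∑ t ∈ Ioc 0 K, t = K * (K+1) := by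
  induction K with
  | zero => simp
  | succ K ih =>
    rw [Finset.sum_Ioc_succ_top (Nat.zero_le _), Nat.mul_add, ih]
    ring

lemma filter_dvd_eq_image (K : ℕ) :
    (Ioc 0 K).filter (fun t => 3 ∣ t) = (Ioc 0 (K/3)).image (fun s => 3*s) := by
  ext x
  simp only [mem_filter, Finset.mem_Ioc, mem_image]
  constructor
  · rintro ⟨⟨h0, hK⟩, s, rfl⟩
    exact ⟨s, by omega, rfl⟩
  · rintro ⟨s, hs, rfl⟩
    exact ⟨by omega, ⟨s, rfl⟩⟩

lemma card3 (K : ℕ) : ((Ioc 0 K).filter (fun t => 3 ∣ t)).card = K/3 := by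
  rw [filter_dvd_eq_image, Finset.card_image_of_injective _ (fun a b h => by omega)]
  simp

lemma sum3 (K : ℕ) : ∑ t ∈ (Ioc 0 K).filter (fun t => 3 ∣ t), t = 3 * ∑ s ∈ Ioc 0 (K/3), s := by
  rw [filter_dvd_eq_image, Finset.sum_image (fun a _ b _ h => by omega), Finset.mul_sum]

lemma Ik0_1 (M : ℕ) : Ik 0 1 M = (M-1)/2 := by
  rw [Ik_set1]; simp

lemma Ik1_1 (M : ℕ) : 2 * Ik 1 1 M = ((M-1)/2) * ((M-1)/2 + 1) := by
  rw [Ik_set1]; simpa using sum_Ioc_id ((M-1)/2)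

lemma Ik0_3 (L M : ℕ) (h : ∀ t, Nat.gcd t L = 1 ↔ ¬ 3 ∣ t) :
    Ik 0 L M = (M-1)/2 - ((M-1)/2)/3 := by
  rw [Ik_set3 0 L M h]
  simp only [pow_zero, Finset.sum_const, smul_eq_mul, mul_one]
  have := Finset.card_filter_add_card_filter_not (s := Ioc 0 ((M-1)/2))
    (p := fun t => 3 ∣ t)
  have hc := card3 ((M-1)/2)
  simp only [Nat.card_Ioc, Nat.sub_zero] at this
  omega

lemma Ik1_3 (L M : ℕ) (h : ∀ t, Nat.gcd t L = 1 ↔ ¬ 3 ∣ t) :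
    2 * Ik 1 L M = ((M-1)/2) * ((M-1)/2 + 1) - 3 * (((M-1)/2/3) * ((M-1)/2/3 + 1)) := by
  rw [Ik_set3 1 L M h]
  simp only [pow_one]
  have hsplit := Finset.sum_filter_add_sum_filter_not (Ioc 0 ((M-1)/2)) (fun t => 3 ∣ t)
    (fun t => t)
  have h3 := sum3 ((M-1)/2)
  have hall := sum_Ioc_id ((M-1)/2)
  have hq := sum_Ioc_id ((M-1)/2/3)
  omega

lemma flip_sum (n : ℕ) (F : ℕ → ℕ) :
    ∑ a ∈ Ioo 0 n, F (n - a) = ∑ c ∈ Ioo 0 n, F c := by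
  apply Finset.sum_nbij' (i := fun a => n - a) (j := fun c => n - c) <;>
    simp (config := {contextual := true}) [Finset.mem_Ioo] <;> omega

lemma range_to_Ioo (n : ℕ) (F : ℕ → ℕ) (h : F 0 = 0) :
    ∑ c ∈ range n, F c = ∑ c ∈ Ioo 0 n, F c := by
  have he : Ioo 0 n = (range n).erase 0 := by ext x; simp; omega
  rw [he, Finset.sum_erase _ h]

lemma filter_mul3 (P : ℕ) :
    (Ioo 0 (3*P)).filter (fun a => 3 ∣ a) = (Ioo 0 P).image (fun b => 3*b) := by
  ext x
  simp only [mem_filter, Finset.mem_Ioo, mem_image]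
  constructor
  · rintro ⟨⟨h0, hP⟩, s, rfl⟩
    exact ⟨s, by omega, rfl⟩
  · rintro ⟨b, hb, rfl⟩
    exact ⟨by omega, ⟨b, rfl⟩⟩

lemma sum_mul3 (P : ℕ) (H : ℕ → ℕ) :
    ∑ a ∈ (Ioo 0 (3*P)).filter (fun a => 3 ∣ a), H a = ∑ b ∈ Ioo 0 P, H (3*b) := by
  rw [filter_mul3, Finset.sum_image]
  intro a _ b _ h; simp only at h; omega

lemma plumb (P : ℕ) (F G1 G3 : ℕ → ℕ)
    (h1 : ∀ a, 0 < a → a < 3*P → ¬ 3 ∣ a → F a = G1 (3*(3*P - a)))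
    (h3 : ∀ a, 0 < a → a < 3*P → 3 ∣ a → F a = G3 (3*(3*P - a)))
    (hG10 : G1 0 = 0) (hG30 : G3 0 = 0) :
    (∑ a ∈ Ioo 0 (3*P), F a) + ∑ c ∈ range P, G1 (9*c) =
      (∑ c ∈ range (3*P), G1 (3*c)) + ∑ c ∈ range P, G3 (9*c) := by
  have hsplitF := Finset.sum_filter_add_sum_filter_not (Ioo 0 (3*P)) (fun a => 3 ∣ a) F
  have hsplitG := Finset.sum_filter_add_sum_filter_not (Ioo 0 (3*P)) (fun a => 3 ∣ a)
    (fun a => G1 (3*(3*P - a)))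
  have hF3 : ∑ a ∈ (Ioo 0 (3*P)).filter (fun a => 3 ∣ a), F a = ∑ c ∈ range P, G3 (9*c) := by
    rw [sum_mul3]
    rw [range_to_Ioo P (fun c => G3 (9*c)) (by simpa using hG30)]
    rw [← flip_sum P (fun c => G3 (9*c))]
    apply Finset.sum_congr rfl
    intro b hb
    simp only [Finset.mem_Ioo] at hb
    rw [h3 (3*b) (by omega) (by omega) ⟨b, rfl⟩, show 3*(3*P - 3*b) = 9*(P - b) by omega]
  have hFn : ∑ a ∈ (Ioo 0 (3*P)).filter (fun a => ¬ 3 ∣ a), F a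
      = ∑ a ∈ (Ioo 0 (3*P)).filter (fun a => ¬ 3 ∣ a), G1 (3*(3*P - a)) := by
    apply Finset.sum_congr rfl
    intro a ha
    simp only [mem_filter, Finset.mem_Ioo] at ha
    exact h1 a ha.1.1 ha.1.2 ha.2
  have hG3p : ∑ a ∈ (Ioo 0 (3*P)).filter (fun a => 3 ∣ a), G1 (3*(3*P - a))
      = ∑ c ∈ range P, G1 (9*c) := by
    rw [sum_mul3 P (fun a => G1 (3*(3*P - a)))]
    rw [range_to_Ioo P (fun c => G1 (9*c)) (by simpa using hG10)]
    rw [← flip_sum P (fun c => G1 (9*c))]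
    apply Finset.sum_congr rfl
    intro b hb
    simp only [Finset.mem_Ioo] at hb
    rw [show 3*(3*P - 3*b) = 9*(P - b) by omega]
  have hGall : ∑ a ∈ Ioo 0 (3*P), G1 (3*(3*P - a)) = ∑ c ∈ range (3*P), G1 (3*c) := by
    rw [range_to_Ioo (3*P) (fun c => G1 (3*c)) (by simpa using hG10)]
    exact flip_sum (3*P) (fun c => G1 (3*c))
  omega

lemma T0A (d : ℕ) : ((∑ c ∈ range (2*d+1), (3*c-1)/2 : ℕ) : ℤ) = 3*d^2 := by
  induction d with
  | zero => norm_num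
  | succ d ih =>
    rw [show 2*(d+1)+1 = (2*d+1)+1+1 by ring, Finset.sum_range_succ, Finset.sum_range_succ,
      show (3*(2*d+1)-1)/2 = 3*d+1 from by omega,
      show (3*(2*d+1+1)-1)/2 = 3*d+2 from by omega]
    rw [Nat.cast_add, Nat.cast_add, ih]
    push_cast
    ring

lemma T0B (d : ℕ) : ((∑ c ∈ range (2*d+1), (9*c-1)/2 : ℕ) : ℤ) = 9*d^2+3*d := by
  induction d with
  | zero => norm_num
  | succ d ih =>
    rw [show 2*(d+1)+1 = (2*d+1)+1+1 by ring, Finset.sum_range_succ, Finset.sum_range_succ,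
      show (9*(2*d+1)-1)/2 = 9*d+4 from by omega,
      show (9*(2*d+1+1)-1)/2 = 9*d+8 from by omega]
    rw [Nat.cast_add, Nat.cast_add, ih]
    push_cast
    ring

lemma T0C (d : ℕ) :
    ((∑ c ∈ range (2*d+1), ((9*c-1)/2 - (9*c-1)/2/3) : ℕ) : ℤ) = 6*d^2+3*d := by
  induction d with
  | zero => norm_num
  | succ d ih =>
    rw [show 2*(d+1)+1 = (2*d+1)+1+1 by ring, Finset.sum_range_succ, Finset.sum_range_succ,
      show (9*(2*d+1)-1)/2 - (9*(2*d+1)-1)/2/3 = 6*d+3 from by omega,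
      show (9*(2*d+1+1)-1)/2 - (9*(2*d+1+1)-1)/2/3 = 6*d+6 from by omega]
    rw [Nat.cast_add, Nat.cast_add, ih]
    push_cast
    ring

lemma T1A (d : ℕ) :
    ((∑ c ∈ range (2*d+1), (3*c-1)/2 * ((3*c-1)/2 + 1) : ℕ) : ℤ) = 6*d^3+3*d^2-d := by
  induction d with
  | zero => norm_num
  | succ d ih =>
    rw [show 2*(d+1)+1 = (2*d+1)+1+1 by ring, Finset.sum_range_succ, Finset.sum_range_succ,
      show (3*(2*d+1)-1)/2 = 3*d+1 from by omega,
      show (3*(2*d+1+1)-1)/2 = 3*d+2 from by omega]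
    rw [Nat.cast_add, Nat.cast_add, ih]
    push_cast
    ring

lemma T1B (d : ℕ) :
    ((∑ c ∈ range (2*d+1), (9*c-1)/2 * ((9*c-1)/2 + 1) : ℕ) : ℤ) = 54*d^3+36*d^2+2*d := by
  induction d with
  | zero => norm_num
  | succ d ih =>
    rw [show 2*(d+1)+1 = (2*d+1)+1+1 by ring, Finset.sum_range_succ, Finset.sum_range_succ,
      show (9*(2*d+1)-1)/2 = 9*d+4 from by omega,
      show (9*(2*d+1+1)-1)/2 = 9*d+8 from by omega]
    rw [Nat.cast_add, Nat.cast_add, ih]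
    push_cast
    ring

lemma T1C (d : ℕ) :
    ((∑ c ∈ range (2*d+1),
      ((9*c-1)/2 * ((9*c-1)/2 + 1) - 3*((9*c-1)/2/3 * ((9*c-1)/2/3 + 1))) : ℕ) : ℤ)
      = 36*d^3+27*d^2+5*d := by
  induction d with
  | zero => norm_num
  | succ d ih =>
    rw [show 2*(d+1)+1 = (2*d+1)+1+1 by ring, Finset.sum_range_succ, Finset.sum_range_succ,
      show (9*(2*d+1)-1)/2 = 9*d+4 from by omega,
      show (9*(2*d+1+1)-1)/2 = 9*d+8 from by omega,
      show (9*d+4)/3 = 3*d+1 from by omega,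
      show (9*d+8)/3 = 3*d+2 from by omega]
    have e1 : (9*d+4) * ((9*d+4) + 1) - 3*((3*d+1) * ((3*d+1) + 1)) = 54*d^2+54*d+14 := by
      have : (9*d+4) * ((9*d+4) + 1) = 3*((3*d+1) * ((3*d+1) + 1)) + (54*d^2+54*d+14) := by ring
      omega
    have e2 : (9*d+8) * ((9*d+8) + 1) - 3*((3*d+2) * ((3*d+2) + 1)) = 54*d^2+108*d+54 := by
      have : (9*d+8) * ((9*d+8) + 1) = 3*((3*d+2) * ((3*d+2) + 1)) + (54*d^2+108*d+54) := by ring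
      omega
    rw [e1, e2]
    rw [Nat.cast_add, Nat.cast_add, ih]
    push_cast
    ring

end Aux

theorem stmt_11 (m : ℕ) (hm : 2 ≤ m) :
    tNum3 (3 ^ m) = 4 * 3 ^ (2 * m - 3) - 2 * 3 ^ (m - 2) ∧
    lNum3 (3 ^ m) = 2 * 3 ^ (3 * m - 4) := by
  obtain ⟨d, hd⟩ : ∃ d, 3^(m-2) = 2*d+1 := by
    obtain ⟨d, hd⟩ := (Odd.pow (n := m-2) (by decide : Odd 3))
    exact ⟨d, by omega⟩
  have hN : 3^m = 9 * 3^(m-2) := by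
    rw [show m = 2 + (m-2) by omega, pow_add]
    norm_num
  set P : ℕ := 3^(m-2) with hPdef
  have hP3 : 3 * P = 3^(m-1) := by
    rw [hPdef, show m-1 = (m-2)+1 by omega, pow_succ]
    ring
  have hN3 : 3^m / 3 = 3*P := by omega
  have hgcdNN : ∀ t, Nat.gcd t (3^m) = 1 ↔ ¬ 3 ∣ t :=
    gcd_iff_of (3^m) m (dvd_pow_self 3 (by omega)) dvd_rfl
  have hgcdM : ∀ t, Nat.gcd t (3*P) = 1 ↔ ¬ 3 ∣ t :=
    gcd_iff_of (3*P) m ⟨P, rfl⟩ (hP3 ▸ pow_dvd_pow 3 (by omega))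
  -- boundary values
  have hI0NN : Ik 0 (3^m) (3^m) = 6*d+3 := by
    rw [Ik0_3 _ _ hgcdNN]
    omega
  have hI1NN : ((Ik 1 (3^m) (3^m) : ℕ) : ℤ) * 2 = 54*d^2+54*d+14 := by
    have h := Ik1_3 (3^m) (3^m) hgcdNN
    rw [show (3^m-1)/2 = 9*d+4 from by omega, show (9*d+4)/3 = 3*d+1 from by omega] at h
    have e1 : (9*d+4) * ((9*d+4) + 1) = 3*((3*d+1) * ((3*d+1) + 1)) + (54*d^2+54*d+14) := by ring
    have h2 : 2 * Ik 1 (3^m) (3^m) = 54*d^2+54*d+14 := by omega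
    exact_mod_cast by omega
  have hI0M : Ik 0 (3^m/3) (3^m/3) = 2*d+1 := by
    rw [hN3, Ik0_3 _ _ hgcdM]
    omega
  have hI1M : ((Ik 1 (3^m/3) (3^m/3) : ℕ) : ℤ) * 2 = 6*d^2+6*d+2 := by
    rw [hN3]
    have h := Ik1_3 (3*P) (3*P) hgcdM
    rw [show (3*P-1)/2 = 3*d+1 from by omega, show (3*d+1)/3 = d from by omega] at h
    have e1 : (3*d+1) * ((3*d+1) + 1) = 3*(d * (d + 1)) + (6*d^2+6*d+2) := by ring
    have h2 : 2 * Ik 1 (3*P) (3*P) = 6*d^2+6*d+2 := by omega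
    exact_mod_cast by omega
  have hJ0 : Jk 0 (3^m/3) (3^m/3) = 0 := by
    rw [hN3]; exact Jk_zero _ _ _ ⟨P, rfl⟩ ⟨P, rfl⟩
  have hJ1 : Jk 1 (3^m/3) (3^m/3) = 0 := by
    rw [hN3]; exact Jk_zero _ _ _ ⟨P, rfl⟩ ⟨P, rfl⟩
  -- index set
  have hset : (Finset.range (3^m)).filter (fun a => 0 < a ∧ 3 * a < 3^m) = Ioo 0 (3*P) := by
    ext a
    simp only [mem_filter, mem_range, Finset.mem_Ioo]
    omega
  -- main sum k = 0
  have hsum0 : ((∑ a ∈ (Finset.range (3^m)).filter (fun a => 0 < a ∧ 3 * a < 3^m),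
      Ik 0 (Nat.gcd a (3^m)) (3^m - 3*a) : ℕ) : ℤ) = 24*d^2+18*d+3 := by
    rw [hset]
    have hp := plumb P (fun a => Ik 0 (Nat.gcd a (3^m)) (3^m - 3*a))
      (fun M => (M-1)/2) (fun M => (M-1)/2 - (M-1)/2/3)
      (by
        intro a h0 hlt h3a
        have hg : Nat.gcd a (3^m) = 1 :=
          ((Nat.prime_three.coprime_iff_not_dvd.mpr h3a).symm).pow_right m
        simp only [hg, Ik0_1]
        omega)
      (by
        intro a h0 hlt h3a
        have hcond : ∀ t, Nat.gcd t (Nat.gcd a (3^m)) = 1 ↔ ¬ 3 ∣ t :=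
          gcd_iff_of _ m (Nat.dvd_gcd h3a (dvd_pow_self 3 (by omega)))
            (Nat.gcd_dvd_right _ _)
        simp only [Ik0_3 _ _ hcond]
        omega)
      (by norm_num) (by norm_num)
    have hA : ((∑ c ∈ range (2*(3*d+1)+1), (3*c-1)/2 : ℕ) : ℤ) = 3*(3*(d:ℤ)+1)^2 := by
      rw [T0A (3*d+1)]; push_cast; ring
    have hB := T0B d
    have hC := T0C d
    rw [show 3*P = 2*(3*d+1)+1 from by omega] at hp ⊢
    rw [show P = 2*d+1 from by omega] at hp
    have hpz : ((∑ a ∈ Ioo 0 (2*(3*d+1)+1), Ik 0 (Nat.gcd a (3^m)) (3^m - 3*a) : ℕ) : ℤ)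
        + ((∑ c ∈ range (2*d+1), (9*c-1)/2 : ℕ) : ℤ)
        = ((∑ c ∈ range (2*(3*d+1)+1), (3*c-1)/2 : ℕ) : ℤ)
        + ((∑ c ∈ range (2*d+1), ((9*c-1)/2 - (9*c-1)/2/3) : ℕ) : ℤ) := by
      exact_mod_cast congrArg (Nat.cast (R := ℤ)) hp
    linear_combination hpz + hA + hC - hB
  -- main sum k = 1
  have hsum1 : 2 * ((∑ a ∈ (Finset.range (3^m)).filter (fun a => 0 < a ∧ 3 * a < 3^m),
      Ik 1 (Nat.gcd a (3^m)) (3^m - 3*a) : ℕ) : ℤ) = 144*d^3+180*d^2+72*d+8 := by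
    rw [hset]
    have hp := plumb P (fun a => 2 * Ik 1 (Nat.gcd a (3^m)) (3^m - 3*a))
      (fun M => (M-1)/2 * ((M-1)/2 + 1))
      (fun M => (M-1)/2 * ((M-1)/2 + 1) - 3*((M-1)/2/3 * ((M-1)/2/3 + 1)))
      (by
        intro a h0 hlt h3a
        have hg : Nat.gcd a (3^m) = 1 :=
          ((Nat.prime_three.coprime_iff_not_dvd.mpr h3a).symm).pow_right m
        simp only [hg, Ik1_1]
        rw [show 3^m - 3*a = 3*(3*P-a) from by omega])
      (by
        intro a h0 hlt h3a
        have hcond : ∀ t, Nat.gcd t (Nat.gcd a (3^m)) = 1 ↔ ¬ 3 ∣ t :=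
          gcd_iff_of _ m (Nat.dvd_gcd h3a (dvd_pow_self 3 (by omega)))
            (Nat.gcd_dvd_right _ _)
        simp only [Ik1_3 _ _ hcond]
        rw [show 3^m - 3*a = 3*(3*P-a) from by omega])
      (by norm_num) (by norm_num)
    rw [← Finset.mul_sum] at hp
    have hA : ((∑ c ∈ range (2*(3*d+1)+1), (3*c-1)/2 * ((3*c-1)/2 + 1) : ℕ) : ℤ)
        = 6*(3*(d:ℤ)+1)^3+3*(3*(d:ℤ)+1)^2-(3*(d:ℤ)+1) := by
      rw [T1A (3*d+1)]; push_cast; ring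
    have hB := T1B d
    have hC := T1C d
    rw [show 3*P = 2*(3*d+1)+1 from by omega] at hp ⊢
    rw [show P = 2*d+1 from by omega] at hp
    have hpz : 2 * ((∑ a ∈ Ioo 0 (2*(3*d+1)+1), Ik 1 (Nat.gcd a (3^m)) (3^m - 3*a) : ℕ) : ℤ)
        + ((∑ c ∈ range (2*d+1), (9*c-1)/2 * ((9*c-1)/2 + 1) : ℕ) : ℤ)
        = ((∑ c ∈ range (2*(3*d+1)+1), (3*c-1)/2 * ((3*c-1)/2 + 1) : ℕ) : ℤ)
        + ((∑ c ∈ range (2*d+1),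
            ((9*c-1)/2 * ((9*c-1)/2 + 1) - 3*((9*c-1)/2/3 * ((9*c-1)/2/3 + 1))) : ℕ) : ℤ) := by
      exact_mod_cast congrArg (Nat.cast (R := ℤ)) hp
    linear_combination hpz + hA + hC - hB
  -- power rewrites
  have hcast : ((3:ℤ))^(m-2) = 2*(d:ℤ)+1 := by
    have h := congrArg (Nat.cast (R := ℤ)) (hPdef ▸ hd)
    push_cast at h
    exact h
  have hpow1 : ((3:ℤ))^(2*m-3) = ((3:ℤ)^(m-2))^2*3 := by
    rw [show 2*m-3 = (m-2)*2+1 by omega, pow_succ, pow_mul]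
  have hpow2 : ((3:ℤ))^(3*m-4) = ((3:ℤ)^(m-2))^3*9 := by
    rw [show 3*m-4 = (m-2)*3+2 by omega, pow_add, pow_mul]
    norm_num
  have hI1NNv : ((Ik 1 (3^m) (3^m) : ℕ) : ℤ) = 27*d^2+27*d+7 := by linarith [hI1NN]
  have hI1Mv : ((Ik 1 (3^m/3) (3^m/3) : ℕ) : ℤ) = 3*d^2+3*d+1 := by linarith [hI1M]
  constructor
  · unfold tNum3
    rw [← Nat.cast_sum, hsum0, hI0NN, hI0M, hJ0, hpow1, hcast]
    push_cast
    ring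
  · unfold lNum3
    rw [← Nat.cast_sum, hsum1, hI1NNv, hI1Mv, hJ1, hpow2, hcast]
    push_cast
    ring
end

section
/- Let N = p^m where p > 3 is prime and m ≥ 1. Then t_N = (p^{2m} − p^{2m−2} − 2p^m + 2p^{m−1})/6 + c, where c = 0 if p ≡ 1 (mod 3), c = 1/3 if p ≡ 2 (mod 3) and m is odd, and c = −1/3 if p ≡ 2 (mod 3) and m is even. -/
open Finset

lemma Ik_card (L M : ℕ) :
    Ik 0 L M = ((Finset.Ioc 0 ((M-1)/2)).filter (fun t => Nat.gcd t L = 1)).card := by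
  have hset : (Finset.range M).filter (fun t => 0 < t ∧ 2 * t < M ∧ Nat.gcd t L = 1)
      = (Finset.Ioc 0 ((M-1)/2)).filter (fun t => Nat.gcd t L = 1) := by
    ext t
    simp only [mem_filter, mem_range, Finset.mem_Ioc]
    constructor
    · rintro ⟨h1, h2, h3, h4⟩; exact ⟨⟨h2, by omega⟩, h4⟩
    · rintro ⟨⟨h1, h2⟩, h3⟩; exact ⟨by omega, h1, by omega, h3⟩
  simp [Ik, hset]

-- coprime to a p-power L ↔ not divisible by p
lemma gcd_pow_iff_s12 {p : ℕ} (hp : p.Prime) {L : ℕ} {m : ℕ} (hL : L ∣ p ^ m) (hpL : p ∣ L)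
    (t : ℕ) : Nat.gcd t L = 1 ↔ ¬ p ∣ t := by
  constructor
  · intro h hdvd
    have : p ∣ Nat.gcd t L := Nat.dvd_gcd hdvd hpL
    rw [h] at this
    have h2 := Nat.eq_one_of_dvd_one this
    have h3 := hp.one_lt
    omega
  · intro h
    by_contra hne
    have hd : Nat.gcd t L ∣ p ^ m := (Nat.gcd_dvd_right t L).trans hL
    obtain ⟨i, hi, heq⟩ := (Nat.dvd_prime_pow hp).mp hd
    have hi0 : i ≠ 0 := by rintro rfl; simp at heq; exact hne heq
    have : p ∣ Nat.gcd t L := heq ▸ dvd_pow_self p hi0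
    exact h (this.trans (Nat.gcd_dvd_left t L))

lemma card_coprime {p : ℕ} (hp : p.Prime) {L m : ℕ} (hL : L ∣ p ^ m) (hpL : p ∣ L)
    (H : ℕ) :
    ((Finset.Ioc 0 H).filter (fun t => Nat.gcd t L = 1)).card + H / p = H := by
  have h1 : ((Finset.Ioc 0 H).filter (fun t => Nat.gcd t L = 1))
      = ((Finset.Ioc 0 H).filter (fun t => ¬ p ∣ t)) := by
    apply Finset.filter_congr; intro t _; simp [gcd_pow_iff_s12 hp hL hpL t]
  rw [h1, ← Nat.Ioc_filter_dvd_card_eq_div H p]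
  have := Finset.card_filter_add_card_filter_not (s := Finset.Ioc 0 H)
    (p := fun t => p ∣ t)
  have hcard : (Finset.Ioc 0 H).card = H := by simp
  omega

lemma divKey {p : ℕ} (hp : 0 < p) (K : ℕ) : (p * K - 1) / (2 * p) = (K - 1) / 2 := by
  rcases Nat.even_or_odd K with ⟨u, hu⟩ | ⟨u, hu⟩
  · subst hu
    cases u with
    | zero => simp
    | succ v =>
      have h1 : p * (v + 1 + (v + 1)) - 1 = (2 * p - 1) + 2 * p * v := by
        have e : p * (v + 1 + (v + 1)) = 2 * p + 2 * p * v := by ring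
        omega
      rw [h1, Nat.add_mul_div_left _ _ (by omega), Nat.div_eq_of_lt (by omega)]
      omega
  · subst hu
    have h1 : p * (2 * u + 1) - 1 = (p - 1) + 2 * p * u := by
      have e : p * (2 * u + 1) = p + 2 * p * u := by ring
      omega
    rw [h1, Nat.add_mul_div_left _ _ (by omega), Nat.div_eq_of_lt (by omega)]
    omega

lemma scale_lt {p : ℕ} (hp : 0 < p) (c b N' : ℕ) : c * (p * b) < p * N' ↔ c * b < N' := by
  rw [show c * (p * b) = p * (c * b) by ring, Nat.mul_lt_mul_left hp]

lemma mod3_scale {p : ℕ} (hp : p % 3 ≠ 0) (x : ℕ) : (p * x) % 3 = 0 ↔ x % 3 = 0 := by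
  rw [Nat.mul_mod]
  have h1 : p % 3 = 1 ∨ p % 3 = 2 := by omega
  have h2 : x % 3 < 3 := Nat.mod_lt _ (by omega)
  rcases h1 with h | h <;> rw [h] <;> omega

lemma cardR (c : ℕ) : ∀ H, ((Finset.Ioc 0 H).filter (fun t => (t + c) % 3 = 0)).card
    = (H + c % 3) / 3 := by
  intro H
  induction H with
  | zero => simp
  | succ n ih =>
    have hins : Finset.Ioc 0 (n + 1) = insert (n + 1) (Finset.Ioc 0 n) := by
      ext t; simp [Finset.mem_Ioc]; omega
    rw [hins, Finset.filter_insert]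
    by_cases h : (n + 1 + c) % 3 = 0
    · rw [if_pos h, Finset.card_insert_of_notMem (by simp), ih]
      omega
    · rw [if_neg h, ih]
      omega

lemma Jk_card (L M : ℕ) :
    Jk 0 L M = ((Finset.Ioc 0 ((M-1)/2)).filter
      (fun t => Nat.gcd t L = 1 ∧ (t + M) % 3 = 0)).card := by
  have hset : (Finset.range M).filter
      (fun t => 0 < t ∧ 2 * t < M ∧ Nat.gcd t L = 1 ∧ (t + M) % 3 = 0)
      = (Finset.Ioc 0 ((M-1)/2)).filter (fun t => Nat.gcd t L = 1 ∧ (t + M) % 3 = 0) := by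
    ext t
    simp only [mem_filter, mem_range, Finset.mem_Ioc]
    constructor
    · rintro ⟨h1, h2, h3, h4⟩; exact ⟨⟨h2, by omega⟩, h4⟩
    · rintro ⟨⟨h1, h2⟩, h3⟩; exact ⟨by omega, h1, by omega, h3⟩
  simp [Jk, hset]

lemma card_J_split {p : ℕ} (hp : p.Prime) {L m : ℕ} (hL : L ∣ p ^ m) (hpL : p ∣ L)
    (H c : ℕ) :
    ((Finset.Ioc 0 H).filter (fun t => Nat.gcd t L = 1 ∧ (t + c) % 3 = 0)).card
      + ((Finset.Ioc 0 H).filter (fun t => p ∣ t ∧ (t + c) % 3 = 0)).card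
      = ((Finset.Ioc 0 H).filter (fun t => (t + c) % 3 = 0)).card := by
  have h1 : ((Finset.Ioc 0 H).filter (fun t => Nat.gcd t L = 1 ∧ (t + c) % 3 = 0))
      = ((Finset.Ioc 0 H).filter (fun t => (t + c) % 3 = 0)).filter (fun t => ¬ p ∣ t) := by
    rw [Finset.filter_filter]
    apply Finset.filter_congr; intro t _
    simp [gcd_pow_iff_s12 hp hL hpL t, and_comm]
  have h2 : ((Finset.Ioc 0 H).filter (fun t => p ∣ t ∧ (t + c) % 3 = 0))
      = ((Finset.Ioc 0 H).filter (fun t => (t + c) % 3 = 0)).filter (fun t => p ∣ t) := by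
    rw [Finset.filter_filter]
    apply Finset.filter_congr; intro t _; simp [and_comm]
  rw [h1, h2]
  have := Finset.card_filter_add_card_filter_not
    (s := ((Finset.Ioc 0 H).filter (fun t => (t + c) % 3 = 0))) (p := fun t => p ∣ t)
  omega

lemma card_J_bij {p N' : ℕ} (hp : 0 < p) (hp3 : p % 3 ≠ 0) :
    ((Finset.Ioc 0 ((p * N' - 1)/2)).filter (fun t => p ∣ t ∧ (t + p * N') % 3 = 0)).card
      = ((Finset.Ioc 0 ((N' - 1)/2)).filter (fun s => (s + N') % 3 = 0)).card := by
  apply Finset.card_nbij' (i := fun t => t / p) (j := fun s => p * s)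
  · intro t ht
    simp only [Finset.mem_coe, Finset.mem_filter, Finset.mem_Ioc] at ht ⊢
    obtain ⟨⟨ht0, htH⟩, ⟨s, rfl⟩, hmod⟩ := ht
    rw [Nat.mul_div_cancel_left _ hp]
    have h2 : 2 * (p * s) < p * N' := by omega
    have h3 : 2 * s < N' := (scale_lt hp 2 s N').mp h2
    have h4 : (p * (s + N')) % 3 = 0 := by rw [mul_add]; exact hmod
    refine ⟨⟨?_, by omega⟩, (mod3_scale hp3 _).mp h4⟩
    rcases Nat.eq_zero_or_pos s with rfl | h
    · simp at ht0
    · exact h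
  · intro s hs
    simp only [Finset.mem_coe, Finset.mem_filter, Finset.mem_Ioc] at hs ⊢
    obtain ⟨⟨hs0, hsH⟩, hmod⟩ := hs
    have h2 : 2 * s < N' := by omega
    have h3 : 2 * (p * s) < p * N' := (scale_lt hp 2 s N').mpr h2
    refine ⟨⟨Nat.mul_pos hp hs0, by omega⟩, Dvd.intro s rfl, ?_⟩
    rw [← mul_add]
    exact (mod3_scale hp3 _).mpr hmod
  · intro t ht
    simp only [Finset.mem_coe, Finset.mem_filter, Finset.mem_Ioc] at ht
    exact Nat.mul_div_cancel' ht.2.1 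
  · intro s _
    exact Nat.mul_div_cancel_left _ hp

def SS (N : ℕ) : ℕ := ∑ a ∈ Finset.Ioc 0 ((N-1)/3), (N - 3*a - 1)/2

lemma SSval1 (n : ℕ) : SS (6*n+1) + 2*n = 3*(n*n) := by
  induction n with
  | zero => simp [SS]
  | succ n ih =>
    have hK0 : (6*n+1-1)/3 = 2*n := by omega
    rw [SS, hK0] at ih
    have hK : (6*(n+1)+1-1)/3 = (2*n+1)+1 := by omega
    rw [SS, hK, Finset.sum_Ioc_succ_top (by omega), Finset.sum_Ioc_succ_top (by omega)]
    have hterm : ∀ a ∈ Finset.Ioc 0 (2*n),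
        (6*(n+1)+1 - 3*a - 1)/2 = (6*n+1 - 3*a - 1)/2 + 3 := by
      intro a ha; simp only [Finset.mem_Ioc] at ha; omega
    rw [Finset.sum_congr rfl hterm, Finset.sum_add_distrib, Finset.sum_const,
      Nat.card_Ioc, smul_eq_mul]
    have e : (n+1)*(n+1) = n*n + 2*n + 1 := by ring
    omega

lemma SSval5 (n : ℕ) : SS (6*n+5) = 3*(n*n) + 2*n := by
  induction n with
  | zero => simp [SS]
  | succ n ih =>
    have hK0 : (6*n+5-1)/3 = 2*n+1 := by omega
    rw [SS, hK0] at ih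
    have hK : (6*(n+1)+5-1)/3 = (2*n+2)+1 := by omega
    rw [SS, hK, Finset.sum_Ioc_succ_top (by omega), Finset.sum_Ioc_succ_top (by omega)]
    have hterm : ∀ a ∈ Finset.Ioc 0 (2*n+1),
        (6*(n+1)+5 - 3*a - 1)/2 = (6*n+5 - 3*a - 1)/2 + 3 := by
      intro a ha; simp only [Finset.mem_Ioc] at ha; omega
    rw [Finset.sum_congr rfl hterm, Finset.sum_add_distrib, Finset.sum_const,
      Nat.card_Ioc, smul_eq_mul]
    have e : (n+1)*(n+1) = n*n + 2*n + 1 := by ring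
    omega

lemma sum_B_bij {p N' : ℕ} (hp : 0 < p) :
    ∑ a ∈ (Finset.Ioc 0 ((p * N' - 1)/3)).filter (fun a => p ∣ a), ((p * N' - 3*a - 1)/2)/p
      = SS N' := by
  rw [SS]
  apply Finset.sum_nbij' (i := fun a => a / p) (j := fun b => p * b)
  · intro a ha
    simp only [Finset.mem_filter, Finset.mem_Ioc] at ha ⊢
    obtain ⟨⟨ha0, haK⟩, b, rfl⟩ := ha
    rw [Nat.mul_div_cancel_left _ hp]
    have h2 : 3 * (p * b) < p * N' := by omega
    have h3 : 3 * b < N' := (scale_lt hp 3 b N').mp h2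
    refine ⟨?_, by omega⟩
    rcases Nat.eq_zero_or_pos b with rfl | h
    · simp at ha0
    · exact h
  · intro b hb
    simp only [Finset.mem_filter, Finset.mem_Ioc] at hb ⊢
    obtain ⟨hb0, hbK⟩ := hb
    have h2 : 3 * b < N' := by omega
    have h3 : 3 * (p * b) < p * N' := (scale_lt hp 3 b N').mpr h2
    exact ⟨⟨Nat.mul_pos hp hb0, by omega⟩, Dvd.intro b rfl⟩
  · intro a ha
    simp only [Finset.mem_filter, Finset.mem_Ioc] at ha
    exact Nat.mul_div_cancel' ha.2
  · intro b _
    exact Nat.mul_div_cancel_left _ hp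
  · intro a ha
    simp only [Finset.mem_filter, Finset.mem_Ioc] at ha
    obtain ⟨⟨ha0, haK⟩, b, rfl⟩ := ha
    rw [Nat.mul_div_cancel_left _ hp]
    have h2 : 3 * (p * b) < p * N' := by omega
    have h3 : 3 * b < N' := (scale_lt hp 3 b N').mp h2
    obtain ⟨c, hc⟩ : ∃ c, N' = 3*b + c := ⟨N' - 3*b, by omega⟩
    have e : p * N' = 3*(p*b) + p*c := by rw [hc]; ring
    have e2 : p * N' - 3*(p*b) - 1 = p*c - 1 := by omega
    have e3 : N' - 3*b - 1 = c - 1 := by omega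
    rw [e2, e3, Nat.div_div_eq_div_mul, divKey hp c]

lemma Ik_one (M : ℕ) : Ik 0 1 M = (M - 1)/2 := by
  rw [Ik_card]
  have : ((Finset.Ioc 0 ((M-1)/2)).filter (fun t => Nat.gcd t 1 = 1))
      = Finset.Ioc 0 ((M-1)/2) := by
    apply Finset.filter_true_of_mem; intro t _; exact Nat.gcd_one_right t
  rw [this, Nat.card_Ioc]
  omega

lemma sum_B {p m : ℕ} (hp : p.Prime) (hm1 : 1 ≤ m) :
    (∑ a ∈ (Finset.range (p^m)).filter (fun a => 0 < a ∧ 3*a < p^m),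
      Ik 0 (Nat.gcd a (p^m)) (p^m - 3*a)) + SS (p^(m-1)) = SS (p^m) := by
  have hp0 : 0 < p := hp.pos
  set N := p^m with hN
  set N' := p^(m-1) with hN'
  have hNN' : N = p * N' := by
    rw [hN, hN', ← pow_succ']
    congr 1; omega
  have hset : (Finset.range N).filter (fun a => 0 < a ∧ 3*a < N)
      = Finset.Ioc 0 ((N-1)/3) := by
    ext a; simp only [mem_filter, mem_range, Finset.mem_Ioc]; omega
  have hpt : ∀ a ∈ Finset.Ioc 0 ((N-1)/3),
      Ik 0 (Nat.gcd a N) (N - 3*a) + (if p ∣ a then ((N - 3*a - 1)/2)/p else 0)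
        = (N - 3*a - 1)/2 := by
    intro a ha
    by_cases h : p ∣ a
    · rw [if_pos h]
      have hpL : p ∣ Nat.gcd a N := Nat.dvd_gcd h (by rw [hN]; exact dvd_pow_self p (by omega))
      have hL : Nat.gcd a N ∣ p ^ m := by rw [hN] at *; exact Nat.gcd_dvd_right a _
      rw [Ik_card]
      exact card_coprime hp hL hpL _
    · rw [if_neg h]
      have hg : Nat.gcd a N = 1 := by
        rw [hN]
        have : Nat.Coprime a p := Nat.coprime_comm.mp (Nat.Prime.coprime_iff_not_dvd hp |>.mpr h)
        exact this.pow_right m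
      rw [hg, Ik_one]
      omega
  have hsum := Finset.sum_congr rfl hpt
  rw [Finset.sum_add_distrib] at hsum
  rw [hset]
  have hite : ∑ a ∈ Finset.Ioc 0 ((N-1)/3), (if p ∣ a then ((N - 3*a - 1)/2)/p else 0)
      = ∑ a ∈ (Finset.Ioc 0 ((N-1)/3)).filter (fun a => p ∣ a), ((N - 3*a - 1)/2)/p := by
    rw [Finset.sum_filter]
  have hbij := sum_B_bij (N' := N') hp0
  rw [← hNN'] at hbij
  have hSSN : ∑ a ∈ Finset.Ioc 0 ((N-1)/3), (N - 3*a - 1)/2 = SS N := by rw [SS]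
  omega

lemma powmod6_1 {p : ℕ} (hp : p % 6 = 1) : ∀ k, p ^ k % 6 = 1
  | 0 => by norm_num
  | k+1 => by
    rw [pow_succ, Nat.mul_mod, powmod6_1 hp k, hp]

lemma powmod6_5 {p : ℕ} (hp : p % 6 = 5) : ∀ k, p ^ k % 6 = if k % 2 = 0 then 1 else 5
  | 0 => by norm_num
  | k+1 => by
    rw [pow_succ, Nat.mul_mod, powmod6_5 hp k, hp]
    by_cases h : k % 2 = 0
    · rw [if_pos h, if_neg (by omega)]
    · rw [if_neg h, if_pos (by omega)]

set_option maxHeartbeats 1600000 in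
theorem stmt_12 (p m : ℕ) (hp : p.Prime) (hp3 : 3 < p) (hm : 1 ≤ m) :
    (tNum (p ^ m) : ℚ) =
      ((p : ℚ) ^ (2 * m) - (p : ℚ) ^ (2 * m - 2) - 2 * (p : ℚ) ^ m + 2 * (p : ℚ) ^ (m - 1)) / 6 +
        (if p % 3 = 1 then 0
         else if Odd m then (1 : ℚ) / 3 else -(1 : ℚ) / 3) := by
  have hp0 : 0 < p := hp.pos
  have hp2 : p % 2 = 1 := Nat.odd_iff.mp (hp.odd_of_ne_two (by omega))
  have hp3' : p % 3 ≠ 0 := by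
    intro h
    have := (Nat.prime_dvd_prime_iff_eq Nat.prime_three hp).mp (Nat.dvd_of_mod_eq_zero h)
    omega
  set N' := p ^ (m-1) with hN'
  set N := p ^ m with hN
  have hNN' : N = p * N' := by
    rw [hN, hN', ← pow_succ']; congr 1; omega
  have hpN : p ∣ N := by rw [hN]; exact dvd_pow_self p (by omega)
  have hN'pos : 0 < N' := pow_pos hp0 _
  have hNpos : 0 < N := pow_pos hp0 _
  have hdiv : ((N - 1)/2)/p = (N' - 1)/2 := by
    rw [hNN', Nat.div_div_eq_div_mul]
    exact divKey hp0 N'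
  have hA : Ik 0 N N + (N' - 1)/2 = (N - 1)/2 := by
    rw [Ik_card, ← hdiv]
    exact card_coprime hp (m := m) (by rw [hN]) hpN _
  have hR := cardR N ((N-1)/2)
  have hR' := cardR N' ((N'-1)/2)
  have hbijC := card_J_bij (p := p) (N' := N') hp0 hp3'
  rw [← hNN'] at hbijC
  have hsplitC := card_J_split hp (L := N) (m := m) (by rw [hN]) hpN ((N-1)/2) N
  have hC : Jk 0 N N + ((N'-1)/2 + N'%3)/3 = ((N-1)/2 + N%3)/3 := by
    rw [Jk_card]; omega
  have hB := sum_B hp hm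
  rw [← hN, ← hN'] at hB
  have htot : tNum N + ((N'-1)/2 + 2 * SS N' + ((N'-1)/2 + N'%3)/3)
      = (N-1)/2 + 2 * SS N + ((N-1)/2 + N%3)/3 := by
    rw [tNum]
    omega
  have hyN : ((N : ℕ) : ℚ) = (p:ℚ)^m := by rw [hN]; push_cast; ring
  have hxN : ((N' : ℕ) : ℚ) = (p:ℚ)^(m-1) := by rw [hN']; push_cast; ring
  have hy2 : (p:ℚ)^(2*m) = ((p:ℚ)^m)^2 := by rw [two_mul, pow_add, sq]
  have hx2 : (p:ℚ)^(2*m-2) = ((p:ℚ)^(m-1))^2 := by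
    rw [show 2*m-2 = (m-1)+(m-1) by omega, pow_add, sq]
  rcases (by omega : p % 3 = 1 ∨ p % 3 = 2) with h3 | h3
  · have hp6 : p % 6 = 1 := by omega
    have hN6 : N % 6 = 1 := by rw [hN]; exact powmod6_1 hp6 m
    have hN'6 : N' % 6 = 1 := by rw [hN']; exact powmod6_1 hp6 (m-1)
    obtain ⟨n, hn⟩ : ∃ n, N = 6*n+1 := ⟨N/6, by omega⟩
    obtain ⟨n', hn'⟩ : ∃ n', N' = 6*n'+1 := ⟨N'/6, by omega⟩
    have hSS : SS N + 2*n = 3*(n*n) := by rw [hn]; exact SSval1 n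
    have hSS' : SS N' + 2*n' = 3*(n'*n') := by rw [hn']; exact SSval1 n'
    have e1 : tNum N + 6*(n'*n') = 6*(n*n) := by omega
    have e2 : (tNum N : ℚ) = 6*(n:ℚ)*(n:ℚ) - 6*(n':ℚ)*(n':ℚ) := by
      have h := congrArg (Nat.cast : ℕ → ℚ) e1
      push_cast at h
      linarith
    have e3 : 6*(n:ℚ)+1 = (p:ℚ)^m := by
      have : ((6*n+1 : ℕ) : ℚ) = (p:ℚ)^m := by rw [← hn]; exact hyN
      push_cast at this; linarith
    have e4 : 6*(n':ℚ)+1 = (p:ℚ)^(m-1) := by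
      have : ((6*n'+1 : ℕ) : ℚ) = (p:ℚ)^(m-1) := by rw [← hn']; exact hxN
      push_cast at this; linarith
    rw [if_pos h3, e2, hy2, hx2, ← e3, ← e4]
    ring
  · have hp6 : p % 6 = 5 := by omega
    rw [if_neg (by omega)]
    have hNm := powmod6_5 hp6 m
    have hNm' := powmod6_5 hp6 (m-1)
    by_cases hOm : Odd m
    · have hm2 : m % 2 = 1 := Nat.odd_iff.mp hOm
      rw [if_pos hOm]
      have hN6 : N % 6 = 5 := by rw [hN, hNm, if_neg (by omega)]
      have hN'6 : N' % 6 = 1 := by rw [hN', hNm', if_pos (by omega)]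
      obtain ⟨n, hn⟩ : ∃ n, N = 6*n+5 := ⟨N/6, by omega⟩
      obtain ⟨n', hn'⟩ : ∃ n', N' = 6*n'+1 := ⟨N'/6, by omega⟩
      have hSS : SS N = 3*(n*n) + 2*n := by rw [hn]; exact SSval5 n
      have hSS' : SS N' + 2*n' = 3*(n'*n') := by rw [hn']; exact SSval1 n'
      have e1 : tNum N + 6*(n'*n') = 6*(n*n) + 8*n + 3 := by omega
      have e2 : (tNum N : ℚ) = 6*(n:ℚ)*(n:ℚ) + 8*(n:ℚ) + 3 - 6*(n':ℚ)*(n':ℚ) := by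
        have h := congrArg (Nat.cast : ℕ → ℚ) e1
        push_cast at h
        linarith
      have e3 : 6*(n:ℚ)+5 = (p:ℚ)^m := by
        have : ((6*n+5 : ℕ) : ℚ) = (p:ℚ)^m := by rw [← hn]; exact hyN
        push_cast at this; linarith
      have e4 : 6*(n':ℚ)+1 = (p:ℚ)^(m-1) := by
        have : ((6*n'+1 : ℕ) : ℚ) = (p:ℚ)^(m-1) := by rw [← hn']; exact hxN
        push_cast at this; linarith
      rw [e2, hy2, hx2, ← e3, ← e4]
      ring
    · have hm2 : m % 2 = 0 := by
        rcases Nat.even_or_odd m with h | h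
        · exact Nat.even_iff.mp h
        · exact absurd h hOm
      rw [if_neg hOm]
      have hN6 : N % 6 = 1 := by rw [hN, hNm, if_pos (by omega)]
      have hN'6 : N' % 6 = 5 := by rw [hN', hNm', if_neg (by omega)]
      obtain ⟨n, hn⟩ : ∃ n, N = 6*n+1 := ⟨N/6, by omega⟩
      obtain ⟨n', hn'⟩ : ∃ n', N' = 6*n'+5 := ⟨N'/6, by omega⟩
      have hSS : SS N + 2*n = 3*(n*n) := by rw [hn]; exact SSval1 n
      have hSS' : SS N' = 3*(n'*n') + 2*n' := by rw [hn']; exact SSval5 n'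
      have e1 : tNum N + (6*(n'*n') + 8*n' + 3) = 6*(n*n) := by omega
      have e2 : (tNum N : ℚ) = 6*(n:ℚ)*(n:ℚ) - 6*(n':ℚ)*(n':ℚ) - 8*(n':ℚ) - 3 := by
        have h := congrArg (Nat.cast : ℕ → ℚ) e1
        push_cast at h
        linarith
      have e3 : 6*(n:ℚ)+1 = (p:ℚ)^m := by
        have : ((6*n+1 : ℕ) : ℚ) = (p:ℚ)^m := by rw [← hn]; exact hyN
        push_cast at this; linarith
      have e4 : 6*(n':ℚ)+5 = (p:ℚ)^(m-1) := by
        have : ((6*n'+5 : ℕ) : ℚ) = (p:ℚ)^(m-1) := by rw [← hn']; exact hxN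
        push_cast at this; linarith
      rw [e2, hy2, hx2, ← e3, ← e4]
      ring
end

section
/- Let N = p^m where p > 3 is prime and m ≥ 1. Then ℓ_N = (p^{3m} − p^{3m−2})/36 + c, where c = (p−1)/9 if p ≡ 1 (mod 3), c = (p+1)/9 if p ≡ 2 (mod 3) and m odd, and c = −(p+1)/9 if p ≡ 2 (mod 3) and m even. -/
open Finset

/-! ### Auxiliary definitions -/

def Fs (n : ℕ) : ℕ := ∑ t ∈ (Finset.range n).filter (fun t => 0 < t ∧ 2 * t < n), t

def Jps (n : ℕ) : ℕ :=
  ∑ t ∈ (Finset.range n).filter (fun t => 0 < t ∧ 2 * t < n ∧ (t + n) % 3 = 0), t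

def As (n : ℕ) : ℕ :=
  ∑ a ∈ (Finset.range n).filter (fun a => 0 < a ∧ 3 * a < n), Fs (n - 3 * a)

def Gs (p n : ℕ) : ℕ :=
  ∑ t ∈ (Finset.range n).filter (fun t => 0 < t ∧ 2 * t < n ∧ ¬ p ∣ t), t

def JGs (p n : ℕ) : ℕ :=
  ∑ t ∈ (Finset.range n).filter
    (fun t => 0 < t ∧ 2 * t < n ∧ ¬ p ∣ t ∧ (t + n) % 3 = 0), t

/-! ### Reindexing helper -/

lemma sum_bijk {S T : Finset ℕ} {f f' : ℕ → ℕ} (g e : ℕ → ℕ)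
    (hg : ∀ j ∈ T, g j ∈ S) (he : ∀ t ∈ S, e t ∈ T ∧ g (e t) = t)
    (hge : ∀ j ∈ T, e (g j) = j) (hf : ∀ j ∈ T, f (g j) = f' j) :
    ∑ t ∈ S, f t = ∑ j ∈ T, f' j := by
  refine Finset.sum_nbij' e g (fun a ha => (he a ha).1) hg (fun a ha => (he a ha).2) hge ?_
  intro a ha
  conv_lhs => rw [← (he a ha).2]
  exact hf _ ((he a ha).1)

/-! ### Gauss-type evaluation of `Fs` -/

lemma two_F {n h : ℕ} (hn : n = 2 * h + 1 ∨ n = 2 * h + 2) : 2 * Fs n = h * (h + 1) := by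
  have hset : (Finset.range n).filter (fun t => 0 < t ∧ 2 * t < n) = Finset.Ico 1 (h + 1) := by
    ext t
    simp only [Finset.mem_filter, Finset.mem_range, Finset.mem_Ico]
    omega
  have hsum : ∑ t ∈ Finset.Ico 1 (h + 1), t = ∑ t ∈ Finset.range (h + 1), t := by
    rw [Finset.range_eq_Ico, ← Finset.sum_Ico_consecutive _ (Nat.zero_le 1) (by omega)]
    simp
  rw [Fs, hset, hsum, mul_comm, Finset.sum_range_id_mul_two]
  simp [Nat.add_sub_cancel, mul_comm]

/-! ### Polynomial sum evaluations over ℚ -/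

lemma sq1 (k : ℕ) :
    ∑ j ∈ Finset.range k, ((3 * (j : ℚ) + 1) * (3 * j + 2) + 3 * j * (3 * j + 1)) =
      6 * (k : ℚ) ^ 3 - 3 * k ^ 2 - k := by
  induction k with
  | zero => simp
  | succ k ih => rw [Finset.sum_range_succ, ih]; push_cast; ring

lemma sq5a (k : ℕ) :
    ∑ j ∈ Finset.range k, (3 * (j : ℚ)) * (3 * j + 1) = 3 * (k : ℚ) ^ 3 - 3 * k ^ 2 := by
  induction k with
  | zero => simp
  | succ k ih => rw [Finset.sum_range_succ, ih]; push_cast; ring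

lemma sq5b (k : ℕ) :
    ∑ j ∈ Finset.range k, ((3 * (j : ℚ) + 2) * (3 * j + 3)) = 3 * (k : ℚ) ^ 3 + 3 * k ^ 2 := by
  induction k with
  | zero => simp
  | succ k ih => rw [Finset.sum_range_succ, ih]; push_cast; ring

lemma sJ1 (k : ℕ) :
    ∑ j ∈ Finset.range k, (3 * (j : ℚ) + 2) = (3 * (k : ℚ) ^ 2 + k) / 2 := by
  induction k with
  | zero => simp
  | succ k ih => rw [Finset.sum_range_succ, ih]; push_cast; ring

lemma sJ5 (k : ℕ) :
    ∑ j ∈ Finset.range k, (3 * (j : ℚ) + 1) = (3 * (k : ℚ) ^ 2 - k) / 2 := by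
  induction k with
  | zero => simp
  | succ k ih => rw [Finset.sum_range_succ, ih]; push_cast; ring

/-! ### Values of `Fs` -/

lemma vF1 (k : ℕ) : (Fs (6 * k + 1) : ℚ) = (9 * (k : ℚ) ^ 2 + 3 * k) / 2 := by
  have h := two_F (n := 6 * k + 1) (h := 3 * k) (by omega)
  have h2 : ((2 * Fs (6 * k + 1) : ℕ) : ℚ) = ((3 * k * (3 * k + 1) : ℕ) : ℚ) := by rw [h]
  push_cast at h2
  linarith

lemma vF5 (k : ℕ) : (Fs (6 * k + 5) : ℚ) = (9 * (k : ℚ) ^ 2 + 15 * k + 6) / 2 := by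
  have h := two_F (n := 6 * k + 5) (h := 3 * k + 2) (by omega)
  have h2 : ((2 * Fs (6 * k + 5) : ℕ) : ℚ) = (((3 * k + 2) * (3 * k + 3) : ℕ) : ℚ) := by rw [h]
  push_cast at h2
  linarith

/-! ### Values of `Jps` -/

lemma Jps1 (k : ℕ) : Jps (6 * k + 1) = ∑ j ∈ Finset.range k, (3 * j + 2) := by
  refine sum_bijk (fun j => 3 * j + 2) (fun t => t / 3) ?_ ?_ ?_ ?_ <;>
    intro x hx <;> simp only [Finset.mem_filter, Finset.mem_range] at hx ⊢ <;> omega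

lemma Jps5 (k : ℕ) : Jps (6 * k + 5) = ∑ j ∈ Finset.range (k + 1), (3 * j + 1) := by
  refine sum_bijk (fun j => 3 * j + 1) (fun t => t / 3) ?_ ?_ ?_ ?_ <;>
    intro x hx <;> simp only [Finset.mem_filter, Finset.mem_range] at hx ⊢ <;> omega

lemma vJ1 (k : ℕ) : (Jps (6 * k + 1) : ℚ) = (3 * (k : ℚ) ^ 2 + k) / 2 := by
  have := congrArg (fun x : ℕ => (x : ℚ)) (Jps1 k)
  push_cast at this
  rw [this, sJ1]

lemma vJ5 (k : ℕ) : (Jps (6 * k + 5) : ℚ) = (3 * (k : ℚ) ^ 2 + 5 * k + 2) / 2 := by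
  have := congrArg (fun x : ℕ => (x : ℚ)) (Jps5 k)
  push_cast at this
  rw [this, sJ5]
  push_cast
  ring

/-! ### Values of `As` -/

lemma As_split (n : ℕ) :
    As n = (∑ a ∈ ((Finset.range n).filter (fun a => 0 < a ∧ 3 * a < n)).filter
        (fun a => a % 2 = 1), Fs (n - 3 * a)) +
      ∑ a ∈ ((Finset.range n).filter (fun a => 0 < a ∧ 3 * a < n)).filter
        (fun a => ¬ a % 2 = 1), Fs (n - 3 * a) := by
  rw [As, ← Finset.sum_filter_add_sum_filter_not _ (fun a => a % 2 = 1)]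

lemma As1 (k : ℕ) : As (6 * k + 1) =
    (∑ j ∈ Finset.range k, Fs (6 * j + 4)) + ∑ j ∈ Finset.range k, Fs (6 * j + 1) := by
  rw [As_split]
  congr 1
  · refine sum_bijk (fun j => 2 * (k - 1 - j) + 1) (fun a => k - (a + 1) / 2) ?_ ?_ ?_ ?_ <;>
      intro x hx <;>
      simp only [Finset.mem_filter, Finset.mem_range] at hx ⊢
    · omega
    · omega
    · omega
    · congr 1; omega
  · refine sum_bijk (fun j => 2 * (k - j)) (fun a => k - a / 2) ?_ ?_ ?_ ?_ <;>
      intro x hx <;>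
      simp only [Finset.mem_filter, Finset.mem_range] at hx ⊢
    · omega
    · omega
    · omega
    · congr 1; omega

lemma As5 (k : ℕ) : As (6 * k + 5) =
    (∑ j ∈ Finset.range (k + 1), Fs (6 * j + 2)) + ∑ j ∈ Finset.range k, Fs (6 * j + 5) := by
  rw [As_split]
  congr 1
  · refine sum_bijk (fun j => 2 * (k - j) + 1) (fun a => k - (a - 1) / 2) ?_ ?_ ?_ ?_ <;>
      intro x hx <;>
      simp only [Finset.mem_filter, Finset.mem_range] at hx ⊢
    · omega
    · omega
    · omega
    · congr 1; omega
  · refine sum_bijk (fun j => 2 * (k - j)) (fun a => k - a / 2) ?_ ?_ ?_ ?_ <;>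
      intro x hx <;>
      simp only [Finset.mem_filter, Finset.mem_range] at hx ⊢
    · omega
    · omega
    · omega
    · congr 1; omega

lemma vA1 (k : ℕ) : (As (6 * k + 1) : ℚ) = (6 * (k : ℚ) ^ 3 - 3 * k ^ 2 - k) / 2 := by
  have h := congrArg (fun x : ℕ => (x : ℚ)) (As1 k)
  push_cast at h
  rw [h]
  have e1 : ∀ j ∈ Finset.range k, (Fs (6 * j + 4) : ℚ) = (3 * (j : ℚ) + 1) * (3 * j + 2) / 2 := by
    intro j _
    have h := two_F (n := 6 * j + 4) (h := 3 * j + 1) (by omega)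
    have h2 : ((2 * Fs (6 * j + 4) : ℕ) : ℚ) = (((3 * j + 1) * (3 * j + 2) : ℕ) : ℚ) := by rw [h]
    push_cast at h2
    linarith
  have e2 : ∀ j ∈ Finset.range k, (Fs (6 * j + 1) : ℚ) = 3 * (j : ℚ) * (3 * j + 1) / 2 := by
    intro j _
    have h := two_F (n := 6 * j + 1) (h := 3 * j) (by omega)
    have h2 : ((2 * Fs (6 * j + 1) : ℕ) : ℚ) = ((3 * j * (3 * j + 1) : ℕ) : ℚ) := by rw [h]
    push_cast at h2
    linarith
  rw [Finset.sum_congr rfl e1, Finset.sum_congr rfl e2, ← Finset.sum_div, ← Finset.sum_div,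
    ← add_div, ← Finset.sum_add_distrib, sq1]

lemma vA5 (k : ℕ) : (As (6 * k + 5) : ℚ) = (6 * (k : ℚ) ^ 3 + 9 * k ^ 2 + 3 * k) / 2 := by
  have h := congrArg (fun x : ℕ => (x : ℚ)) (As5 k)
  push_cast at h
  rw [h]
  have e1 : ∀ j ∈ Finset.range (k + 1),
      (Fs (6 * j + 2) : ℚ) = 3 * (j : ℚ) * (3 * j + 1) / 2 := by
    intro j _
    have h := two_F (n := 6 * j + 2) (h := 3 * j) (by omega)
    have h2 : ((2 * Fs (6 * j + 2) : ℕ) : ℚ) = ((3 * j * (3 * j + 1) : ℕ) : ℚ) := by rw [h]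
    push_cast at h2
    linarith
  have e2 : ∀ j ∈ Finset.range k, (Fs (6 * j + 5) : ℚ) = (3 * (j : ℚ) + 2) * (3 * j + 3) / 2 := by
    intro j _
    have h := two_F (n := 6 * j + 5) (h := 3 * j + 2) (by omega)
    have h2 : ((2 * Fs (6 * j + 5) : ℕ) : ℚ) = (((3 * j + 2) * (3 * j + 3) : ℕ) : ℚ) := by rw [h]
    push_cast at h2
    linarith
  rw [Finset.sum_congr rfl e1, Finset.sum_congr rfl e2]
  have ha : ∑ j ∈ Finset.range (k + 1), (3 * (j : ℚ)) * (3 * j + 1) / 2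
      = (3 * ((k : ℚ) + 1) ^ 3 - 3 * ((k : ℚ) + 1) ^ 2) / 2 := by
    rw [← Finset.sum_div]
    have := sq5a (k + 1)
    push_cast at this
    rw [this]
  have hb : ∑ j ∈ Finset.range k, (3 * (j : ℚ) + 2) * (3 * j + 3) / 2
      = (3 * (k : ℚ) ^ 3 + 3 * k ^ 2) / 2 := by
    rw [← Finset.sum_div, sq5b]
  have ha' : ∑ j ∈ Finset.range (k + 1), 3 * (j : ℚ) * (3 * j + 1) / 2
      = (3 * ((k : ℚ) + 1) ^ 3 - 3 * ((k : ℚ) + 1) ^ 2) / 2 := by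
    rw [← ha]
  rw [ha', hb]
  ring

/-! ### Multiplicative helpers -/

lemma mlt {p a b : ℕ} (hp : 0 < p) (h : a < b) : p * a < p * b := by nlinarith

lemma mod3_mul {p : ℕ} (h3 : ¬ 3 ∣ p) (x : ℕ) : (p * x) % 3 = 0 ↔ x % 3 = 0 := by
  have := (Nat.prime_three.dvd_mul (m := p) (n := x))
  omega

lemma Ik_one_s13 (n : ℕ) : Ik 1 1 n = Fs n := by
  rw [Ik, Fs]
  refine Finset.sum_congr (Finset.filter_congr fun t _ => ?_) (fun t _ => pow_one t)
  simp [Nat.gcd_one_right]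

lemma gcd_iff_not_dvd {p m t : ℕ} (hp : p.Prime) (hm : 1 ≤ m) :
    Nat.gcd t (p ^ m) = 1 ↔ ¬ p ∣ t := by
  have h1 : Nat.Coprime t (p ^ m) ↔ Nat.Coprime t p := Nat.coprime_pow_right_iff hm t p
  have h2 : Nat.Coprime p t ↔ ¬ p ∣ t := hp.coprime_iff_not_dvd
  rw [Nat.coprime_comm] at h2
  exact h1.trans h2

lemma Ik_eq_Gs {p m : ℕ} (n : ℕ) (hp : p.Prime) (hm : 1 ≤ m) : Ik 1 (p ^ m) n = Gs p n := by
  rw [Ik, Gs]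
  refine Finset.sum_congr (Finset.filter_congr fun t _ => ?_) (fun t _ => pow_one t)
  have := gcd_iff_not_dvd (t := t) hp hm
  tauto

lemma Jk_eq_JGs {p m : ℕ} (n : ℕ) (hp : p.Prime) (hm : 1 ≤ m) : Jk 1 (p ^ m) n = JGs p n := by
  rw [Jk, JGs]
  refine Finset.sum_congr (Finset.filter_congr fun t _ => ?_) (fun t _ => pow_one t)
  have := gcd_iff_not_dvd (t := t) hp hm
  tauto

lemma Ik_gcd {p m a : ℕ} (n : ℕ) (hp : p.Prime) (hm : 1 ≤ m) (hpa : p ∣ a) :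
    Ik 1 (Nat.gcd a (p ^ m)) n = Gs p n := by
  rw [Ik, Gs]
  refine Finset.sum_congr (Finset.filter_congr fun t _ => ?_) (fun t _ => pow_one t)
  have hg1 : p ∣ Nat.gcd a (p ^ m) :=
    Nat.dvd_gcd hpa (dvd_pow_self p (by omega : m ≠ 0))
  have hg2 : Nat.gcd a (p ^ m) ∣ p ^ m := Nat.gcd_dvd_right a (p ^ m)
  have key : Nat.gcd t (Nat.gcd a (p ^ m)) = 1 ↔ ¬ p ∣ t := by
    constructor
    · intro h hdvd
      have hc : Nat.Coprime t (Nat.gcd a (p ^ m)) := h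
      have : Nat.Coprime t p := Nat.Coprime.coprime_dvd_right hg1 hc
      rw [Nat.coprime_comm] at this
      exact (hp.coprime_iff_not_dvd.mp this) hdvd
    · intro h
      have hc : Nat.Coprime p t := hp.coprime_iff_not_dvd.mpr h
      rw [Nat.coprime_comm] at hc
      have : Nat.Coprime t (p ^ m) := Nat.Coprime.pow_right m hc
      exact Nat.Coprime.coprime_dvd_right hg2 this
  tauto

/-! ### Splitting off multiples of p -/

lemma mult_part (p μ : ℕ) (hp : 0 < p) :
    ∑ t ∈ ((Finset.range (p * μ)).filter (fun t => 0 < t ∧ 2 * t < p * μ)).filter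
      (fun t => p ∣ t), t = p * Fs μ := by
  rw [Fs, Finset.mul_sum]
  refine sum_bijk (fun s => p * s) (fun t => t / p) ?_ ?_ ?_ (fun j _ => rfl)
  · intro s hs
    simp only [Finset.mem_filter, Finset.mem_range] at hs ⊢
    obtain ⟨hsr, hs0, hs2⟩ := hs
    have h1 : p * s < p * μ := mlt hp hsr
    have h2 : 2 * (p * s) < p * μ := by
      rw [show 2 * (p * s) = p * (2 * s) by ring]; exact mlt hp hs2
    exact ⟨⟨by omega, Nat.mul_pos hp hs0, h2⟩, dvd_mul_right p s⟩
  · intro t ht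
    simp only [Finset.mem_filter, Finset.mem_range] at ht ⊢
    obtain ⟨⟨htr, ht0, ht2⟩, s, rfl⟩ := ht
    have hdiv : p * s / p = s := Nat.mul_div_cancel_left s hp
    have h2 : 2 * s < μ := by
      refine Nat.lt_of_mul_lt_mul_left (a := p) ?_
      calc p * (2 * s) = 2 * (p * s) := by ring
        _ < p * μ := ht2
    refine ⟨⟨?_, ?_, ?_⟩, ?_⟩ <;> rw [hdiv]
    · omega
    · rcases Nat.eq_zero_or_pos s with rfl | h
      · omega
      · exact h
    · exact h2
  · intro s _
    exact Nat.mul_div_cancel_left s hp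

lemma Gp_add (p μ : ℕ) (hp : 0 < p) : Gs p (p * μ) + p * Fs μ = Fs (p * μ) := by
  have hsplit := Finset.sum_filter_add_sum_filter_not
    ((Finset.range (p * μ)).filter (fun t => 0 < t ∧ 2 * t < p * μ)) (fun t => p ∣ t)
    (fun t => t)
  rw [mult_part p μ hp] at hsplit
  have h2 : ∑ t ∈ ((Finset.range (p * μ)).filter (fun t => 0 < t ∧ 2 * t < p * μ)).filter
      (fun t => ¬ p ∣ t), t = Gs p (p * μ) := by
    rw [Gs]
    congr 1
    rw [Finset.filter_filter]
    exact Finset.filter_congr fun t _ => by tauto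
  rw [h2] at hsplit
  rw [add_comm]
  exact hsplit

lemma mult_partJ (p μ : ℕ) (hp : 0 < p) (h3 : ¬ 3 ∣ p) :
    ∑ t ∈ ((Finset.range (p * μ)).filter
        (fun t => 0 < t ∧ 2 * t < p * μ ∧ (t + p * μ) % 3 = 0)).filter
      (fun t => p ∣ t), t = p * Jps μ := by
  rw [Jps, Finset.mul_sum]
  refine sum_bijk (fun s => p * s) (fun t => t / p) ?_ ?_ ?_ (fun j _ => rfl)
  · intro s hs
    simp only [Finset.mem_filter, Finset.mem_range] at hs ⊢
    obtain ⟨hsr, hs0, hs2, hs3⟩ := hs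
    have h1 : p * s < p * μ := mlt hp hsr
    have h2 : 2 * (p * s) < p * μ := by
      rw [show 2 * (p * s) = p * (2 * s) by ring]; exact mlt hp hs2
    have h4 : (p * s + p * μ) % 3 = 0 := by
      rw [← Nat.mul_add]
      exact (mod3_mul h3 (s + μ)).mpr hs3
    exact ⟨⟨by omega, Nat.mul_pos hp hs0, h2, h4⟩, dvd_mul_right p s⟩
  · intro t ht
    simp only [Finset.mem_filter, Finset.mem_range] at ht ⊢
    obtain ⟨⟨htr, ht0, ht2, ht3⟩, s, rfl⟩ := ht
    have hdiv : p * s / p = s := Nat.mul_div_cancel_left s hp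
    have h2 : 2 * s < μ := by
      refine Nat.lt_of_mul_lt_mul_left (a := p) ?_
      calc p * (2 * s) = 2 * (p * s) := by ring
        _ < p * μ := ht2
    have h4 : (s + μ) % 3 = 0 := by
      rw [← Nat.mul_add] at ht3
      exact (mod3_mul h3 (s + μ)).mp ht3
    refine ⟨⟨?_, ?_, ?_, ?_⟩, ?_⟩ <;> rw [hdiv]
    · omega
    · rcases Nat.eq_zero_or_pos s with rfl | h
      · omega
      · exact h
    · exact h2
    · exact h4
  · intro s _
    exact Nat.mul_div_cancel_left s hp

lemma JG_add (p μ : ℕ) (hp : 0 < p) (h3 : ¬ 3 ∣ p) :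
    JGs p (p * μ) + p * Jps μ = Jps (p * μ) := by
  have hsplit := Finset.sum_filter_add_sum_filter_not
    ((Finset.range (p * μ)).filter
      (fun t => 0 < t ∧ 2 * t < p * μ ∧ (t + p * μ) % 3 = 0)) (fun t => p ∣ t)
    (fun t => t)
  rw [mult_partJ p μ hp h3] at hsplit
  have h2 : ∑ t ∈ ((Finset.range (p * μ)).filter
      (fun t => 0 < t ∧ 2 * t < p * μ ∧ (t + p * μ) % 3 = 0)).filter
      (fun t => ¬ p ∣ t), t = JGs p (p * μ) := by
    rw [JGs]
    congr 1
    rw [Finset.filter_filter]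
    exact Finset.filter_congr fun t _ => by tauto
  rw [h2] at hsplit
  rw [add_comm]
  exact hsplit

/-! ### The middle term -/

lemma mid_add {p m : ℕ} (hp : p.Prime) (hm : 1 ≤ m) :
    (∑ a ∈ (Finset.range (p ^ m)).filter (fun a => 0 < a ∧ 3 * a < p ^ m),
        Ik 1 (Nat.gcd a (p ^ m)) (p ^ m - 3 * a)) + p * As (p ^ (m - 1)) = As (p ^ m) := by
  have hp0 : 0 < p := hp.pos
  have hNM : p ^ m = p * p ^ (m - 1) := by
    conv_lhs => rw [show m = (m - 1) + 1 by omega]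
    exact pow_succ' p (m - 1)
  set N := p ^ m with hN
  set M := p ^ (m - 1) with hM
  set S := (Finset.range N).filter (fun a => 0 < a ∧ 3 * a < N) with hS
  set SM := (Finset.range M).filter (fun c => 0 < c ∧ 3 * c < M) with hSM
  have hbij : ∀ f : ℕ → ℕ,
      ∑ a ∈ S.filter (fun a => p ∣ a), f (N - 3 * a)
        = ∑ c ∈ SM, f (p * (M - 3 * c)) := by
    intro f
    refine sum_bijk (fun c => p * c) (fun a => a / p) ?_ ?_ ?_ ?_
    · intro c hc
      simp only [hSM, hS, Finset.mem_filter, Finset.mem_range] at hc ⊢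
      obtain ⟨hcr, hc0, hc3⟩ := hc
      have h1 : p * c < p * M := mlt hp0 hcr
      have h3 : 3 * (p * c) < N := by
        rw [hNM, show 3 * (p * c) = p * (3 * c) by ring]
        exact mlt hp0 hc3
      exact ⟨⟨by omega, Nat.mul_pos hp0 hc0, h3⟩, dvd_mul_right p c⟩
    · intro a ha
      simp only [hSM, hS, Finset.mem_filter, Finset.mem_range] at ha ⊢
      obtain ⟨⟨har, ha0, ha3⟩, c, rfl⟩ := ha
      have hdiv : p * c / p = c := Nat.mul_div_cancel_left c hp0
      have h3 : 3 * c < M := by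
        refine Nat.lt_of_mul_lt_mul_left (a := p) ?_
        calc p * (3 * c) = 3 * (p * c) := by ring
          _ < p * M := by rw [← hNM]; exact ha3
      refine ⟨⟨?_, ?_, ?_⟩, ?_⟩ <;> rw [hdiv]
      · omega
      · rcases Nat.eq_zero_or_pos c with rfl | h
        · omega
        · exact h
      · exact h3
    · intro c _
      exact Nat.mul_div_cancel_left c hp0
    · intro c hc
      congr 1
      rw [hNM, show (3 : ℕ) * (p * c) = p * (3 * c) by ring, Nat.mul_sub]
  have hsplitIk := Finset.sum_filter_add_sum_filter_not S (fun a => p ∣ a)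
    (fun a => Ik 1 (Nat.gcd a N) (N - 3 * a))
  have hsplitF := Finset.sum_filter_add_sum_filter_not S (fun a => p ∣ a)
    (fun a => Fs (N - 3 * a))
  have h1 : ∑ a ∈ S.filter (fun a => ¬ p ∣ a), Ik 1 (Nat.gcd a N) (N - 3 * a)
      = ∑ a ∈ S.filter (fun a => ¬ p ∣ a), Fs (N - 3 * a) := by
    refine Finset.sum_congr rfl fun a ha => ?_
    simp only [Finset.mem_filter] at ha
    have hco : Nat.Coprime a p := (hp.coprime_iff_not_dvd.mpr ha.2).symm
    have hg : Nat.gcd a N = 1 := by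
      rw [hN]
      exact Nat.Coprime.pow_right m hco
    rw [hg, Ik_one_s13]
  have h2 : ∑ a ∈ S.filter (fun a => p ∣ a), Ik 1 (Nat.gcd a N) (N - 3 * a)
      = ∑ a ∈ S.filter (fun a => p ∣ a), Gs p (N - 3 * a) := by
    refine Finset.sum_congr rfl fun a ha => ?_
    simp only [Finset.mem_filter] at ha
    rw [hN]
    exact Ik_gcd _ hp hm ha.2
  have h3 : ∑ a ∈ S.filter (fun a => p ∣ a), Gs p (N - 3 * a)
      = ∑ c ∈ SM, Gs p (p * (M - 3 * c)) := hbij (fun x => Gs p x)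
  have h4 : ∑ a ∈ S.filter (fun a => p ∣ a), Fs (N - 3 * a)
      = ∑ c ∈ SM, Fs (p * (M - 3 * c)) := hbij (fun x => Fs x)
  have h5 : ∑ c ∈ SM, Fs (p * (M - 3 * c))
      = (∑ c ∈ SM, Gs p (p * (M - 3 * c))) + p * As M := by
    rw [As, ← hSM, Finset.mul_sum, ← Finset.sum_add_distrib]
    refine Finset.sum_congr rfl fun c hc => ?_
    exact (Gp_add p (M - 3 * c) hp0).symm
  have hAsN : As N = ∑ a ∈ S, Fs (N - 3 * a) := by rw [As, hS]
  rw [← hsplitIk, h1, h2, h3, hAsN, ← hsplitF, h4, h5]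
  ring

lemma pow2mod3 (j : ℕ) : 2 ^ j % 3 = if j % 2 = 0 then 1 else 2 := by
  induction j with
  | zero => simp
  | succ j ih =>
    rw [pow_succ, Nat.mul_mod, ih]
    split_ifs <;> omega

theorem stmt_13 (p m : ℕ) (hp : p.Prime) (hp3 : 3 < p) (hm : 1 ≤ m) :
    (lNum (p ^ m) : ℚ) =
      ((p : ℚ) ^ (3 * m) - (p : ℚ) ^ (3 * m - 2)) / 36 +
        (if p % 3 = 1 then ((p : ℚ) - 1) / 9
         else if Odd m then ((p : ℚ) + 1) / 9 else -(((p : ℚ) + 1) / 9)) := by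
  have hp0 : 0 < p := hp.pos
  have h2p : ¬ 2 ∣ p := fun h => by
    have := (Nat.prime_dvd_prime_iff_eq Nat.prime_two hp).mp h
    omega
  have h3p : ¬ 3 ∣ p := fun h => by
    have := (Nat.prime_dvd_prime_iff_eq Nat.prime_three hp).mp h
    omega
  have hp2 : p % 2 = 1 := by omega
  have hp3' : p % 3 = 1 ∨ p % 3 = 2 := by omega
  have hNM : p ^ m = p * p ^ (m - 1) := by
    conv_lhs => rw [show m = (m - 1) + 1 by omega]
    exact pow_succ' p (m - 1)
  have hmid0 := mid_add hp hm
  set N := p ^ m with hN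
  set M := p ^ (m - 1) with hM
  have hN2 : N % 2 = 1 := by rw [hN, Nat.pow_mod, hp2, one_pow]; rfl
  have hM2 : M % 2 = 1 := by rw [hM, Nat.pow_mod, hp2, one_pow]; rfl
  have hN3 : N % 3 = (p % 3) ^ m % 3 := by rw [hN, Nat.pow_mod]
  have hM3 : M % 3 = (p % 3) ^ (m - 1) % 3 := by rw [hM, Nat.pow_mod]
  have hIk : Ik 1 N N + p * Fs M = Fs N := by
    rw [hN, Ik_eq_Gs _ hp hm, ← hN, hNM]
    exact Gp_add p M hp0
  have hJk : Jk 1 N N + p * Jps M = Jps N := by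
    rw [hN, Jk_eq_JGs _ hp hm, ← hN, hNM]
    exact JG_add p M hp0 h3p
  have qIk := congrArg (fun x : ℕ => (x : ℚ)) hIk
  push_cast at qIk
  have qmid := congrArg (fun x : ℕ => (x : ℚ)) hmid0
  push_cast at qmid
  have qJk := congrArg (fun x : ℕ => (x : ℚ)) hJk
  push_cast at qJk
  have qlN : (lNum N : ℚ) = (Ik 1 N N : ℚ) +
      2 * (∑ a ∈ (Finset.range N).filter (fun a => 0 < a ∧ 3 * a < N),
        (Ik 1 (Nat.gcd a N) (N - 3 * a) : ℚ)) + (Jk 1 N N : ℚ) := by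
    simp only [lNum]
    push_cast
    ring
  have hMcast : (M : ℚ) = (p : ℚ) ^ (m - 1) := by rw [hM]; push_cast; rfl
  have hqpow1 : (p : ℚ) ^ (3 * m) = (p : ℚ) ^ 3 * ((p : ℚ) ^ (m - 1)) ^ 3 := by
    rw [← pow_mul, ← pow_add]
    congr 1
    omega
  have hqpow2 : (p : ℚ) ^ (3 * m - 2) = (p : ℚ) * ((p : ℚ) ^ (m - 1)) ^ 3 := by
    rw [← pow_mul, ← pow_succ']
    congr 1
    omega
  have qNM : (N : ℚ) = (p : ℚ) * (M : ℚ) := by exact_mod_cast congrArg (fun x : ℕ => (x : ℚ)) hNM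
  rw [qlN, hqpow1, hqpow2, ← hMcast]
  rcases hp3' with hc1 | hc2
  · -- p ≡ 1 (mod 3)
    have hN3' : N % 3 = 1 := by rw [hN3, hc1, one_pow]; rfl
    have hM3' : M % 3 = 1 := by rw [hM3, hc1, one_pow]; rfl
    obtain ⟨kN, hkN⟩ : ∃ k, N = 6 * k + 1 := ⟨N / 6, by omega⟩
    obtain ⟨kM, hkM⟩ : ∃ k, M = 6 * k + 1 := ⟨M / 6, by omega⟩
    have vFN : (Fs N : ℚ) = (9 * (kN : ℚ) ^ 2 + 3 * kN) / 2 := by rw [hkN]; exact vF1 kN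
    have vAN : (As N : ℚ) = (6 * (kN : ℚ) ^ 3 - 3 * kN ^ 2 - kN) / 2 := by
      rw [hkN]; exact vA1 kN
    have vJN : (Jps N : ℚ) = (3 * (kN : ℚ) ^ 2 + kN) / 2 := by rw [hkN]; exact vJ1 kN
    have vFM : (Fs M : ℚ) = (9 * (kM : ℚ) ^ 2 + 3 * kM) / 2 := by rw [hkM]; exact vF1 kM
    have vAM : (As M : ℚ) = (6 * (kM : ℚ) ^ 3 - 3 * kM ^ 2 - kM) / 2 := by
      rw [hkM]; exact vA1 kM
    have vJM : (Jps M : ℚ) = (3 * (kM : ℚ) ^ 2 + kM) / 2 := by rw [hkM]; exact vJ1 kM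
    have qN : (N : ℚ) = 6 * (kN : ℚ) + 1 := by exact_mod_cast congrArg (fun x : ℕ => (x : ℚ)) hkN
    have qM : (M : ℚ) = 6 * (kM : ℚ) + 1 := by exact_mod_cast congrArg (fun x : ℕ => (x : ℚ)) hkM
    have hrel : 6 * (kN : ℚ) + 1 = (p : ℚ) * (6 * (kM : ℚ) + 1) := by
      rw [← qN, ← qM]; exact qNM
    rw [if_pos hc1, qM]
    linear_combination qIk + 2 * qmid + qJk + vFN + 2 * vAN + vJN
      - (p : ℚ) * (vFM + 2 * vAM + vJM)
      + (((6 * (kN : ℚ) + 1) ^ 2 + (6 * (kN : ℚ) + 1) * ((p : ℚ) * (6 * (kM : ℚ) + 1))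
          + ((p : ℚ) * (6 * (kM : ℚ) + 1)) ^ 2 + 3) / 36) * hrel
  · rw [if_neg (by omega : ¬ p % 3 = 1)]
    rcases Nat.even_or_odd m with hme | hmo
    · -- m even
      have hmodd : ¬ Odd m := Nat.not_odd_iff_even.mpr hme
      have hm2 : m % 2 = 0 := Nat.even_iff.mp hme
      have hN3' : N % 3 = 1 := by rw [hN3, hc2, pow2mod3, if_pos hm2]
      have hM3' : M % 3 = 2 := by
        rw [hM3, hc2, pow2mod3, if_neg (by omega : ¬ (m - 1) % 2 = 0)]
      obtain ⟨kN, hkN⟩ : ∃ k, N = 6 * k + 1 := ⟨N / 6, by omega⟩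
      obtain ⟨kM, hkM⟩ : ∃ k, M = 6 * k + 5 := ⟨M / 6, by omega⟩
      have vFN : (Fs N : ℚ) = (9 * (kN : ℚ) ^ 2 + 3 * kN) / 2 := by rw [hkN]; exact vF1 kN
      have vAN : (As N : ℚ) = (6 * (kN : ℚ) ^ 3 - 3 * kN ^ 2 - kN) / 2 := by
        rw [hkN]; exact vA1 kN
      have vJN : (Jps N : ℚ) = (3 * (kN : ℚ) ^ 2 + kN) / 2 := by rw [hkN]; exact vJ1 kN
      have vFM : (Fs M : ℚ) = (9 * (kM : ℚ) ^ 2 + 15 * kM + 6) / 2 := by rw [hkM]; exact vF5 kM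
      have vAM : (As M : ℚ) = (6 * (kM : ℚ) ^ 3 + 9 * kM ^ 2 + 3 * kM) / 2 := by
        rw [hkM]; exact vA5 kM
      have vJM : (Jps M : ℚ) = (3 * (kM : ℚ) ^ 2 + 5 * kM + 2) / 2 := by rw [hkM]; exact vJ5 kM
      have qN : (N : ℚ) = 6 * (kN : ℚ) + 1 := by
        exact_mod_cast congrArg (fun x : ℕ => (x : ℚ)) hkN
      have qM : (M : ℚ) = 6 * (kM : ℚ) + 5 := by
        exact_mod_cast congrArg (fun x : ℕ => (x : ℚ)) hkM
      have hrel : 6 * (kN : ℚ) + 1 = (p : ℚ) * (6 * (kM : ℚ) + 5) := by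
        rw [← qN, ← qM]; exact qNM
      rw [if_neg hmodd, qM]
      linear_combination qIk + 2 * qmid + qJk + vFN + 2 * vAN + vJN
        - (p : ℚ) * (vFM + 2 * vAM + vJM)
        + (((6 * (kN : ℚ) + 1) ^ 2 + (6 * (kN : ℚ) + 1) * ((p : ℚ) * (6 * (kM : ℚ) + 5))
            + ((p : ℚ) * (6 * (kM : ℚ) + 5)) ^ 2 + 3) / 36) * hrel
    · -- m odd
      have hm2 : m % 2 = 1 := Nat.odd_iff.mp hmo
      have hN3' : N % 3 = 2 := by rw [hN3, hc2, pow2mod3, if_neg (by omega : ¬ m % 2 = 0)]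
      have hM3' : M % 3 = 1 := by rw [hM3, hc2, pow2mod3, if_pos (by omega : (m - 1) % 2 = 0)]
      obtain ⟨kN, hkN⟩ : ∃ k, N = 6 * k + 5 := ⟨N / 6, by omega⟩
      obtain ⟨kM, hkM⟩ : ∃ k, M = 6 * k + 1 := ⟨M / 6, by omega⟩
      have vFN : (Fs N : ℚ) = (9 * (kN : ℚ) ^ 2 + 15 * kN + 6) / 2 := by rw [hkN]; exact vF5 kN
      have vAN : (As N : ℚ) = (6 * (kN : ℚ) ^ 3 + 9 * kN ^ 2 + 3 * kN) / 2 := by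
        rw [hkN]; exact vA5 kN
      have vJN : (Jps N : ℚ) = (3 * (kN : ℚ) ^ 2 + 5 * kN + 2) / 2 := by rw [hkN]; exact vJ5 kN
      have vFM : (Fs M : ℚ) = (9 * (kM : ℚ) ^ 2 + 3 * kM) / 2 := by rw [hkM]; exact vF1 kM
      have vAM : (As M : ℚ) = (6 * (kM : ℚ) ^ 3 - 3 * kM ^ 2 - kM) / 2 := by
        rw [hkM]; exact vA1 kM
      have vJM : (Jps M : ℚ) = (3 * (kM : ℚ) ^ 2 + kM) / 2 := by rw [hkM]; exact vJ1 kM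
      have qN : (N : ℚ) = 6 * (kN : ℚ) + 5 := by
        exact_mod_cast congrArg (fun x : ℕ => (x : ℚ)) hkN
      have qM : (M : ℚ) = 6 * (kM : ℚ) + 1 := by
        exact_mod_cast congrArg (fun x : ℕ => (x : ℚ)) hkM
      have hrel : 6 * (kN : ℚ) + 5 = (p : ℚ) * (6 * (kM : ℚ) + 1) := by
        rw [← qN, ← qM]; exact qNM
      rw [if_pos hmo, qM]
      linear_combination qIk + 2 * qmid + qJk + vFN + 2 * vAN + vJN
        - (p : ℚ) * (vFM + 2 * vAM + vJM)
        + (((6 * (kN : ℚ) + 5) ^ 2 + (6 * (kN : ℚ) + 5) * ((p : ℚ) * (6 * (kM : ℚ) + 1))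
            + ((p : ℚ) * (6 * (kM : ℚ) + 1)) ^ 2 + 3) / 36) * hrel
end
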